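/- arXiv:2406.01849 — 5 statements merged into one kernel-verified Lean document; each statement's English description precedes it below -/
import Mathlib

section
/- Let X₁ and X₂ be real-valued random variables. Suppose that for all real a < b, ℙ(X₁ ∈ [a,b]) > 0 if and only if ℙ(X₂ ∈ [a,b]) > 0, and that whenever these probabilities are positive, E[X₁ | X₁ ∈ [a,b]] = E[X₂ | X₂ ∈ [a,b]]. Then X₁ and X₂ have the same probability distribution. -/
open MeasureTheory Set Filter Topology
open scoped ENNReal

/-- Conditional expectation of `Z` given the event `U`: `E[Z·1_U] / ℙ(U)`. -/
noncomputable def cexp {Ω : Type*} [MeasurableSpace Ω] (P : Measure Ω) (U : Set Ω)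
    (Z : Ω → ℝ) : ℝ :=
  (∫ ω in U, Z ω ∂P) / (P U).toReal

namespace CexpAux

lemma seqR_mono (b c : ℝ) (h : b < c) :
    Monotone (fun n : ℕ => Icc (b + (c - b)/(n+2)) c) := by
  intro n m hnm
  apply Icc_subset_Icc_left
  have hnm' : (n:ℝ) ≤ (m:ℝ) := by exact_mod_cast hnm
  have : (c - b)/((m:ℝ)+2) ≤ (c - b)/((n:ℝ)+2) := by
    rw [div_le_div_iff₀ (by positivity) (by positivity)]
    nlinarith
  linarith

lemma seqR_lt (b c : ℝ) (h : b < c) (n : ℕ) : b + (c - b)/(n+2) < c := by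
  have hn0 : (0:ℝ) ≤ (n:ℝ) := Nat.cast_nonneg n
  have : (c - b)/((n:ℝ)+2) < c - b := div_lt_self (by linarith) (by linarith)
  linarith

lemma seqR_union (b c : ℝ) (h : b < c) :
    (⋃ n : ℕ, Icc (b + (c - b)/(n+2)) c) = Ioc b c := by
  ext x
  simp only [mem_iUnion, mem_Icc, mem_Ioc]
  constructor
  · rintro ⟨n, h1, h2⟩
    have : (0:ℝ) < (c - b)/((n:ℝ)+2) := div_pos (by linarith) (by positivity)
    exact ⟨by linarith, h2⟩
  · rintro ⟨h1, h2⟩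
    obtain ⟨n, hn⟩ := exists_nat_ge ((c - b)/(x - b))
    refine ⟨n, ?_, h2⟩
    have hxb : 0 < x - b := by linarith
    have h2n : (0:ℝ) < (n:ℝ) + 2 := by positivity
    have : (c - b) ≤ (x - b) * ((n:ℝ)+2) := by
      rw [div_le_iff₀ hxb] at hn
      nlinarith [hxb.le]
    have : (c - b)/((n:ℝ)+2) ≤ x - b := by
      rw [div_le_iff₀ h2n]; linarith
    linarith

lemma seqL_mono (a b : ℝ) (h : a < b) :
    Monotone (fun n : ℕ => Icc a (b - (b - a)/(n+2))) := by
  intro n m hnm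
  apply Icc_subset_Icc_right
  have hnm' : (n:ℝ) ≤ (m:ℝ) := by exact_mod_cast hnm
  have : (b - a)/((m:ℝ)+2) ≤ (b - a)/((n:ℝ)+2) := by
    rw [div_le_div_iff₀ (by positivity) (by positivity)]
    nlinarith
  linarith

lemma seqL_gt (a b : ℝ) (h : a < b) (n : ℕ) : a < b - (b - a)/(n+2) := by
  have hn0 : (0:ℝ) ≤ (n:ℝ) := Nat.cast_nonneg n
  have : (b - a)/((n:ℝ)+2) < b - a := div_lt_self (by linarith) (by linarith)
  linarith

lemma seqL_union (a b : ℝ) (h : a < b) :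
    (⋃ n : ℕ, Icc a (b - (b - a)/(n+2))) = Ico a b := by
  ext x
  simp only [mem_iUnion, mem_Icc, mem_Ico]
  constructor
  · rintro ⟨n, h1, h2⟩
    have : (0:ℝ) < (b - a)/((n:ℝ)+2) := div_pos (by linarith) (by positivity)
    exact ⟨h1, by linarith⟩
  · rintro ⟨h1, h2⟩
    obtain ⟨n, hn⟩ := exists_nat_ge ((b - a)/(b - x))
    refine ⟨n, h1, ?_⟩
    have hxb : 0 < b - x := by linarith
    have h2n : (0:ℝ) < (n:ℝ) + 2 := by positivity
    have : (b - a) ≤ (b - x) * ((n:ℝ)+2) := by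
      rw [div_le_iff₀ hxb] at hn
      nlinarith [hxb.le]
    have : (b - a)/((n:ℝ)+2) ≤ b - x := by
      rw [div_le_iff₀ h2n]; linarith
    linarith

variable {μ : Measure ℝ}

lemma intIcc (μ : Measure ℝ) [IsFiniteMeasure μ] (a b : ℝ) :
    IntegrableOn (fun x : ℝ => x) (Icc a b) μ :=
  continuous_id.integrableOn_Icc

lemma intIoc (μ : Measure ℝ) [IsFiniteMeasure μ] (a b : ℝ) :
    IntegrableOn (fun x : ℝ => x) (Ioc a b) μ :=
  continuous_id.integrableOn_Ioc

lemma intIco (μ : Measure ℝ) [IsFiniteMeasure μ] (a b : ℝ) :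
    IntegrableOn (fun x : ℝ => x) (Ico a b) μ :=
  (intIcc μ a b).mono_set Ico_subset_Icc_self

lemma mean_le_Icc (μ : Measure ℝ) [IsFiniteMeasure μ] (a b : ℝ) :
    ∫ x in Icc a b, x ∂μ ≤ b * (μ (Icc a b)).toReal := by
  have := setIntegral_mono_on (μ := μ) (s := Icc a b) (f := fun x : ℝ => x)
    (g := fun _ : ℝ => b) (intIcc μ a b) integrableOn_const
    measurableSet_Icc (fun x hx => hx.2)
  simpa [mul_comm, Measure.real] using this

lemma mean_ge_Icc (μ : Measure ℝ) [IsFiniteMeasure μ] (a b : ℝ) :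
    a * (μ (Icc a b)).toReal ≤ ∫ x in Icc a b, x ∂μ := by
  have := setIntegral_mono_on (μ := μ) (s := Icc a b) (f := fun _ : ℝ => a)
    (g := fun x : ℝ => x) integrableOn_const (intIcc μ a b)
    measurableSet_Icc (fun x hx => hx.1)
  simpa [mul_comm, Measure.real] using this

lemma exists_pos_in_Ioc (μ : Measure ℝ) (b c : ℝ) (h : b < c) (hpos : 0 < μ (Ioc b c)) :
    ∃ n : ℕ, 0 < μ (Icc (b + (c - b)/(n+2)) c) := by
  by_contra hcon
  push_neg at hcon
  have : μ (Ioc b c) = 0 := by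
    rw [← seqR_union b c h]
    exact measure_iUnion_null (fun n => le_antisymm (hcon n) zero_le)
  exact absurd this hpos.ne'

lemma exists_pos_in_Ico (μ : Measure ℝ) (a b : ℝ) (h : a < b) (hpos : 0 < μ (Ico a b)) :
    ∃ n : ℕ, 0 < μ (Icc a (b - (b - a)/(n+2))) := by
  by_contra hcon
  push_neg at hcon
  have : μ (Ico a b) = 0 := by
    rw [← seqL_union a b h]
    exact measure_iUnion_null (fun n => le_antisymm (hcon n) zero_le)
  exact absurd this hpos.ne'

lemma mean_gt_Ioc (μ : Measure ℝ) [IsFiniteMeasure μ] (b c : ℝ) (h : b < c)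
    (hpos : 0 < μ (Ioc b c)) :
    b * (μ (Ioc b c)).toReal < ∫ x in Ioc b c, x ∂μ := by
  obtain ⟨n, hn⟩ := exists_pos_in_Ioc μ b c h hpos
  set b' := b + (c - b)/(n+2) with hb'
  have hbb' : b < b' := by
    have : (0:ℝ) < (c - b)/((n:ℝ)+2) := div_pos (by linarith) (by positivity)
    simp only [hb']; linarith
  have hb'c : b' ≤ c := (seqR_lt b c h n).le
  -- ∫ (x - b) over Ioc b c > 0
  have hsub : Icc b' c ⊆ Ioc b c := fun x hx => ⟨lt_of_lt_of_le hbb' hx.1, hx.2⟩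
  have hint : IntegrableOn (fun x : ℝ => x - b) (Ioc b c) μ :=
    (intIoc μ b c).sub integrableOn_const
  have h1 : ∫ x in Icc b' c, (x - b) ∂μ ≤ ∫ x in Ioc b c, (x - b) ∂μ := by
    apply setIntegral_mono_set hint
    · filter_upwards [ae_restrict_mem measurableSet_Ioc] with x hx
      simp only [Pi.zero_apply]; linarith [hx.1]
    · exact HasSubset.Subset.eventuallyLE hsub
  have h2 : (b' - b) * (μ (Icc b' c)).toReal ≤ ∫ x in Icc b' c, (x - b) ∂μ := by
    have := setIntegral_mono_on (μ := μ) (s := Icc b' c) (f := fun _ : ℝ => b' - b)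
      (g := fun x : ℝ => x - b)
      integrableOn_const
      ((intIcc μ b' c).sub integrableOn_const)
      measurableSet_Icc (fun x hx => show b' - b ≤ x - b by linarith [hx.1])
    simpa [mul_comm, Measure.real] using this
  have h3 : 0 < (b' - b) * (μ (Icc b' c)).toReal := by
    apply mul_pos (by linarith)
    exact ENNReal.toReal_pos hn.ne' (measure_ne_top _ _)
  have h4 : ∫ x in Ioc b c, (x - b) ∂μ
      = (∫ x in Ioc b c, x ∂μ) - b * (μ (Ioc b c)).toReal := by
    rw [integral_sub (intIoc μ b c) integrableOn_const]
    simp [mul_comm, Measure.real]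
  linarith [h4 ▸ (h3.trans_le (h2.trans h1))]

lemma mean_lt_Ico (μ : Measure ℝ) [IsFiniteMeasure μ] (a b : ℝ) (h : a < b)
    (hpos : 0 < μ (Ico a b)) :
    ∫ x in Ico a b, x ∂μ < b * (μ (Ico a b)).toReal := by
  obtain ⟨n, hn⟩ := exists_pos_in_Ico μ a b h hpos
  set b' := b - (b - a)/(n+2) with hb'
  have hbb' : b' < b := by
    have : (0:ℝ) < (b - a)/((n:ℝ)+2) := div_pos (by linarith) (by positivity)
    simp only [hb']; linarith
  have hsub : Icc a b' ⊆ Ico a b := fun x hx => ⟨hx.1, lt_of_le_of_lt hx.2 hbb'⟩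
  have hint : IntegrableOn (fun x : ℝ => b - x) (Ico a b) μ :=
    (integrableOn_const (μ := μ) (s := Ico a b) (C := b)).sub (intIco μ a b)
  have h1 : ∫ x in Icc a b', (b - x) ∂μ ≤ ∫ x in Ico a b, (b - x) ∂μ := by
    apply setIntegral_mono_set hint
    · filter_upwards [ae_restrict_mem measurableSet_Ico] with x hx
      simp only [Pi.zero_apply]; linarith [hx.2]
    · exact HasSubset.Subset.eventuallyLE hsub
  have h2 : (b - b') * (μ (Icc a b')).toReal ≤ ∫ x in Icc a b', (b - x) ∂μ := by
    have := setIntegral_mono_on (μ := μ) (s := Icc a b') (f := fun _ : ℝ => b - b')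
      (g := fun x : ℝ => b - x)
      integrableOn_const
      ((integrableOn_const (μ := μ) (s := Icc a b') (C := b)).sub (intIcc μ a b'))
      measurableSet_Icc (fun x hx => show b - b' ≤ b - x by linarith [hx.2])
    simpa [mul_comm, Measure.real] using this
  have h3 : 0 < (b - b') * (μ (Icc a b')).toReal := by
    apply mul_pos (by linarith)
    exact ENNReal.toReal_pos hn.ne' (measure_ne_top _ _)
  have h4 : ∫ x in Ico a b, (b - x) ∂μ
      = b * (μ (Ico a b)).toReal - ∫ x in Ico a b, x ∂μ := by
    rw [integral_sub (integrableOn_const (μ := μ) (s := Ico a b) (C := b)) (intIco μ a b)]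
    simp [mul_comm, Measure.real]
  linarith [h4 ▸ (h3.trans_le (h2.trans h1))]


section Limits

variable (μ : Measure ℝ) [IsProbabilityMeasure μ]

lemma tendstoP_Ioc (b c : ℝ) (h : b < c) :
    Tendsto (fun n : ℕ => (μ (Icc (b + (c - b)/(n+2)) c)).toReal) atTop
      (𝓝 (μ (Ioc b c)).toReal) := by
  have h1 : Tendsto (fun n : ℕ => μ (Icc (b + (c - b)/(n+2)) c)) atTop
      (𝓝 (μ (⋃ n : ℕ, Icc (b + (c - b)/(n+2)) c))) :=
    tendsto_measure_iUnion_atTop (seqR_mono b c h)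
  rw [seqR_union b c h] at h1
  exact (ENNReal.tendsto_toReal (measure_ne_top μ _)).comp h1

lemma tendstoM_Ioc (b c : ℝ) (h : b < c) :
    Tendsto (fun n : ℕ => ∫ x in Icc (b + (c - b)/(n+2)) c, x ∂μ) atTop
      (𝓝 (∫ x in Ioc b c, x ∂μ)) := by
  have h1 := tendsto_setIntegral_of_monotone (μ := μ) (f := fun x : ℝ => x)
    (fun n : ℕ => measurableSet_Icc) (seqR_mono b c h)
    (by rw [seqR_union b c h]; exact intIoc μ b c)
  rwa [seqR_union b c h] at h1

lemma tendstoP_Ico (a b : ℝ) (h : a < b) :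
    Tendsto (fun n : ℕ => (μ (Icc a (b - (b - a)/(n+2)))).toReal) atTop
      (𝓝 (μ (Ico a b)).toReal) := by
  have h1 : Tendsto (fun n : ℕ => μ (Icc a (b - (b - a)/(n+2)))) atTop
      (𝓝 (μ (⋃ n : ℕ, Icc a (b - (b - a)/(n+2))))) :=
    tendsto_measure_iUnion_atTop (seqL_mono a b h)
  rw [seqL_union a b h] at h1
  exact (ENNReal.tendsto_toReal (measure_ne_top μ _)).comp h1

lemma tendstoM_Ico (a b : ℝ) (h : a < b) :
    Tendsto (fun n : ℕ => ∫ x in Icc a (b - (b - a)/(n+2)), x ∂μ) atTop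
      (𝓝 (∫ x in Ico a b, x ∂μ)) := by
  have h1 := tendsto_setIntegral_of_monotone (μ := μ) (f := fun x : ℝ => x)
    (fun n : ℕ => measurableSet_Icc) (seqL_mono a b h)
    (by rw [seqL_union a b h]; exact intIco μ a b)
  rwa [seqL_union a b h] at h1

end Limits

section Main

variable (μ₁ μ₂ : Measure ℝ) [IsProbabilityMeasure μ₁] [IsProbabilityMeasure μ₂]

lemma pos_Ioc (hP : ∀ a b : ℝ, a < b → (0 < μ₁ (Icc a b) ↔ 0 < μ₂ (Icc a b)))
    (b c : ℝ) (h : b < c) (hpos : 0 < μ₁ (Ioc b c)) : 0 < μ₂ (Ioc b c) := by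
  obtain ⟨n, hn⟩ := exists_pos_in_Ioc μ₁ b c h hpos
  have hn2 := (hP _ _ (seqR_lt b c h n)).1 hn
  calc (0:ℝ≥0∞) < μ₂ (Icc (b + (c - b)/(n+2)) c) := hn2
    _ ≤ μ₂ (Ioc b c) := measure_mono (fun x hx =>
        ⟨lt_of_lt_of_le (by
          have : (0:ℝ) < (c - b)/((n:ℝ)+2) := div_pos (by linarith) (by positivity)
          linarith) hx.1, hx.2⟩)

lemma pos_Ico (hP : ∀ a b : ℝ, a < b → (0 < μ₁ (Icc a b) ↔ 0 < μ₂ (Icc a b)))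
    (a b : ℝ) (h : a < b) (hpos : 0 < μ₁ (Ico a b)) : 0 < μ₂ (Ico a b) := by
  obtain ⟨n, hn⟩ := exists_pos_in_Ico μ₁ a b h hpos
  have hn2 := (hP _ _ (seqL_gt a b h n)).1 hn
  calc (0:ℝ≥0∞) < μ₂ (Icc a (b - (b - a)/(n+2))) := hn2
    _ ≤ μ₂ (Ico a b) := measure_mono (fun x hx =>
        ⟨hx.1, lt_of_le_of_lt hx.2 (by
          have : (0:ℝ) < (b - a)/((n:ℝ)+2) := div_pos (by linarith) (by positivity)
          linarith)⟩)

lemma R_Ioc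
    (hR : ∀ a b : ℝ, a < b → (∫ x in Icc a b, x ∂μ₁) * (μ₂ (Icc a b)).toReal
        = (∫ x in Icc a b, x ∂μ₂) * (μ₁ (Icc a b)).toReal)
    (b c : ℝ) (h : b < c) :
    (∫ x in Ioc b c, x ∂μ₁) * (μ₂ (Ioc b c)).toReal
      = (∫ x in Ioc b c, x ∂μ₂) * (μ₁ (Ioc b c)).toReal := by
  have h1 := (tendstoM_Ioc μ₁ b c h).mul (tendstoP_Ioc μ₂ b c h)
  have h2 := (tendstoM_Ioc μ₂ b c h).mul (tendstoP_Ioc μ₁ b c h)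
  refine tendsto_nhds_unique (h1.congr (fun n => ?_)) h2
  exact hR _ _ (seqR_lt b c h n)

lemma R_Ico
    (hR : ∀ a b : ℝ, a < b → (∫ x in Icc a b, x ∂μ₁) * (μ₂ (Icc a b)).toReal
        = (∫ x in Icc a b, x ∂μ₂) * (μ₁ (Icc a b)).toReal)
    (a b : ℝ) (h : a < b) :
    (∫ x in Ico a b, x ∂μ₁) * (μ₂ (Ico a b)).toReal
      = (∫ x in Ico a b, x ∂μ₂) * (μ₁ (Ico a b)).toReal := by
  have h1 := (tendstoM_Ico μ₁ a b h).mul (tendstoP_Ico μ₂ a b h)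
  have h2 := (tendstoM_Ico μ₂ a b h).mul (tendstoP_Ico μ₁ a b h)
  refine tendsto_nhds_unique (h1.congr (fun n => ?_)) h2
  exact hR _ _ (seqL_gt a b h n)


lemma extR (hP : ∀ a b : ℝ, a < b → (0 < μ₁ (Icc a b) ↔ 0 < μ₂ (Icc a b)))
    (hR : ∀ a b : ℝ, a < b → (∫ x in Icc a b, x ∂μ₁) * (μ₂ (Icc a b)).toReal
        = (∫ x in Icc a b, x ∂μ₂) * (μ₁ (Icc a b)).toReal)
    (a b c : ℝ) (hab : a < b) (hbc : b < c) (h1 : 0 < μ₁ (Icc a b)) :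
    (μ₁ (Icc a b)).toReal * (μ₂ (Icc a c)).toReal
      = (μ₂ (Icc a b)).toReal * (μ₁ (Icc a c)).toReal := by
  have h2 : 0 < μ₂ (Icc a b) := (hP a b hab).1 h1
  have hdisj : Disjoint (Icc a b) (Ioc b c) :=
    disjoint_left.2 fun x hx hx' => absurd hx.2 (not_le.2 hx'.1)
  have hun : Icc a b ∪ Ioc b c = Icc a c := Icc_union_Ioc_eq_Icc hab.le hbc.le
  have hPadd1 : (μ₁ (Icc a c)).toReal = (μ₁ (Icc a b)).toReal + (μ₁ (Ioc b c)).toReal := by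
    rw [← hun, measure_union hdisj measurableSet_Ioc,
      ENNReal.toReal_add (measure_ne_top _ _) (measure_ne_top _ _)]
  have hPadd2 : (μ₂ (Icc a c)).toReal = (μ₂ (Icc a b)).toReal + (μ₂ (Ioc b c)).toReal := by
    rw [← hun, measure_union hdisj measurableSet_Ioc,
      ENNReal.toReal_add (measure_ne_top _ _) (measure_ne_top _ _)]
  have hMadd1 : ∫ x in Icc a c, x ∂μ₁ = (∫ x in Icc a b, x ∂μ₁) + ∫ x in Ioc b c, x ∂μ₁ := by
    rw [← hun, setIntegral_union hdisj measurableSet_Ioc (intIcc μ₁ a b) (intIoc μ₁ b c)]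
  have hMadd2 : ∫ x in Icc a c, x ∂μ₂ = (∫ x in Icc a b, x ∂μ₂) + ∫ x in Ioc b c, x ∂μ₂ := by
    rw [← hun, setIntegral_union hdisj measurableSet_Ioc (intIcc μ₂ a b) (intIoc μ₂ b c)]
  by_cases hz : μ₁ (Ioc b c) = 0
  · have hz2 : μ₂ (Ioc b c) = 0 := by
      by_contra hc
      have := pos_Ioc μ₂ μ₁ (fun a b h => (hP a b h).symm) b c hbc
        (lt_of_le_of_ne zero_le (Ne.symm hc))
      rw [hz] at this; exact lt_irrefl 0 this
    rw [hPadd1, hPadd2, hz, hz2]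
    simp; ring
  · have hp' : 0 < μ₁ (Ioc b c) := lt_of_le_of_ne zero_le (Ne.symm hz)
    have hq' : 0 < μ₂ (Ioc b c) := pos_Ioc μ₁ μ₂ hP b c hbc hp'
    set p := (μ₁ (Icc a b)).toReal with hp_def
    set q := (μ₂ (Icc a b)).toReal with hq_def
    set p' := (μ₁ (Ioc b c)).toReal with hp'_def
    set q' := (μ₂ (Ioc b c)).toReal with hq'_def
    set u := ∫ x in Icc a b, x ∂μ₁ with hu_def
    set v := ∫ x in Icc a b, x ∂μ₂ with hv_def
    set u' := ∫ x in Ioc b c, x ∂μ₁ with hu'_def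
    set v' := ∫ x in Ioc b c, x ∂μ₂ with hv'_def
    have hppos : 0 < p := ENNReal.toReal_pos h1.ne' (measure_ne_top _ _)
    have hqpos : 0 < q := ENNReal.toReal_pos h2.ne' (measure_ne_top _ _)
    have hp'pos : 0 < p' := ENNReal.toReal_pos hp'.ne' (measure_ne_top _ _)
    have hq'pos : 0 < q' := ENNReal.toReal_pos hq'.ne' (measure_ne_top _ _)
    have R1 : u * q = v * p := hR a b hab
    have R2 : u' * q' = v' * p' := R_Ioc μ₁ μ₂ hR b c hbc
    have R3 : (u + u') * (q + q') = (v + v') * (p + p') := by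
      have := hR a c (hab.trans hbc)
      rw [hMadd1, hMadd2, hPadd1, hPadd2] at this
      exact this
    have key : (u * p' - u' * p) * (q' * p - q * p') = 0 := by
      linear_combination (p*p') * R3 - (p*p' + p'^2) * R1 - (p*p' + p^2) * R2
    have hm1 : u ≤ b * p := mean_le_Icc μ₁ a b
    have hm2 : b * p' < u' := mean_gt_Ioc μ₁ b c hbc hp'
    have hne : u * p' - u' * p < 0 := by nlinarith
    have hzero : q' * p - q * p' = 0 := by
      rcases mul_eq_zero.1 key with h | h
      · exact absurd h hne.ne
      · exact h
    rw [hPadd1, hPadd2]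
    nlinarith [hzero]

lemma extL (hP : ∀ a b : ℝ, a < b → (0 < μ₁ (Icc a b) ↔ 0 < μ₂ (Icc a b)))
    (hR : ∀ a b : ℝ, a < b → (∫ x in Icc a b, x ∂μ₁) * (μ₂ (Icc a b)).toReal
        = (∫ x in Icc a b, x ∂μ₂) * (μ₁ (Icc a b)).toReal)
    (a b c : ℝ) (hab : a < b) (hbc : b < c) (h1 : 0 < μ₁ (Icc b c)) :
    (μ₁ (Icc b c)).toReal * (μ₂ (Icc a c)).toReal
      = (μ₂ (Icc b c)).toReal * (μ₁ (Icc a c)).toReal := by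
  have h2 : 0 < μ₂ (Icc b c) := (hP b c hbc).1 h1
  have hdisj : Disjoint (Ico a b) (Icc b c) :=
    disjoint_left.2 fun x hx hx' => absurd hx'.1 (not_le.2 hx.2)
  have hun : Ico a b ∪ Icc b c = Icc a c := Ico_union_Icc_eq_Icc hab.le hbc.le
  have hPadd1 : (μ₁ (Icc a c)).toReal = (μ₁ (Ico a b)).toReal + (μ₁ (Icc b c)).toReal := by
    rw [← hun, measure_union hdisj measurableSet_Icc,
      ENNReal.toReal_add (measure_ne_top _ _) (measure_ne_top _ _)]
  have hPadd2 : (μ₂ (Icc a c)).toReal = (μ₂ (Ico a b)).toReal + (μ₂ (Icc b c)).toReal := by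
    rw [← hun, measure_union hdisj measurableSet_Icc,
      ENNReal.toReal_add (measure_ne_top _ _) (measure_ne_top _ _)]
  have hMadd1 : ∫ x in Icc a c, x ∂μ₁ = (∫ x in Ico a b, x ∂μ₁) + ∫ x in Icc b c, x ∂μ₁ := by
    rw [← hun, setIntegral_union hdisj measurableSet_Icc (intIco μ₁ a b) (intIcc μ₁ b c)]
  have hMadd2 : ∫ x in Icc a c, x ∂μ₂ = (∫ x in Ico a b, x ∂μ₂) + ∫ x in Icc b c, x ∂μ₂ := by
    rw [← hun, setIntegral_union hdisj measurableSet_Icc (intIco μ₂ a b) (intIcc μ₂ b c)]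
  by_cases hz : μ₁ (Ico a b) = 0
  · have hz2 : μ₂ (Ico a b) = 0 := by
      by_contra hc
      have := pos_Ico μ₂ μ₁ (fun a b h => (hP a b h).symm) a b hab
        (lt_of_le_of_ne zero_le (Ne.symm hc))
      rw [hz] at this; exact lt_irrefl 0 this
    rw [hPadd1, hPadd2, hz, hz2]
    simp; ring
  · have hp' : 0 < μ₁ (Ico a b) := lt_of_le_of_ne zero_le (Ne.symm hz)
    have hq' : 0 < μ₂ (Ico a b) := pos_Ico μ₁ μ₂ hP a b hab hp'
    set p := (μ₁ (Icc b c)).toReal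
    set q := (μ₂ (Icc b c)).toReal
    set p' := (μ₁ (Ico a b)).toReal
    set q' := (μ₂ (Ico a b)).toReal
    set u := ∫ x in Icc b c, x ∂μ₁
    set v := ∫ x in Icc b c, x ∂μ₂
    set u' := ∫ x in Ico a b, x ∂μ₁
    set v' := ∫ x in Ico a b, x ∂μ₂
    have hppos : 0 < p := ENNReal.toReal_pos h1.ne' (measure_ne_top _ _)
    have hqpos : 0 < q := ENNReal.toReal_pos h2.ne' (measure_ne_top _ _)
    have hp'pos : 0 < p' := ENNReal.toReal_pos hp'.ne' (measure_ne_top _ _)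
    have hq'pos : 0 < q' := ENNReal.toReal_pos hq'.ne' (measure_ne_top _ _)
    have R1 : u * q = v * p := hR b c hbc
    have R2 : u' * q' = v' * p' := R_Ico μ₁ μ₂ hR a b hab
    have R3 : (u' + u) * (q' + q) = (v' + v) * (p' + p) := by
      have := hR a c (hab.trans hbc)
      rw [hMadd1, hMadd2, hPadd1, hPadd2] at this
      exact this
    have key : (u * p' - u' * p) * (q' * p - q * p') = 0 := by
      linear_combination (p*p') * R3 - (p*p' + p'^2) * R1 - (p*p' + p^2) * R2
    have hm1 : b * p ≤ u := mean_ge_Icc μ₁ b c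
    have hm2 : u' < b * p' := mean_lt_Ico μ₁ a b hab hp'
    have hne : 0 < u * p' - u' * p := by nlinarith
    have hzero : q' * p - q * p' = 0 := by
      rcases mul_eq_zero.1 key with h | h
      · exact absurd h hne.ne'
      · exact h
    rw [hPadd1, hPadd2]
    nlinarith [hzero]

lemma cross_sub (hP : ∀ a b : ℝ, a < b → (0 < μ₁ (Icc a b) ↔ 0 < μ₂ (Icc a b)))
    (hR : ∀ a b : ℝ, a < b → (∫ x in Icc a b, x ∂μ₁) * (μ₂ (Icc a b)).toReal
        = (∫ x in Icc a b, x ∂μ₂) * (μ₁ (Icc a b)).toReal)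
    (a b A B : ℝ) (hab : a < b) (hA : A ≤ a) (hB : b ≤ B) :
    (μ₁ (Icc a b)).toReal * (μ₂ (Icc A B)).toReal
      = (μ₂ (Icc a b)).toReal * (μ₁ (Icc A B)).toReal := by
  by_cases h0 : μ₁ (Icc a b) = 0
  · have h0' : μ₂ (Icc a b) = 0 := by
      by_contra hc
      have := (hP a b hab).2 (lt_of_le_of_ne zero_le (Ne.symm hc))
      rw [h0] at this; exact lt_irrefl 0 this
    simp [h0, h0']
  have h1 : 0 < μ₁ (Icc a b) := lt_of_le_of_ne zero_le (Ne.symm h0)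
  have h2 : 0 < μ₂ (Icc a b) := (hP a b hab).1 h1
  have s1 : (μ₁ (Icc a b)).toReal * (μ₂ (Icc a B)).toReal
      = (μ₂ (Icc a b)).toReal * (μ₁ (Icc a B)).toReal := by
    rcases eq_or_lt_of_le hB with rfl | hbB
    · ring
    · exact extR μ₁ μ₂ hP hR a b B hab hbB h1
  have h1' : 0 < μ₁ (Icc a B) := lt_of_lt_of_le h1 (measure_mono (Icc_subset_Icc_right hB))
  have h2' : 0 < μ₂ (Icc a B) := lt_of_lt_of_le h2 (measure_mono (Icc_subset_Icc_right hB))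
  have s2 : (μ₁ (Icc a B)).toReal * (μ₂ (Icc A B)).toReal
      = (μ₂ (Icc a B)).toReal * (μ₁ (Icc A B)).toReal := by
    rcases eq_or_lt_of_le hA with rfl | hAa
    · ring
    · exact extL μ₁ μ₂ hP hR A a B hAa (hab.trans_le hB) h1'
  have hQ : (μ₂ (Icc a B)).toReal ≠ 0 :=
    (ENNReal.toReal_pos h2'.ne' (measure_ne_top _ _)).ne'
  apply mul_left_cancel₀ hQ
  linear_combination (μ₂ (Icc A B)).toReal * s1 + (μ₂ (Icc a b)).toReal * s2

lemma icc_eq (hP : ∀ a b : ℝ, a < b → (0 < μ₁ (Icc a b) ↔ 0 < μ₂ (Icc a b)))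
    (hR : ∀ a b : ℝ, a < b → (∫ x in Icc a b, x ∂μ₁) * (μ₂ (Icc a b)).toReal
        = (∫ x in Icc a b, x ∂μ₂) * (μ₁ (Icc a b)).toReal)
    (a b : ℝ) (hab : a < b) : μ₁ (Icc a b) = μ₂ (Icc a b) := by
  have hmono : Monotone (fun m : ℕ => Icc (a - m) (b + m)) := by
    intro n m hnm
    have : (n:ℝ) ≤ (m:ℝ) := by exact_mod_cast hnm
    exact Icc_subset_Icc (by linarith) (by linarith)
  have hun : (⋃ m : ℕ, Icc (a - (m:ℝ)) (b + m)) = univ := by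
    ext x
    simp only [mem_iUnion, mem_Icc, mem_univ, iff_true]
    obtain ⟨m, hm⟩ := exists_nat_ge (max (a - x) (x - b))
    exact ⟨m, by have := le_max_left (a - x) (x - b); linarith,
      by have := le_max_right (a - x) (x - b); linarith⟩
  have hT1 : Tendsto (fun m : ℕ => (μ₁ (Icc (a - m) (b + m))).toReal) atTop (𝓝 1) := by
    have h1 := tendsto_measure_iUnion_atTop (μ := μ₁) hmono
    rw [hun] at h1
    have := (ENNReal.tendsto_toReal (measure_ne_top μ₁ _)).comp h1
    simpa [measure_univ, Function.comp_def] using this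
  have hT2 : Tendsto (fun m : ℕ => (μ₂ (Icc (a - m) (b + m))).toReal) atTop (𝓝 1) := by
    have h1 := tendsto_measure_iUnion_atTop (μ := μ₂) hmono
    rw [hun] at h1
    have := (ENNReal.tendsto_toReal (measure_ne_top μ₂ _)).comp h1
    simpa [measure_univ, Function.comp_def] using this
  have hcr : ∀ m : ℕ, (μ₁ (Icc a b)).toReal * (μ₂ (Icc (a - m) (b + m))).toReal
      = (μ₂ (Icc a b)).toReal * (μ₁ (Icc (a - m) (b + m))).toReal := by
    intro m
    have hm0 : (0:ℝ) ≤ m := Nat.cast_nonneg m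
    exact cross_sub μ₁ μ₂ hP hR a b (a - m) (b + m) hab (by linarith) (by linarith)
  have hlim1 : Tendsto (fun m : ℕ => (μ₁ (Icc a b)).toReal * (μ₂ (Icc (a - m) (b + m))).toReal)
      atTop (𝓝 ((μ₁ (Icc a b)).toReal * 1)) := (tendsto_const_nhds).mul hT2
  have hlim2 : Tendsto (fun m : ℕ => (μ₂ (Icc a b)).toReal * (μ₁ (Icc (a - m) (b + m))).toReal)
      atTop (𝓝 ((μ₂ (Icc a b)).toReal * 1)) := (tendsto_const_nhds).mul hT1
  have := tendsto_nhds_unique (hlim1.congr (fun m => hcr m)) hlim2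
  rw [mul_one, mul_one] at this
  exact (ENNReal.toReal_eq_toReal_iff' (measure_ne_top _ _) (measure_ne_top _ _)).1 this

lemma main_aux (hP : ∀ a b : ℝ, a < b → (0 < μ₁ (Icc a b) ↔ 0 < μ₂ (Icc a b)))
    (hR : ∀ a b : ℝ, a < b → (∫ x in Icc a b, x ∂μ₁) * (μ₂ (Icc a b)).toReal
        = (∫ x in Icc a b, x ∂μ₂) * (μ₁ (Icc a b)).toReal) :
    μ₁ = μ₂ := by
  apply MeasureTheory.Measure.ext_of_Ico_finite μ₁ μ₂ (by simp)
  intro a b hab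
  rw [← seqL_union a b hab, (seqL_mono a b hab).measure_iUnion,
    (seqL_mono a b hab).measure_iUnion]
  congr 1
  ext n
  exact icc_eq μ₁ μ₂ hP hR a _ (seqL_gt a b hab n)

end Main

end CexpAux

theorem stmt_0 {Ω : Type*} [MeasurableSpace Ω] (P : Measure Ω) [IsProbabilityMeasure P]
    (X₁ X₂ : Ω → ℝ) (hX₁ : Measurable X₁) (hX₂ : Measurable X₂)
    (hpos : ∀ a b : ℝ, a < b →
      (0 < P {ω | X₁ ω ∈ Icc a b} ↔ 0 < P {ω | X₂ ω ∈ Icc a b}))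
    (heq : ∀ a b : ℝ, a < b → 0 < P {ω | X₁ ω ∈ Icc a b} → 0 < P {ω | X₂ ω ∈ Icc a b} →
      cexp P {ω | X₁ ω ∈ Icc a b} X₁ = cexp P {ω | X₂ ω ∈ Icc a b} X₂) :
    Measure.map X₁ P = Measure.map X₂ P := by
  set μ₁ := Measure.map X₁ P with hμ₁
  set μ₂ := Measure.map X₂ P with hμ₂
  haveI : IsProbabilityMeasure μ₁ := Measure.isProbabilityMeasure_map hX₁.aemeasurable
  haveI : IsProbabilityMeasure μ₂ := Measure.isProbabilityMeasure_map hX₂.aemeasurable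
  have hmap1 : ∀ a b : ℝ, P {ω | X₁ ω ∈ Icc a b} = μ₁ (Icc a b) := fun a b =>
    (Measure.map_apply hX₁ measurableSet_Icc).symm
  have hmap2 : ∀ a b : ℝ, P {ω | X₂ ω ∈ Icc a b} = μ₂ (Icc a b) := fun a b =>
    (Measure.map_apply hX₂ measurableSet_Icc).symm
  have hint1 : ∀ a b : ℝ, ∫ x in Icc a b, x ∂μ₁ = ∫ ω in X₁ ⁻¹' Icc a b, X₁ ω ∂P := fun a b =>
    setIntegral_map measurableSet_Icc measurable_id.aestronglyMeasurable hX₁.aemeasurable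
  have hint2 : ∀ a b : ℝ, ∫ x in Icc a b, x ∂μ₂ = ∫ ω in X₂ ⁻¹' Icc a b, X₂ ω ∂P := fun a b =>
    setIntegral_map measurableSet_Icc measurable_id.aestronglyMeasurable hX₂.aemeasurable
  have hP : ∀ a b : ℝ, a < b → (0 < μ₁ (Icc a b) ↔ 0 < μ₂ (Icc a b)) := by
    intro a b hab
    rw [← hmap1, ← hmap2]
    exact hpos a b hab
  have hR : ∀ a b : ℝ, a < b → (∫ x in Icc a b, x ∂μ₁) * (μ₂ (Icc a b)).toReal
      = (∫ x in Icc a b, x ∂μ₂) * (μ₁ (Icc a b)).toReal := by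
    intro a b hab
    by_cases h0 : μ₁ (Icc a b) = 0
    · have hM1 : ∫ x in Icc a b, x ∂μ₁ = 0 := by
        rw [Measure.restrict_eq_zero.mpr h0]; simp
      rw [hM1, h0]; simp
    by_cases h0' : μ₂ (Icc a b) = 0
    · have hM2 : ∫ x in Icc a b, x ∂μ₂ = 0 := by
        rw [Measure.restrict_eq_zero.mpr h0']; simp
      rw [hM2, h0']; simp
    have h1 : 0 < μ₁ (Icc a b) := lt_of_le_of_ne zero_le (Ne.symm h0)
    have h2 : 0 < μ₂ (Icc a b) := lt_of_le_of_ne zero_le (Ne.symm h0')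
    have key := heq a b hab (by rw [hmap1]; exact h1) (by rw [hmap2]; exact h2)
    unfold cexp at key
    have e1 : {ω | X₁ ω ∈ Icc a b} = X₁ ⁻¹' Icc a b := rfl
    have e2 : {ω | X₂ ω ∈ Icc a b} = X₂ ⁻¹' Icc a b := rfl
    rw [e1, e2] at key
    rw [hint1 a b, hint2 a b]
    have hp : (0:ℝ) < (μ₁ (Icc a b)).toReal := ENNReal.toReal_pos h0 (measure_ne_top _ _)
    have hq : (0:ℝ) < (μ₂ (Icc a b)).toReal := ENNReal.toReal_pos h0' (measure_ne_top _ _)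
    have hp' : (P (X₁ ⁻¹' Icc a b)).toReal = (μ₁ (Icc a b)).toReal := by
      rw [← hmap1]; rfl
    have hq' : (P (X₂ ⁻¹' Icc a b)).toReal = (μ₂ (Icc a b)).toReal := by
      rw [← hmap2]; rfl
    rw [hp', hq'] at key
    field_simp at key
    linarith [key]
  exact CexpAux.main_aux μ₁ μ₂ hP hR
end

section
/- Let X₁ and X₂ be integrable real-valued random variables (E|X₁| < ∞ and E|X₂| < ∞). Suppose that for every t ∈ ℝ, ℙ(X₁ ≥ t) > 0 if and only if ℙ(X₂ ≥ t) > 0, and that whenever these probabilities are positive, E[X₁ | X₁ ≥ t] = E[X₂ | X₂ ≥ t]. Then X₁ and X₂ have the same probability distribution. -/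
open MeasureTheory Set

open Filter Topology

section Aux
variable {Ω : Type*} [MeasurableSpace Ω] {P : Measure Ω} [IsProbabilityMeasure P] {X : Ω → ℝ}

/-- `ℙ(X ≥ t)` as a real number. -/
noncomputable def tailR (P : Measure Ω) (X : Ω → ℝ) (t : ℝ) : ℝ := (P {ω | t ≤ X ω}).toReal

/-- `ℙ(X > t)` as a real number. -/
noncomputable def tailS (P : Measure Ω) (X : Ω → ℝ) (t : ℝ) : ℝ := (P {ω | t < X ω}).toReal

/-- `E[(X - t)⁺]`. -/
noncomputable def Fex (P : Measure Ω) (X : Ω → ℝ) (t : ℝ) : ℝ := ∫ ω, max (X ω - t) 0 ∂P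

lemma tailS_antitone : Antitone (tailS P X) := fun s t hst =>
  ENNReal.toReal_mono (measure_ne_top _ _) (measure_mono fun ω (h : t < X ω) => hst.trans_lt h)

lemma tailR_antitone : Antitone (tailR P X) := fun s t hst =>
  ENNReal.toReal_mono (measure_ne_top _ _) (measure_mono fun ω (h : t ≤ X ω) => hst.trans h)

lemma tailS_nonneg (t : ℝ) : 0 ≤ tailS P X t := ENNReal.toReal_nonneg

lemma tailS_le_one (t : ℝ) : tailS P X t ≤ 1 := by
  exact (by simpa using ENNReal.toReal_mono ENNReal.one_ne_top (prob_le_one (μ := P) (s := {ω | t < X ω})) : (P {ω | t < X ω}).toReal ≤ 1)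

lemma tailR_le_tailS {s t : ℝ} (hst : s < t) : tailR P X t ≤ tailS P X s :=
  ENNReal.toReal_mono (measure_ne_top _ _) (measure_mono fun ω (h : t ≤ X ω) => hst.trans_le h)

lemma tailR_pos_iff (t : ℝ) : 0 < tailR P X t ↔ 0 < P {ω | t ≤ X ω} := by
  unfold tailR
  rw [ENNReal.toReal_pos_iff]
  exact ⟨fun h => h.1, fun h => ⟨h, measure_lt_top _ _⟩⟩

lemma meas_le (hX : Measurable X) (t : ℝ) : MeasurableSet {ω | t ≤ X ω} :=
  measurableSet_le measurable_const hX

lemma integrable_max (hXi : Integrable X P) (t : ℝ) :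
    Integrable (fun ω => max (X ω - t) 0) P :=
  (hXi.sub (integrable_const t)).pos_part

lemma Fex_nonneg (hXi : Integrable X P) (t : ℝ) : 0 ≤ Fex P X t :=
  integral_nonneg fun _ => le_max_right _ _

lemma Fex_antitone (hXi : Integrable X P) : Antitone (Fex P X) := fun s t hst =>
  integral_mono (integrable_max hXi t) (integrable_max hXi s)
    (fun ω => max_le_max (by linarith) le_rfl)

lemma pt_lb {t u x : ℝ} (htu : t < u) :
    ({x' : ℝ | u < x'}).indicator (fun _ => u - t) x ≤ max (x - t) 0 - max (x - u) 0 := by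
  simp only [Set.indicator_apply, Set.mem_setOf_eq]
  split_ifs with h <;>
    rcases max_cases (x - t) 0 with ⟨h1, h1'⟩ | ⟨h1, h1'⟩ <;>
    rcases max_cases (x - u) 0 with ⟨h2, h2'⟩ | ⟨h2, h2'⟩ <;>
    rw [h1, h2] <;> linarith

lemma pt_ub {t u x : ℝ} (htu : t < u) :
    max (x - t) 0 - max (x - u) 0 ≤ ({x' : ℝ | t < x'}).indicator (fun _ => u - t) x := by
  simp only [Set.indicator_apply, Set.mem_setOf_eq]
  split_ifs with h <;>
    rcases max_cases (x - t) 0 with ⟨h1, h1'⟩ | ⟨h1, h1'⟩ <;>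
    rcases max_cases (x - u) 0 with ⟨h2, h2'⟩ | ⟨h2, h2'⟩ <;>
    rw [h1, h2] <;> linarith

lemma integral_indicator_lt (hX : Measurable X) (t c : ℝ) :
    ∫ ω, ({ω' : Ω | t < X ω'}).indicator (fun _ => c) ω ∂P = tailS P X t * c := by
  rw [integral_indicator (measurableSet_lt measurable_const hX), setIntegral_const]
  simp [tailS]
  exact Or.inl rfl

lemma Fex_sub_le (hX : Measurable X) (hXi : Integrable X P) {t u : ℝ} (htu : t < u) :
    Fex P X t - Fex P X u ≤ (u - t) * tailS P X t := by
  have h := integral_mono (f := fun ω => max (X ω - t) 0 - max (X ω - u) 0)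
    (g := fun ω => ({ω' : Ω | t < X ω'}).indicator (fun _ => u - t) ω)
    ((integrable_max hXi t).sub (integrable_max hXi u))
    (by
      have : Integrable (fun ω => ({ω' : Ω | t < X ω'}).indicator (fun _ => u - t) ω) P := by
        rw [integrable_indicator_iff (measurableSet_lt measurable_const hX)]
        exact integrableOn_const (measure_ne_top _ _)
      exact this)
    (fun ω => pt_ub htu)
  rw [integral_sub (integrable_max hXi t) (integrable_max hXi u)] at h
  rw [integral_indicator_lt hX] at h
  unfold Fex; linarith

lemma le_Fex_sub (hX : Measurable X) (hXi : Integrable X P) {t u : ℝ} (htu : t < u) :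
    (u - t) * tailS P X u ≤ Fex P X t - Fex P X u := by
  have h := integral_mono (g := fun ω => max (X ω - t) 0 - max (X ω - u) 0)
    (f := fun ω => ({ω' : Ω | u < X ω'}).indicator (fun _ => u - t) ω)
    (by
      have : Integrable (fun ω => ({ω' : Ω | u < X ω'}).indicator (fun _ => u - t) ω) P := by
        rw [integrable_indicator_iff (measurableSet_lt measurable_const hX)]
        exact integrableOn_const (measure_ne_top _ _)
      exact this)
    ((integrable_max hXi t).sub (integrable_max hXi u))
    (fun ω => pt_lb htu)
  rw [integral_sub (integrable_max hXi t) (integrable_max hXi u)] at h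
  rw [integral_indicator_lt hX] at h
  unfold Fex; linarith

lemma tendsto_tailS_right (t : ℝ) :
    Tendsto (tailS P X) (𝓝[>] t) (𝓝 (tailS P X t)) := by
  have A := (tailS_antitone (P := P) (X := X)).tendsto_nhdsGT t
  have hbdd : BddAbove (tailS P X '' Ioi t) := by
    refine ⟨tailS P X t, ?_⟩
    rintro y ⟨u, hu, rfl⟩
    exact tailS_antitone (le_of_lt hu)
  have hseq : Tendsto (fun n : ℕ => tailS P X (t + 1 / (n + 1))) atTop (𝓝 (tailS P X t)) := by
    have hmono : Monotone (fun n : ℕ => {ω | t + 1 / ((n : ℝ) + 1) < X ω}) := by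
      intro m n hmn ω (h : t + 1 / ((m : ℝ) + 1) < X ω)
      have hm : (0:ℝ) < (m : ℝ) + 1 := by positivity
      have : (1:ℝ) / ((n : ℝ) + 1) ≤ 1 / ((m : ℝ) + 1) :=
        one_div_le_one_div_of_le hm (by exact_mod_cast Nat.succ_le_succ hmn)
      exact lt_of_le_of_lt (by linarith) h
    have hU : (⋃ n : ℕ, {ω | t + 1 / ((n : ℝ) + 1) < X ω}) = {ω | t < X ω} := by
      ext ω; simp only [mem_iUnion, mem_setOf_eq]
      constructor
      · rintro ⟨n, hn⟩
        have : (0:ℝ) < 1 / ((n : ℝ) + 1) := by positivity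
        linarith
      · intro h
        obtain ⟨n, hn⟩ := exists_nat_one_div_lt (sub_pos.2 h)
        exact ⟨n, by linarith⟩
    have h1 := tendsto_measure_iUnion_atTop (μ := P) hmono
    rw [hU] at h1
    exact (ENNReal.tendsto_toReal (measure_ne_top P _)).comp h1
  have hsup : sSup (tailS P X '' Ioi t) = tailS P X t := by
    refine le_antisymm (csSup_le ⟨tailS P X (t + 1), ⟨t + 1, by simp, rfl⟩⟩ ?_) ?_
    · rintro y ⟨u, hu, rfl⟩
      exact tailS_antitone (le_of_lt hu)
    · refine le_of_tendsto hseq (Eventually.of_forall fun n => le_csSup hbdd ?_)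
      refine ⟨t + 1 / ((n : ℝ) + 1), ?_, rfl⟩
      have : (0:ℝ) < 1 / ((n : ℝ) + 1) := by positivity
      exact mem_Ioi.2 (by linarith)
  rwa [hsup] at A

lemma hasDerivWithinAt_Fex (hX : Measurable X) (hXi : Integrable X P) (t : ℝ) :
    HasDerivWithinAt (Fex P X) (-(tailS P X t)) (Ioi t) t := by
  rw [hasDerivWithinAt_iff_tendsto_slope,
    diff_singleton_eq_self (fun h => lt_irrefl t (mem_Ioi.1 h))]
  refine tendsto_of_tendsto_of_tendsto_of_le_of_le' tendsto_const_nhds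
    ((tendsto_tailS_right t).neg) ?_ ?_
  · filter_upwards [self_mem_nhdsWithin] with u hu
    have htu : t < u := mem_Ioi.1 hu
    rw [slope_def_field, le_div_iff₀ (sub_pos.2 htu)]
    have := Fex_sub_le hX hXi htu
    nlinarith
  · filter_upwards [self_mem_nhdsWithin] with u hu
    have htu : t < u := mem_Ioi.1 hu
    rw [slope_def_field, div_le_iff₀ (sub_pos.2 htu)]
    have := le_Fex_sub hX hXi htu
    nlinarith

lemma Fex_continuous (hX : Measurable X) (hXi : Integrable X P) : Continuous (Fex P X) := by
  have key : ∀ s u : ℝ, s ≤ u → Fex P X s - Fex P X u ≤ u - s := by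
    intro s u hsu
    rcases eq_or_lt_of_le hsu with rfl | h
    · simp
    · have h1 := Fex_sub_le hX hXi h
      have h2 := tailS_le_one (P := P) (X := X) s
      have h3 := tailS_nonneg (P := P) (X := X) s
      nlinarith
  have : LipschitzWith 1 (Fex P X) := by
    refine LipschitzWith.of_dist_le_mul fun s u => ?_
    rw [NNReal.coe_one, one_mul, Real.dist_eq, Real.dist_eq]
    rcases le_total s u with h | h
    · rw [abs_of_nonneg (sub_nonneg.2 (Fex_antitone hXi h)), abs_sub_comm,
        abs_of_nonneg (sub_nonneg.2 h)]
      exact key s u h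
    · rw [abs_sub_comm, abs_of_nonneg (sub_nonneg.2 (Fex_antitone hXi h)),
        abs_of_nonneg (sub_nonneg.2 h)]
      exact key u s h
  exact this.continuous

lemma log_Fex (hX : Measurable X) (hXi : Integrable X P) {b a : ℝ} (hba : b ≤ a)
    (hpos : 0 < Fex P X a) :
    ∫ s in b..a, tailS P X s / Fex P X s =
      Real.log (Fex P X b) - Real.log (Fex P X a) := by
  have hFpos : ∀ s, s ≤ a → 0 < Fex P X s := fun s hs =>
    lt_of_lt_of_le hpos (Fex_antitone hXi hs)
  have hcont : ContinuousOn (fun s => Real.log (Fex P X s)) (Icc b a) :=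
    ContinuousOn.log ((Fex_continuous hX hXi).continuousOn)
      (fun x hx => (hFpos x hx.2).ne')
  have hderiv : ∀ x ∈ Ioo b a, HasDerivWithinAt (fun s => Real.log (Fex P X s))
      (-(tailS P X x) / Fex P X x) (Ioi x) x :=
    fun x hx => (hasDerivWithinAt_Fex hX hXi x).log (hFpos x hx.2.le).ne'
  have hint : IntervalIntegrable (fun s => -(tailS P X s) / Fex P X s) volume b a := by
    rw [intervalIntegrable_iff_integrableOn_Icc_of_le hba]
    refine Integrable.mono' (g := fun _ => 1 / Fex P X a) (integrable_const _)
      (((tailS_antitone (P := P) (X := X)).measurable.neg.div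
        (Fex_continuous hX hXi).measurable).aestronglyMeasurable) ?_
    refine (ae_restrict_iff' measurableSet_Icc).2 (ae_of_all _ fun s hs => ?_)
    have h1 : 0 < Fex P X s := hFpos s hs.2
    rw [Real.norm_eq_abs, abs_div, abs_neg, abs_of_nonneg (tailS_nonneg s),
      abs_of_pos h1]
    exact div_le_div₀ zero_le_one (tailS_le_one s) hpos (Fex_antitone hXi hs.2)
  have hFTC := intervalIntegral.integral_eq_sub_of_hasDeriv_right_of_le hba hcont hderiv hint
  have : ∫ s in b..a, tailS P X s / Fex P X s
      = -∫ s in b..a, -(tailS P X s) / Fex P X s := by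
    rw [← intervalIntegral.integral_neg]
    congr 1; funext s; ring
  rw [this, hFTC]; ring

lemma Fex_eq_setIntegral (hX : Measurable X) (hXi : Integrable X P) (t : ℝ) :
    Fex P X t = (∫ ω in {ω | t ≤ X ω}, X ω ∂P) - t * tailR P X t := by
  have h1 : (fun ω => max (X ω - t) 0)
      = ({ω | t ≤ X ω}).indicator (fun ω => X ω - t) := by
    funext ω
    rw [indicator_apply]
    split_ifs with h
    · exact max_eq_left (sub_nonneg.2 h)
    · exact max_eq_right (by simp only [mem_setOf_eq, not_le] at h; linarith)
  unfold Fex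
  rw [h1, integral_indicator (meas_le hX t),
    integral_sub hXi.integrableOn (integrable_const t).integrableOn,
    setIntegral_const, smul_eq_mul, mul_comm]
  rfl

lemma Fex_eq_cexp (hX : Measurable X) (hXi : Integrable X P) {t : ℝ}
    (h : 0 < tailR P X t) :
    Fex P X t = (cexp P {ω | t ≤ X ω} X - t) * tailR P X t := by
  rw [Fex_eq_setIntegral hX hXi]
  unfold tailR at h
  unfold cexp tailR
  field_simp

lemma Fex_repr (hXi : Integrable X P) (b : ℝ) :
    Fex P X b = (∫ ω, X ω ∂P) - b + ∫ ω, max (b - X ω) 0 ∂P := by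
  have h : ∀ ω, max (X ω - b) 0 = (X ω - b) + max (b - X ω) 0 := by
    intro ω
    rcases max_cases (b - X ω) 0 with ⟨h1, h1'⟩ | ⟨h1, h1'⟩ <;>
      rcases max_cases (X ω - b) 0 with ⟨h2, h2'⟩ | ⟨h2, h2'⟩ <;> rw [h1, h2] <;> linarith
  unfold Fex
  simp_rw [h]
  have i1 : Integrable (fun ω => X ω - b) P := hXi.sub (integrable_const b)
  have i2 : Integrable (fun ω => max (b - X ω) 0) P := ((integrable_const b).sub hXi).pos_part
  rw [integral_add i1 i2, integral_sub hXi (integrable_const b), integral_const]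
  simp [measure_univ]

lemma tendsto_excess (hXi : Integrable X P) (t : ℝ) :
    Tendsto (fun n : ℕ => ∫ ω, max ((t - n) - X ω) 0 ∂P) atTop (𝓝 0) := by
  have hmeas : ∀ n : ℕ, AEStronglyMeasurable (fun ω => max ((t - n) - X ω) 0) P := by
    intro n
    have : Integrable (fun ω => max ((t - (n:ℝ)) - X ω) 0) P :=
      ((integrable_const (t - (n:ℝ))).sub hXi).pos_part
    exact this.aestronglyMeasurable
  have hbound : Integrable (fun ω => max (t - X ω) 0) P :=
    ((integrable_const t).sub hXi).pos_part
  have h := tendsto_integral_of_dominated_convergence (μ := P)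
    (F := fun (n : ℕ) ω => max ((t - n) - X ω) 0) (f := fun _ => (0:ℝ))
    (fun ω => max (t - X ω) 0) hmeas hbound ?_ ?_
  · simpa using h
  · intro n
    refine ae_of_all _ fun ω => ?_
    rw [Real.norm_eq_abs, abs_of_nonneg (le_max_right _ _)]
    refine max_le_max ?_ le_rfl
    have : (0:ℝ) ≤ n := Nat.cast_nonneg n
    linarith
  · refine ae_of_all _ fun ω => ?_
    obtain ⟨N, hN⟩ := exists_nat_ge (t - X ω)
    refine Tendsto.congr' ?_ (tendsto_const_nhds (x := (0:ℝ)) (f := atTop))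
    filter_upwards [eventually_ge_atTop N] with n hn
    have : (N:ℝ) ≤ n := by exact_mod_cast hn
    exact (max_eq_right (by linarith)).symm

lemma tailR_left_eq {X₂ : Ω → ℝ} (hX : Measurable X) (hX₂ : Measurable X₂) (t : ℝ)
    (h : ∀ s, s < t → P {ω | s ≤ X ω} = P {ω | s ≤ X₂ ω}) :
    P {ω | t ≤ X ω} = P {ω | t ≤ X₂ ω} := by
  have key : ∀ (Y : Ω → ℝ), Measurable Y →
      Tendsto (fun n : ℕ => P {ω | t - 1 / ((n:ℝ) + 1) ≤ Y ω}) atTop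
        (𝓝 (P {ω | t ≤ Y ω})) := by
    intro Y hY
    have hanti : Antitone (fun n : ℕ => {ω | t - 1 / ((n:ℝ) + 1) ≤ Y ω}) := by
      intro m n hmn ω (hω : t - 1 / ((n:ℝ) + 1) ≤ Y ω)
      have hm : (0:ℝ) < (m : ℝ) + 1 := by positivity
      have : (1:ℝ) / ((n : ℝ) + 1) ≤ 1 / ((m : ℝ) + 1) :=
        one_div_le_one_div_of_le hm (by exact_mod_cast Nat.succ_le_succ hmn)
      exact le_trans (by linarith) hω
    have hI : (⋂ n : ℕ, {ω | t - 1 / ((n:ℝ) + 1) ≤ Y ω}) = {ω | t ≤ Y ω} := by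
      ext ω; simp only [mem_iInter, mem_setOf_eq]
      constructor
      · intro hall
        by_contra hcon
        push_neg at hcon
        obtain ⟨n, hn⟩ := exists_nat_one_div_lt (sub_pos.2 hcon)
        exact absurd (hall n) (by push_neg; linarith)
      · intro hω n
        have : (0:ℝ) < 1 / ((n : ℝ) + 1) := by positivity
        linarith
    have h2 := tendsto_measure_iInter_atTop (μ := P)
      (fun n => (meas_le hY _).nullMeasurableSet) hanti ⟨0, measure_ne_top _ _⟩
    rw [hI] at h2
    exact h2
  refine tendsto_nhds_unique ((key X hX).congr fun n => ?_) (key X₂ hX₂)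
  apply h
  have : (0:ℝ) < 1 / ((n : ℝ) + 1) := by positivity
  linarith

end Aux

theorem stmt_1 {Ω : Type*} [MeasurableSpace Ω] (P : Measure Ω) [IsProbabilityMeasure P]
    (X₁ X₂ : Ω → ℝ) (hX₁ : Measurable X₁) (hX₂ : Measurable X₂)
    (hX₁i : Integrable X₁ P) (hX₂i : Integrable X₂ P)
    (hpos : ∀ t : ℝ, (0 < P {ω | t ≤ X₁ ω} ↔ 0 < P {ω | t ≤ X₂ ω}))
    (heq : ∀ t : ℝ, 0 < P {ω | t ≤ X₁ ω} → 0 < P {ω | t ≤ X₂ ω} →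
      cexp P {ω | t ≤ X₁ ω} X₁ = cexp P {ω | t ≤ X₂ ω} X₂) :
    Measure.map X₁ P = Measure.map X₂ P := by
  -- positivity transfer in ℝ
  have hpos' : ∀ t, 0 < tailR P X₁ t ↔ 0 < tailR P X₂ t := fun t => by
    rw [tailR_pos_iff, tailR_pos_iff]; exact hpos t
  -- key identity
  have KI : ∀ t, 0 < tailR P X₁ t →
      tailR P X₁ t * Fex P X₂ t = tailR P X₂ t * Fex P X₁ t := by
    intro t h1
    have h2 : 0 < tailR P X₂ t := (hpos' t).1 h1
    have e1 := Fex_eq_cexp hX₁ hX₁i h1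
    have e2 := Fex_eq_cexp hX₂ hX₂i h2
    rw [heq t ((tailR_pos_iff t).1 h1) ((tailR_pos_iff t).1 h2)] at e1
    rw [e1, e2]; ring
  -- key identity for strict tails
  have KIs : ∀ t : ℝ, (∀ u, u ≤ t → 0 < tailR P X₁ u) → ∀ s, s < t →
      tailS P X₁ s * Fex P X₂ s = tailS P X₂ s * Fex P X₁ s := by
    intro t hall s hst
    set u : ℕ → ℝ := fun n => s + (t - s) / (n + 2) with hu
    have hub : ∀ n : ℕ, s < u n ∧ u n < t := by
      intro n
      have hps : (0:ℝ) < (t - s) / ((n:ℝ) + 2) := by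
        apply div_pos (by linarith) (by positivity)
      have hlt : (t - s) / ((n:ℝ) + 2) < t - s := by
        apply div_lt_self (by linarith)
        have : (0:ℝ) ≤ (n:ℝ) := Nat.cast_nonneg n
        linarith
      exact ⟨by simp only [hu]; linarith, by simp only [hu]; linarith⟩
    have hulim : Tendsto u atTop (𝓝 s) := by
      have h0 : Tendsto (fun n : ℕ => (t - s) / (n + 2)) atTop (𝓝 0) := by
        have hup : Tendsto (fun n : ℕ => (t - s) * (1 / ((n:ℝ) + 1))) atTop (𝓝 0) := by
          simpa using tendsto_one_div_add_atTop_nhds_zero_nat.const_mul (t - s)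
        refine tendsto_of_tendsto_of_tendsto_of_le_of_le
          (tendsto_const_nhds (x := (0:ℝ))) hup (fun n => ?_) (fun n => ?_)
        · exact div_nonneg (by linarith) (by positivity)
        · show (t - s) / ((n:ℝ) + 2) ≤ (t - s) * (1 / ((n:ℝ) + 1))
          rw [mul_one_div]
          have hn : (0:ℝ) ≤ (n:ℝ) := Nat.cast_nonneg n
          exact div_le_div_of_nonneg_left (by linarith) (by positivity) (by linarith)
      have := tendsto_const_nhds (x := s) (f := (atTop : Filter ℕ)) |>.add h0
      simpa using this
    have key : ∀ (Y : Ω → ℝ), Measurable Y →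
        Tendsto (fun n => tailR P Y (u n)) atTop (𝓝 (tailS P Y s)) := by
      intro Y hY
      have hmono : Monotone (fun n : ℕ => {ω | u n ≤ Y ω}) := by
        intro m n hmn ω (hω : u m ≤ Y ω)
        have : u n ≤ u m := by
          simp only [hu]
          have hm : (0:ℝ) < (m:ℝ) + 2 := by positivity
          have hmn' : (m:ℝ) + 2 ≤ (n:ℝ) + 2 := by
            have : (m:ℝ) ≤ n := by exact_mod_cast hmn
            linarith
          have hd := div_le_div_of_nonneg_left (by linarith : (0:ℝ) ≤ t - s) hm hmn'
          linarith
        exact le_trans this hω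
      have hU : (⋃ n : ℕ, {ω | u n ≤ Y ω}) = {ω | s < Y ω} := by
        ext ω; simp only [mem_iUnion, mem_setOf_eq]
        constructor
        · rintro ⟨n, hn⟩
          exact lt_of_lt_of_le (hub n).1 hn
        · intro h
          have hts : (0:ℝ) < t - s := by linarith
          obtain ⟨n, hn⟩ := exists_nat_one_div_lt (div_pos (sub_pos.2 h) hts)
          refine ⟨n, ?_⟩
          have h1 : (t - s) / ((n:ℝ) + 2) ≤ (t - s) * (1 / ((n:ℝ) + 1)) := by
            rw [mul_one_div]
            have hn : (0:ℝ) ≤ (n:ℝ) := Nat.cast_nonneg n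
            exact div_le_div_of_nonneg_left (by linarith) (by positivity) (by linarith)
          have h2 : (t - s) * (1 / ((n:ℝ) + 1)) < Y ω - s := by
            rw [mul_one_div, div_lt_iff₀ (by positivity : (0:ℝ) < (n:ℝ) + 1)]
            rw [div_lt_div_iff₀ (by positivity : (0:ℝ) < (n:ℝ) + 1) hts] at hn
            nlinarith
          simp only [hu]
          linarith
      have h1 := tendsto_measure_iUnion_atTop (μ := P) hmono
      rw [hU] at h1
      exact (ENNReal.tendsto_toReal (measure_ne_top P _)).comp h1
    have l1 : Tendsto (fun n => tailR P X₁ (u n) * Fex P X₂ (u n)) atTop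
        (𝓝 (tailS P X₁ s * Fex P X₂ s)) :=
      (key X₁ hX₁).mul (((Fex_continuous hX₂ hX₂i).tendsto s).comp hulim)
    have l2 : Tendsto (fun n => tailR P X₂ (u n) * Fex P X₁ (u n)) atTop
        (𝓝 (tailS P X₂ s * Fex P X₁ s)) :=
      (key X₂ hX₂).mul (((Fex_continuous hX₁ hX₁i).tendsto s).comp hulim)
    exact tendsto_nhds_unique (l1.congr fun n => KI (u n) (hall (u n) (hub n).2.le)) l2
  -- main lemma: on the region where both tail prob and excess are positive
  have main2 : ∀ t, 0 < tailR P X₁ t → 0 < Fex P X₁ t → tailR P X₁ t = tailR P X₂ t := by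
    intro t h1 hF1
    have h2 : 0 < tailR P X₂ t := (hpos' t).1 h1
    have hall : ∀ u, u ≤ t → 0 < tailR P X₁ u := fun u hu =>
      lt_of_lt_of_le h1 (tailR_antitone hu)
    have hKI := KI t h1
    have hF2 : 0 < Fex P X₂ t := by nlinarith [mul_pos h2 hF1]
    -- ratio equality
    have hratio : ∀ b, b ≤ t → Fex P X₁ b * Fex P X₂ t = Fex P X₂ b * Fex P X₁ t := by
      intro b hb
      rcases eq_or_lt_of_le hb with rfl | hbt
      · ring
      · have hint_eq : ∫ s in b..t, tailS P X₁ s / Fex P X₁ s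
            = ∫ s in b..t, tailS P X₂ s / Fex P X₂ s := by
          apply intervalIntegral.integral_congr_ae
          have h0 : ∀ᵐ x : ℝ, x ≠ t := by
            have : (volume : Measure ℝ) {t} = 0 := Real.volume_singleton
            rw [ae_iff]
            simpa [Classical.not_not] using this
          filter_upwards [h0] with x hx hxI
          rw [uIoc_of_le hbt.le] at hxI
          have hxt : x < t := lt_of_le_of_ne hxI.2 hx
          have e := KIs t hall x hxt
          have p1 : 0 < Fex P X₁ x := lt_of_lt_of_le hF1 (Fex_antitone hX₁i hxt.le)
          have p2 : 0 < Fex P X₂ x := lt_of_lt_of_le hF2 (Fex_antitone hX₂i hxt.le)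
          rw [div_eq_div_iff p1.ne' p2.ne']
          linarith
        have L1 := log_Fex hX₁ hX₁i hbt.le hF1
        have L2 := log_Fex hX₂ hX₂i hbt.le hF2
        have hlogs : Real.log (Fex P X₁ b) - Real.log (Fex P X₁ t)
            = Real.log (Fex P X₂ b) - Real.log (Fex P X₂ t) := by
          rw [← L1, ← L2, hint_eq]
        have pb1 : 0 < Fex P X₁ b := lt_of_lt_of_le hF1 (Fex_antitone hX₁i hb)
        have pb2 : 0 < Fex P X₂ b := lt_of_lt_of_le hF2 (Fex_antitone hX₂i hb)
        have hlog : Real.log (Fex P X₁ b * Fex P X₂ t)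
            = Real.log (Fex P X₂ b * Fex P X₁ t) := by
          rw [Real.log_mul pb1.ne' hF2.ne', Real.log_mul pb2.ne' hF1.ne']
          linarith
        rw [← Real.exp_log (mul_pos pb1 hF2), ← Real.exp_log (mul_pos pb2 hF1), hlog]
    -- limit as b → -∞ gives Fex₁ t = Fex₂ t
    have hFeq : Fex P X₁ t = Fex P X₂ t := by
      have hd : Tendsto (fun n : ℕ => Fex P X₁ (t - n) - Fex P X₂ (t - n)) atTop
          (𝓝 ((∫ ω, X₁ ω ∂P) - ∫ ω, X₂ ω ∂P)) := by
        have h1' := tendsto_excess hX₁i t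
        have h2' := tendsto_excess hX₂i t
        have hfe : (fun n : ℕ => Fex P X₁ (t - n) - Fex P X₂ (t - n))
            = fun n : ℕ => ((∫ ω, X₁ ω ∂P) - ∫ ω, X₂ ω ∂P)
              + ((∫ ω, max ((t - n) - X₁ ω) 0 ∂P) - (∫ ω, max ((t - n) - X₂ ω) 0 ∂P)) := by
          funext n; rw [Fex_repr hX₁i, Fex_repr hX₂i]; ring
        rw [hfe]
        simpa using tendsto_const_nhds.add (h1'.sub h2')
      have hdiv : Tendsto (fun n : ℕ => Fex P X₂ (t - n)) atTop atTop := by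
        apply tendsto_atTop_mono (f := fun n : ℕ => (n:ℝ) + ((∫ ω, X₂ ω ∂P) - t))
        · intro n
          have hrep := Fex_repr (P := P) hX₂i (t - n)
          have hnn : 0 ≤ ∫ ω, max ((t - n) - X₂ ω) 0 ∂P :=
            integral_nonneg fun ω => le_max_right _ _
          linarith
        · exact tendsto_atTop_add_const_right _ _ tendsto_natCast_atTop_atTop
      have hq : Tendsto (fun n : ℕ =>
          (Fex P X₁ (t - n) - Fex P X₂ (t - n)) / Fex P X₂ (t - n)) atTop (𝓝 0) :=
        hd.div_atTop hdiv
      have hconst : ∀ n : ℕ, (Fex P X₁ (t - n) - Fex P X₂ (t - n)) / Fex P X₂ (t - n)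
          = Fex P X₁ t / Fex P X₂ t - 1 := by
        intro n
        have hb : (t - n : ℝ) ≤ t := by
          have : (0:ℝ) ≤ (n:ℝ) := Nat.cast_nonneg n
          linarith
        have hr := hratio (t - n) hb
        have p2 : 0 < Fex P X₂ (t - n) := lt_of_lt_of_le hF2 (Fex_antitone hX₂i hb)
        have hx : Fex P X₁ t / Fex P X₂ t - 1
            = (Fex P X₁ t - Fex P X₂ t) / Fex P X₂ t := by
          field_simp
        rw [hx, div_eq_div_iff p2.ne' hF2.ne']
        linear_combination hr
      have hcc : Tendsto (fun _ : ℕ => Fex P X₁ t / Fex P X₂ t - 1) atTop (𝓝 0) :=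
        Tendsto.congr hconst hq
      have h0 : Fex P X₁ t / Fex P X₂ t - 1 = 0 :=
        (tendsto_nhds_unique hcc tendsto_const_nhds).symm
      have : Fex P X₁ t / Fex P X₂ t = 1 := by linarith
      field_simp at this
      linarith
    -- conclude equality of tail probabilities at t
    have e1 := Fex_eq_cexp hX₁ hX₁i h1
    have e2 := Fex_eq_cexp hX₂ hX₂i h2
    rw [heq t ((tailR_pos_iff t).1 h1) ((tailR_pos_iff t).1 h2)] at e1
    have hc : cexp P {ω | t ≤ X₂ ω} X₂ - t ≠ 0 := by
      intro h0
      rw [h0, zero_mul] at e1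
      exact hF1.ne' e1
    have hmm : (cexp P {ω | t ≤ X₂ ω} X₂ - t) * tailR P X₁ t
        = (cexp P {ω | t ≤ X₂ ω} X₂ - t) * tailR P X₂ t := by
      rw [← e1, ← e2, hFeq]
    exact mul_left_cancel₀ hc hmm
  -- all tail probabilities agree
  have key : ∀ t, P {ω | t ≤ X₁ ω} = P {ω | t ≤ X₂ ω} := by
    intro t
    by_cases h1 : 0 < P {ω | t ≤ X₁ ω}
    · have h1' : 0 < tailR P X₁ t := (tailR_pos_iff t).2 h1
      by_cases hF : 0 < Fex P X₁ t
      · have := main2 t h1' hF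
        unfold tailR at this
        exact (ENNReal.toReal_eq_toReal_iff' (measure_ne_top _ _) (measure_ne_top _ _)).1 this
      · apply tailR_left_eq hX₁ hX₂ t
        intro s hs
        have hm1 : s < (s + t) / 2 := by linarith
        have hm2 : (s + t) / 2 < t := by linarith
        have hpos_s : 0 < tailR P X₁ s := lt_of_lt_of_le h1' (tailR_antitone hs.le)
        have hFs : 0 < Fex P X₁ s := by
          have hle := le_Fex_sub hX₁ hX₁i hm1
          have h3 : tailR P X₁ t ≤ tailS P X₁ ((s + t) / 2) := tailR_le_tailS hm2
          have h4 := Fex_nonneg hX₁i ((s + t) / 2)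
          nlinarith
        have := main2 s hpos_s hFs
        unfold tailR at this
        exact (ENNReal.toReal_eq_toReal_iff' (measure_ne_top _ _) (measure_ne_top _ _)).1 this
    · have h2 : ¬ 0 < P {ω | t ≤ X₂ ω} := fun h => h1 ((hpos t).2 h)
      rw [not_lt, nonpos_iff_eq_zero] at h1 h2
      rw [h1, h2]
  -- conclude via agreement on Ici
  have hfin1 : IsProbabilityMeasure (P.map X₁) := Measure.isProbabilityMeasure_map hX₁.aemeasurable
  have hfin2 : IsProbabilityMeasure (P.map X₂) := Measure.isProbabilityMeasure_map hX₂.aemeasurable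
  apply Measure.ext_of_Ici
  intro a
  rw [Measure.map_apply hX₁ measurableSet_Ici, Measure.map_apply hX₂ measurableSet_Ici]
  exact key a
end

section
/- Let P₁ and P₂ be Borel probability measures on ℝ. Suppose that every bounded closed interval [a,b] (a < b) with P₂([a,b]) > 0 also satisfies P₁([a,b]) > 0, and that for every such interval, (∫_{[a,b]} x dP₂(x))/P₂([a,b]) = (∫_{[a,b]} x dP₁(x))/P₁([a,b]). Then P₁([a,b]) > 0 if and only if P₂([a,b]) > 0 for every bounded interval [a,b] with a < b, and P₁ = P₂ as Borel measures. -/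
open MeasureTheory Set Filter ProbabilityTheory
open scoped Topology ENNReal
set_option linter.unusedSectionVars false
set_option linter.unusedVariables false
set_option linter.unusedTactic false
set_option maxHeartbeats 1000000

namespace Stmt2Aux

noncomputable def uu (P : Measure ℝ) (B t : ℝ) : ℝ := cdf P B - cdf P t

noncomputable def VV (P : Measure ℝ) (B t : ℝ) : ℝ := ∫ s in t..B, uu P B s

noncomputable def nm (P : Measure ℝ) : Measure ℝ := Measure.map (fun x : ℝ => -x) P

instance (P : Measure ℝ) [IsProbabilityMeasure P] : IsProbabilityMeasure (nm P) :=
  Measure.isProbabilityMeasure_map measurable_neg.aemeasurable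

variable {P P₁ P₂ : Measure ℝ} [IsProbabilityMeasure P] [IsProbabilityMeasure P₁]
  [IsProbabilityMeasure P₂] {B s t : ℝ}

lemma measure_Ioc_toReal (P : Measure ℝ) [IsProbabilityMeasure P] (h : s ≤ t) :
    (P (Ioc s t)).toReal = cdf P t - cdf P s := by
  rw [cdf_eq_real, cdf_eq_real, measureReal_def, measureReal_def, ← Iic_sdiff_Iic,
    measure_diff (Set.Iic_subset_Iic.2 h) nullMeasurableSet_Iic (measure_ne_top P _),
    ENNReal.toReal_sub_of_le (measure_mono (Set.Iic_subset_Iic.2 h)) (measure_ne_top P _)]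

lemma uu_sub (P : Measure ℝ) [IsProbabilityMeasure P] (B : ℝ) (h : s ≤ t) :
    uu P B s - uu P B t = (P (Ioc s t)).toReal := by
  rw [measure_Ioc_toReal P h]; unfold uu; ring

lemma uu_eq (P : Measure ℝ) [IsProbabilityMeasure P] (h : t ≤ B) :
    uu P B t = (P (Ioc t B)).toReal := by
  rw [measure_Ioc_toReal P h]; rfl

lemma uu_antitone : Antitone (uu P B) := fun _ _ h => by
  unfold uu; exact sub_le_sub_left ((cdf P).mono h) _

lemma uu_nonneg (h : t ≤ B) : 0 ≤ uu P B t := sub_nonneg.2 ((cdf P).mono h)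

lemma uu_cwa (P : Measure ℝ) (B t : ℝ) : ContinuousWithinAt (uu P B) (Ici t) t :=
  continuousWithinAt_const.sub ((cdf P).right_continuous t)

lemma uu_meas (P : Measure ℝ) (B : ℝ) : Measurable (uu P B) :=
  measurable_const.sub (cdf P).mono.measurable

lemma uu_ii (P : Measure ℝ) [IsProbabilityMeasure P] (B a b : ℝ) : IntervalIntegrable (uu P B) volume a b :=
  (uu_antitone (P := P) (B := B)).intervalIntegrable

lemma VV_cont (P : Measure ℝ) [IsProbabilityMeasure P] (B : ℝ) : Continuous (VV P B) := by
  have h : Continuous fun t => ∫ s in B..t, uu P B s :=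
    intervalIntegral.continuous_primitive (fun a b => uu_ii P B a b) B
  have : VV P B = fun t => -∫ s in B..t, uu P B s := by
    funext t; rw [VV, intervalIntegral.integral_symm]
  rw [this]; exact h.neg

lemma VV_deriv (P : Measure ℝ) [IsProbabilityMeasure P] (B t : ℝ) :
    HasDerivWithinAt (VV P B) (-(uu P B t)) (Ici t) t := by
  exact intervalIntegral.integral_hasDerivWithinAt_left (t := Ioi t) (uu_ii P B t B)
    (uu_meas P B).stronglyMeasurable.stronglyMeasurableAtFilter
    ((uu_cwa P B t).mono Ioi_subset_Ici_self)

lemma VV_nonneg (h : t ≤ B) : 0 ≤ VV P B t :=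
  intervalIntegral.integral_nonneg h (fun x hx => uu_nonneg hx.2)

lemma VV_split (h1 : s ≤ t) : VV P B s = (∫ x in s..t, uu P B x) + VV P B t :=
  (intervalIntegral.integral_add_adjacent_intervals (uu_ii P B s t) (uu_ii P B t B)).symm

lemma VV_mono (h1 : s ≤ t) (h2 : t ≤ B) : VV P B t ≤ VV P B s := by
  rw [VV_split (P := P) (B := B) h1]
  have : 0 ≤ ∫ x in s..t, uu P B x :=
    intervalIntegral.integral_nonneg h1 (fun x hx => uu_nonneg (hx.2.trans h2))
  linarith

lemma integral_Icc (P : Measure ℝ) [IsProbabilityMeasure P] (h : t ≤ B) :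
    ∫ x in Icc t B, x ∂P = t * (P (Icc t B)).toReal + VV P B t := by
  have hint : IntegrableOn (fun x : ℝ => x) (Icc t B) P :=
    continuous_id.continuousOn.integrableOn_compact isCompact_Icc
  have hint' : IntegrableOn (fun x : ℝ => x - t) (Icc t B) P := by
    simpa [Pi.sub_def] using hint.sub (integrableOn_const)
  have h1 : ∫ x in Icc t B, x ∂P = (∫ x in Icc t B, (x - t) ∂P) + t * (P (Icc t B)).toReal := by
    have : ∫ x in Icc t B, (x - t) ∂P
        = (∫ x in Icc t B, x ∂P) - ∫ x in Icc t B, (t : ℝ) ∂P :=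
      integral_sub hint (integrableOn_const)
    rw [this, setIntegral_const]
    simp [smul_eq_mul, measureReal_def]; ring
  -- layer cake
  have hnn : 0 ≤ᵐ[P.restrict (Icc t B)] fun x : ℝ => x - t :=
    (ae_restrict_iff' measurableSet_Icc).2 (ae_of_all _ fun x hx => sub_nonneg.2 hx.1)
  have hlc := hint'.integral_eq_integral_meas_lt hnn
  have hmeas : ∀ s : ℝ, s ∈ Ioi (0:ℝ) →
      (P.restrict (Icc t B) {a : ℝ | s < a - t}).toReal = (P (Ioc (t + s) B)).toReal := by
    intro s hs
    have hset : {a : ℝ | s < a - t} = Ioi (t + s) := by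
      ext a; simp [mem_Ioi, lt_sub_iff_add_lt']
    have hset2 : Ioi (t + s) ∩ Icc t B = Ioc (t + s) B := by
      ext a
      simp only [mem_inter_iff, mem_Ioi, mem_Icc, mem_Ioc]
      constructor
      · rintro ⟨h1, h2, h3⟩; exact ⟨h1, h3⟩
      · rintro ⟨h1, h2⟩
        exact ⟨h1, le_trans (le_add_of_nonneg_right (le_of_lt hs)) h1.le, h2⟩
    rw [Measure.restrict_apply' measurableSet_Icc, hset, hset2]
  have h2 : ∫ x in Icc t B, (x - t) ∂P = ∫ s in Ioi (0:ℝ), (P (Ioc (t + s) B)).toReal := by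
    rw [hlc]
    exact setIntegral_congr_fun measurableSet_Ioi hmeas
  -- now compute the rhs
  have h3 : ∫ s in Ioi (0:ℝ), (P (Ioc (t + s) B)).toReal
      = ∫ s in Ioc (0:ℝ) (B - t), (P (Ioc (t + s) B)).toReal := by
    rw [← Ioc_union_Ioi_eq_Ioi (sub_nonneg.2 h)]
    exact integral_union_eq_left_of_forall measurableSet_Ioi (fun s hs => by
      have : Ioc (t + s) B = ∅ := Ioc_eq_empty (by simp only [mem_Ioi] at hs; linarith)
      simp [this])
  have h4 : ∫ s in Ioc (0:ℝ) (B - t), (P (Ioc (t + s) B)).toReal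
      = ∫ s in (0:ℝ)..(B - t), (P (Ioc (t + s) B)).toReal := by
    rw [intervalIntegral.integral_of_le (sub_nonneg.2 h)]
  have h5 : ∀ s : ℝ, (P (Ioc (t + s) B)).toReal = if t + s ≤ B then uu P B (t + s) else 0 := by
    intro s
    split_ifs with hc
    · exact (uu_eq P hc).symm
    · rw [Ioc_eq_empty (by linarith)]; simp
  have h6 : ∫ s in (0:ℝ)..(B - t), (P (Ioc (t + s) B)).toReal = VV P B t := by
    have : ∫ s in (0:ℝ)..(B - t), (P (Ioc (t + s) B)).toReal
        = ∫ s in (0:ℝ)..(B - t), uu P B (t + s) := by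
      apply intervalIntegral.integral_congr
      intro x hx
      rw [uIcc_of_le (sub_nonneg.2 h)] at hx
      show (P (Ioc (t + x) B)).toReal = uu P B (t + x)
      rw [h5, if_pos (by linarith [hx.2])]
    rw [this, intervalIntegral.integral_comp_add_left (fun y => uu P B y) t]
    simp only [add_zero, add_sub_cancel]
    rfl
  rw [h1, h2, h3, h4, h6]; ring

lemma VV_pos (P : Measure ℝ) [IsProbabilityMeasure P] (hbB : t < B) (hP : 0 < P (Ioc t B)) :
    0 < VV P B t := by
  have hub : 0 < uu P B t := by
    rw [uu_eq P hbB.le]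
    exact ENNReal.toReal_pos hP.ne' (measure_ne_top _ _)
  have hev : ∀ᶠ y in 𝓝[Ici t] t, uu P B t / 2 < uu P B y :=
    (uu_cwa P B t).eventually (eventually_gt_nhds (by linarith))
  rcases mem_nhdsGE_iff_exists_Icc_subset.1 hev with ⟨b', hb', hsub⟩
  set c := min b' B with hc
  have htc : t < c := lt_min hb' hbB
  have hcB : c ≤ B := min_le_right _ _
  have hlow : ∀ x ∈ Icc t c, uu P B t / 2 ≤ uu P B x := fun x hx =>
    (hsub ⟨hx.1, le_trans hx.2 (min_le_left _ _)⟩).le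
  have h1 : (c - t) * uu P B t / 2 ≤ ∫ x in t..c, uu P B x := by
    have := intervalIntegral.integral_mono_on (μ := volume) (f := fun _ => uu P B t / 2)
      (g := uu P B) htc.le (intervalIntegrable_const) (uu_ii P B t c) hlow
    simpa using this
  have h2 : 0 ≤ VV P B c := VV_nonneg hcB
  have := VV_split (P := P) (B := B) htc.le
  nlinarith [this, h1, h2]

lemma exists_Ioc_pos (P : Measure ℝ) (h : 0 < P (Ioi t)) :
    ∃ B, t < B ∧ 0 < P (Ioc t B) := by
  by_contra hcon
  push_neg at hcon
  have hnull : ∀ n : ℕ, P (Ioc t (t + (n + 1))) = 0 := by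
    intro n
    have hlt : t < t + ((n : ℝ) + 1) := by have := Nat.cast_nonneg (α := ℝ) n; linarith
    exact le_antisymm (hcon _ hlt) zero_le
  have hsub : Ioi t ⊆ ⋃ n : ℕ, Ioc t (t + (n + 1)) := by
    intro x hx
    rcases exists_nat_gt (x - t) with ⟨n, hn⟩
    exact mem_iUnion.2 ⟨n, hx, by push_cast; linarith⟩
  exact absurd (measure_mono_null hsub (measure_iUnion_null hnull)) h.ne'

lemma exists_base (P : Measure ℝ) [IsProbabilityMeasure P] :
    ∃ n : ℕ, 0 < P (Ioc (-(n + 1) : ℝ) (n + 1)) := by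
  by_contra hcon
  push_neg at hcon
  have hnull : ∀ n : ℕ, P (Ioc (-(n + 1) : ℝ) (n + 1)) = 0 := fun n =>
    le_antisymm (hcon n) zero_le
  have hsub : (univ : Set ℝ) ⊆ ⋃ n : ℕ, Ioc (-(n + 1) : ℝ) (n + 1) := by
    intro x _
    rcases exists_nat_gt |x| with ⟨n, hn⟩
    rcases abs_lt.1 hn with ⟨h1, h2⟩
    exact mem_iUnion.2 ⟨n, by constructor <;> push_cast <;> linarith⟩
  have : P univ = 0 := measure_mono_null hsub (measure_iUnion_null hnull)
  simp [measure_univ] at this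

lemma nm_Icc (P : Measure ℝ) (a b : ℝ) : nm P (Icc a b) = P (Icc (-b) (-a)) := by
  rw [nm, Measure.map_apply measurable_neg measurableSet_Icc]
  congr 1
  ext x
  simp only [mem_preimage, mem_Icc]
  constructor <;> (intro h; constructor <;> linarith [h.1, h.2])

lemma nm_Ioc (P : Measure ℝ) (a b : ℝ) : nm P (Ioc a b) = P (Ico (-b) (-a)) := by
  rw [nm, Measure.map_apply measurable_neg measurableSet_Ioc]
  congr 1
  ext x
  simp only [mem_preimage, mem_Ioc, mem_Ico]
  constructor <;> (intro h; constructor <;> linarith [h.1, h.2])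

lemma nm_Ioi (P : Measure ℝ) (a : ℝ) : nm P (Ioi a) = P (Iio (-a)) := by
  rw [nm, Measure.map_apply measurable_neg measurableSet_Ioi]
  congr 1
  ext x
  simp only [mem_preimage, mem_Ioi, mem_Iio]
  constructor <;> (intro h; linarith)

lemma nm_integral_Icc (P : Measure ℝ) [IsProbabilityMeasure P] (a b : ℝ) :
    ∫ x in Icc a b, x ∂(nm P) = -∫ x in Icc (-b) (-a), x ∂P := by
  have hmap := setIntegral_map (μ := P) (g := fun x : ℝ => -x) (f := fun y : ℝ => y)
    (s := Icc a b) measurableSet_Icc aestronglyMeasurable_id measurable_neg.aemeasurable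
  have hpre : (fun x : ℝ => -x) ⁻¹' Icc a b = Icc (-b) (-a) := by
    ext x
    simp only [mem_preimage, mem_Icc]
    constructor <;> (intro h; constructor <;> linarith [h.1, h.2])
  rw [nm, hmap, hpre, ← integral_neg]

lemma nm_nm (P : Measure ℝ) [IsProbabilityMeasure P] : nm (nm P) = P := by
  rw [nm, nm, Measure.map_map measurable_neg measurable_neg]
  have : ((fun x : ℝ => -x) ∘ fun x : ℝ => -x) = id := by
    funext x; simp
  rw [this, Measure.map_id]

lemma Icc_lim (Q : Measure ℝ) [IsProbabilityMeasure Q] (s t : ℝ) :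
    Tendsto (fun n : ℕ => (Q (Ioc (s - 1 / (n + 1)) t)).toReal) atTop
      (𝓝 ((Q (Icc s t)).toReal)) := by
  have hinter : ⋂ n : ℕ, Ioc (s - 1 / ((n : ℝ) + 1)) t = Icc s t := by
    ext x
    simp only [mem_iInter, mem_Ioc, mem_Icc]
    constructor
    · intro h
      constructor
      · by_contra hxs
        push_neg at hxs
        rcases exists_nat_one_div_lt (sub_pos.2 hxs) with ⟨n, hn⟩
        have := (h n).1
        linarith
      · exact (h 0).2
    · intro h n
      have h1 : 0 < 1 / ((n : ℝ) + 1) := by positivity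
      exact ⟨by linarith [h.1], h.2⟩
  have hanti : Antitone fun n : ℕ => Ioc (s - 1 / ((n : ℝ) + 1)) t := by
    intro n m hnm
    apply Ioc_subset_Ioc_left
    have : (1 : ℝ) / (m + 1) ≤ 1 / (n + 1) := by
      apply one_div_le_one_div_of_le (by positivity)
      exact_mod_cast by linarith [(Nat.cast_le (α := ℝ)).2 hnm]
    linarith
  have := tendsto_measure_iInter_atTop (μ := Q)
    (fun n => (measurableSet_Ioc).nullMeasurableSet) hanti ⟨0, measure_ne_top _ _⟩
  rw [hinter] at this
  exact (ENNReal.tendsto_toReal (measure_ne_top _ _)).comp this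

lemma Ico_lim (Q : Measure ℝ) [IsProbabilityMeasure Q] (x y : ℝ) :
    Tendsto (fun n : ℕ => (Q (Ico x (y + 1 / (n + 1)))).toReal) atTop
      (𝓝 ((Q (Icc x y)).toReal)) := by
  have hinter : ⋂ n : ℕ, Ico x (y + 1 / ((n : ℝ) + 1)) = Icc x y := by
    ext z
    simp only [mem_iInter, mem_Ico, mem_Icc]
    constructor
    · intro h
      refine ⟨(h 0).1, ?_⟩
      by_contra hzy
      push_neg at hzy
      rcases exists_nat_one_div_lt (sub_pos.2 hzy) with ⟨n, hn⟩
      linarith [(h n).2]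
    · intro h n
      have h1 : 0 < 1 / ((n : ℝ) + 1) := by positivity
      exact ⟨h.1, by linarith [h.2]⟩
  have hanti : Antitone fun n : ℕ => Ico x (y + 1 / ((n : ℝ) + 1)) := by
    intro n m hnm
    apply Ico_subset_Ico_right
    have : (1 : ℝ) / (m + 1) ≤ 1 / (n + 1) := by
      apply one_div_le_one_div_of_le (by positivity)
      have : (n : ℝ) ≤ (m : ℝ) := Nat.cast_le.2 hnm
      linarith
    linarith
  have := tendsto_measure_iInter_atTop (μ := Q)
    (fun n => measurableSet_Ico.nullMeasurableSet) hanti ⟨0, measure_ne_top _ _⟩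
  rw [hinter] at this
  exact (ENNReal.tendsto_toReal (measure_ne_top _ _)).comp this

lemma Ioc_lim (Q : Measure ℝ) [IsProbabilityMeasure Q] (a b : ℝ) :
    Tendsto (fun n : ℕ => (Q (Icc (a + 1 / (n + 1)) b)).toReal) atTop
      (𝓝 ((Q (Ioc a b)).toReal)) := by
  have hunion : ⋃ n : ℕ, Icc (a + 1 / ((n : ℝ) + 1)) b = Ioc a b := by
    ext z
    simp only [mem_iUnion, mem_Icc, mem_Ioc]
    constructor
    · rintro ⟨n, h1, h2⟩
      have : 0 < 1 / ((n : ℝ) + 1) := by positivity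
      exact ⟨by linarith, h2⟩
    · rintro ⟨h1, h2⟩
      rcases exists_nat_one_div_lt (sub_pos.2 h1) with ⟨n, hn⟩
      exact ⟨n, by linarith, h2⟩
  have hmono : Monotone fun n : ℕ => Icc (a + 1 / ((n : ℝ) + 1)) b := by
    intro n m hnm
    apply Icc_subset_Icc_left
    have : (1 : ℝ) / (m + 1) ≤ 1 / (n + 1) := by
      apply one_div_le_one_div_of_le (by positivity)
      have : (n : ℝ) ≤ (m : ℝ) := Nat.cast_le.2 hnm
      linarith
    linarith
  have := tendsto_measure_iUnion_atTop (μ := Q) hmono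
  rw [hunion] at this
  exact (ENNReal.tendsto_toReal (measure_ne_top _ _)).comp this

lemma univ_lim (Q : Measure ℝ) [IsProbabilityMeasure Q] :
    Tendsto (fun n : ℕ => (Q (Ioc (-(n + 1) : ℝ) (n + 1))).toReal) atTop (𝓝 1) := by
  have hunion : ⋃ n : ℕ, Ioc (-(n + 1) : ℝ) (n + 1) = univ := by
    ext x
    simp only [mem_iUnion, mem_Ioc, mem_univ, iff_true]
    rcases exists_nat_gt |x| with ⟨n, hn⟩
    rcases abs_lt.1 hn with ⟨h1, h2⟩
    exact ⟨n, by linarith, by linarith⟩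
  have hmono : Monotone fun n : ℕ => Ioc (-(n + 1) : ℝ) ((n : ℝ) + 1) := by
    intro n m hnm
    have : (n : ℝ) ≤ (m : ℝ) := Nat.cast_le.2 hnm
    exact Ioc_subset_Ioc (by linarith) (by linarith)
  have h := tendsto_measure_iUnion_atTop (μ := Q) hmono
  rw [hunion, measure_univ] at h
  have := (ENNReal.tendsto_toReal (by simp : (1 : ℝ≥0∞) ≠ ⊤)).comp h
  simpa [Function.comp_def] using this

lemma eq_of_prop (c : ℝ)
    (hprop : ∀ a b : ℝ, a ≤ b → (P₁ (Ioc a b)).toReal = c * (P₂ (Ioc a b)).toReal) :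
    P₁ = P₂ := by
  have hc : (1 : ℝ) = c * 1 := by
    refine tendsto_nhds_unique ((univ_lim P₁).congr' ?_) ((univ_lim P₂).const_mul c)
    exact Eventually.of_forall fun n => hprop _ _ (by have := Nat.cast_nonneg (α := ℝ) n; linarith)
  have hc1 : c = 1 := by linarith
  refine Measure.ext_of_Ioc P₁ P₂ fun a b hab => ?_
  have := hprop a b hab.le
  rw [hc1, one_mul] at this
  exact (ENNReal.toReal_eq_toReal_iff' (measure_ne_top _ _) (measure_ne_top _ _)).1 this

section Pair

variable (hpos : ∀ a b : ℝ, a < b → 0 < P₂ (Icc a b) → 0 < P₁ (Icc a b))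
  (heq : ∀ a b : ℝ, a < b → 0 < P₂ (Icc a b) →
      (∫ x in Icc a b, x ∂P₂) / (P₂ (Icc a b)).toReal
        = (∫ x in Icc a b, x ∂P₁) / (P₁ (Icc a b)).toReal)

include hpos heq

lemma Grel (hsB : s < B) :
    VV P₂ B s * (P₁ (Icc s B)).toReal = VV P₁ B s * (P₂ (Icc s B)).toReal := by
  by_cases h2 : P₂ (Icc s B) = 0
  · have hV : VV P₂ B s = 0 := by
      have : ∀ x ∈ uIcc s B, uu P₂ B x = 0 := by
        intro x hx
        rw [uIcc_of_le hsB.le] at hx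
        rw [uu_eq P₂ hx.2]
        have : P₂ (Ioc x B) = 0 :=
          measure_mono_null (Ioc_subset_Icc_self.trans (Icc_subset_Icc_left hx.1)) h2
        simp [this]
      have : VV P₂ B s = ∫ x in s..B, (0:ℝ) := intervalIntegral.integral_congr this
      simpa using this
    rw [hV, h2]; simp
  · have h2p : 0 < P₂ (Icc s B) := pos_iff_ne_zero.2 h2
    have h1p : 0 < P₁ (Icc s B) := hpos s B hsB h2p
    have hw2 : 0 < (P₂ (Icc s B)).toReal := ENNReal.toReal_pos h2 (measure_ne_top _ _)
    have hw1 : 0 < (P₁ (Icc s B)).toReal :=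
      ENNReal.toReal_pos (pos_iff_ne_zero.1 h1p) (measure_ne_top _ _)
    have he := heq s B hsB h2p
    rw [integral_Icc P₁ hsB.le, integral_Icc P₂ hsB.le] at he
    have h' := div_eq_div_iff hw2.ne' hw1.ne' |>.1 he
    linear_combination h'

lemma urel (htB : t ≤ B) :
    VV P₂ B t * uu P₁ B t = VV P₁ B t * uu P₂ B t := by
  rcases eq_or_lt_of_le htB with rfl | htB'
  · have : VV P₂ t t = 0 := by simp [VV]
    have h2 : VV P₁ t t = 0 := by simp [VV]
    rw [this, h2]; ring
  -- sequence decreasing to t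
  set q : ℕ → ℝ := fun n => t + (B - t) / (n + 2) with hq
  have hqt : ∀ n, t < q n := fun n => by
    have : (0:ℝ) < (B - t) / (n + 2) := div_pos (by linarith) (by positivity)
    simp [hq]; linarith
  have hqB : ∀ n, q n < B := by
    intro n
    have h1 : (B - t) / (n + 2) < B - t := by
      apply div_lt_self (by linarith)
      have : (0:ℝ) ≤ n := Nat.cast_nonneg n
      linarith
    simp [hq]; linarith
  have hqanti : ∀ n, q (n + 1) < q n := by
    intro n
    have : (B - t) / (n + 1 + 2) < (B - t) / (n + 2) := by
      apply div_lt_div_of_pos_left (by linarith) (by positivity) (by linarith)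
    simp only [hq]; push_cast; linarith
  have hqlim : Tendsto q atTop (𝓝 t) := by
    have h0 : Tendsto (fun n : ℕ => (B - t) / (n + 2)) atTop (𝓝 0) := by
      apply Tendsto.div_atTop (tendsto_const_nhds)
      exact tendsto_atTop_add_const_right _ 2 (tendsto_natCast_atTop_atTop)
    simpa using (tendsto_const_nhds (x := t)).add h0
  have hqlim' : Tendsto q atTop (𝓝[Ici t] t) :=
    tendsto_nhdsWithin_of_tendsto_nhds_of_eventually_within _ hqlim
      (Eventually.of_forall fun n => (hqt n).le)
  -- w tendsto u
  have wlim : ∀ (Q : Measure ℝ) [IsProbabilityMeasure Q],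
      Tendsto (fun n => (Q (Icc (q n) B)).toReal) atTop (𝓝 (uu Q B t)) := by
    intro Q hQ
    have hu : Tendsto (fun n => uu Q B (q n)) atTop (𝓝 (uu Q B t)) :=
      ((uu_cwa Q B t).tendsto).comp hqlim'
    have hu' : Tendsto (fun n => uu Q B (q (n + 1))) atTop (𝓝 (uu Q B t)) :=
      hu.comp (tendsto_add_atTop_nat 1)
    apply tendsto_of_tendsto_of_tendsto_of_le_of_le hu hu'
    · intro n
      show uu Q B (q n) ≤ (Q (Icc (q n) B)).toReal
      rw [uu_eq Q (hqB n).le]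
      exact ENNReal.toReal_mono (measure_ne_top _ _) (measure_mono Ioc_subset_Icc_self)
    · intro n
      show (Q (Icc (q n) B)).toReal ≤ uu Q B (q (n + 1))
      rw [uu_eq Q (hqB (n + 1)).le]
      refine ENNReal.toReal_mono (measure_ne_top _ _) (measure_mono ?_)
      intro y hy
      exact ⟨lt_of_lt_of_le (hqanti n) hy.1, hy.2⟩
  have V2lim : Tendsto (fun n => VV P₂ B (q n)) atTop (𝓝 (VV P₂ B t)) :=
    ((VV_cont P₂ B).tendsto t).comp hqlim
  have V1lim : Tendsto (fun n => VV P₁ B (q n)) atTop (𝓝 (VV P₁ B t)) :=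
    ((VV_cont P₁ B).tendsto t).comp hqlim
  have lhs : Tendsto (fun n => VV P₂ B (q n) * (P₁ (Icc (q n) B)).toReal) atTop
      (𝓝 (VV P₂ B t * uu P₁ B t)) := V2lim.mul (wlim P₁)
  have rhs : Tendsto (fun n => VV P₁ B (q n) * (P₂ (Icc (q n) B)).toReal) atTop
      (𝓝 (VV P₁ B t * uu P₂ B t)) := V1lim.mul (wlim P₂)
  have heqn : ∀ n, VV P₂ B (q n) * (P₁ (Icc (q n) B)).toReal
      = VV P₁ B (q n) * (P₂ (Icc (q n) B)).toReal := fun n => Grel hpos heq (hqB n)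
  exact tendsto_nhds_unique (lhs.congr fun n => (heqn n)) rhs

lemma VVconst (hab : s ≤ t) (htB : t ≤ B) (hV : 0 < VV P₂ B t) :
    VV P₁ B s * VV P₂ B t = VV P₂ B s * VV P₁ B t := by
  have hV2pos : ∀ x ∈ Icc s t, 0 < VV P₂ B x :=
    fun x hx => lt_of_lt_of_le hV (VV_mono hx.2 htB)
  set R : ℝ → ℝ := fun x => VV P₁ B x / VV P₂ B x with hR
  have hcont : ContinuousOn R (Icc s t) :=
    ((VV_cont P₁ B).continuousOn.div (VV_cont P₂ B).continuousOn
      (fun x hx => (hV2pos x hx).ne'))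
  have hderiv : ∀ x ∈ Ico s t, HasDerivWithinAt R 0 (Ici x) x := by
    intro x hx
    have hx' : x ∈ Icc s t := ⟨hx.1, hx.2.le⟩
    have hd := (VV_deriv P₁ B x).div (VV_deriv P₂ B x) (hV2pos x hx').ne'
    have hnum : -uu P₁ B x * VV P₂ B x - VV P₁ B x * -uu P₂ B x = 0 := by
      linear_combination - urel hpos heq (le_trans hx.2.le htB)
    rw [hnum, zero_div] at hd
    exact hd
  have hconst := constant_of_has_deriv_right_zero hcont hderiv t (right_mem_Icc.2 hab)
  have hs' : 0 < VV P₂ B s := hV2pos s (left_mem_Icc.2 hab)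
  simp only [hR] at hconst
  have h' := (div_eq_div_iff hV.ne' hs'.ne').1 hconst
  linarith

lemma C2 (htb : t ≤ s) (hsB : s ≤ B) (hV : 0 < VV P₂ B s) :
    uu P₁ B t * VV P₂ B s = uu P₂ B t * VV P₁ B s := by
  have h1 := urel hpos heq (le_trans htb hsB)
  have h2 := VVconst hpos heq htb hsB hV
  have ht : 0 < VV P₂ B t := lt_of_lt_of_le hV (VV_mono htb hsB)
  have key : VV P₂ B t * (uu P₁ B t * VV P₂ B s) = VV P₂ B t * (uu P₂ B t * VV P₁ B s) := by
    linear_combination VV P₂ B s * h1 + uu P₂ B t * h2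
  exact mul_left_cancel₀ ht.ne' key

lemma prop_right (hbB : t < B) (hP : 0 < P₂ (Ioc t B)) :
    ∃ c : ℝ, 0 ≤ c ∧ ∀ a b : ℝ, a ≤ b → b ≤ t →
      (P₁ (Ioc a b)).toReal = c * (P₂ (Ioc a b)).toReal := by
  have hV2 : 0 < VV P₂ B t := VV_pos P₂ hbB hP
  refine ⟨VV P₁ B t / VV P₂ B t, div_nonneg (VV_nonneg hbB.le) (VV_nonneg hbB.le), ?_⟩
  have key : ∀ x : ℝ, x ≤ t → uu P₁ B x = VV P₁ B t / VV P₂ B t * uu P₂ B x := by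
    intro x hx
    have := C2 (P₁ := P₁) (P₂ := P₂) hpos heq hx hbB.le hV2
    field_simp
    linarith [this]
  intro a b hab hbt
  rw [← uu_sub P₁ B hab, ← uu_sub P₂ B hab, key a (le_trans hab hbt), key b hbt]
  ring

lemma nm_hpos : ∀ a b : ℝ, a < b → 0 < nm P₂ (Icc a b) → 0 < nm P₁ (Icc a b) := by
  intro a b hab h
  rw [nm_Icc] at h ⊢
  exact hpos _ _ (by linarith) h

include heq

lemma nm_heq : ∀ a b : ℝ, a < b → 0 < nm P₂ (Icc a b) →
    (∫ x in Icc a b, x ∂(nm P₂)) / (nm P₂ (Icc a b)).toReal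
      = (∫ x in Icc a b, x ∂(nm P₁)) / (nm P₁ (Icc a b)).toReal := by
  intro a b hab h
  rw [nm_Icc] at h
  rw [nm_Icc, nm_Icc, nm_integral_Icc, nm_integral_Icc]
  rw [neg_div, neg_div, heq _ _ (by linarith) h]

lemma L_right_Icc (hst : s ≤ t) (hIoi : 0 < P₂ (Ioi t)) (h0 : P₂ (Icc s t) = 0) :
    P₁ (Icc s t) = 0 := by
  rcases exists_Ioc_pos P₂ hIoi with ⟨B, htB, hP⟩
  rcases prop_right hpos heq htB hP with ⟨c, hc, hprop⟩
  have hrel : ∀ n : ℕ, (P₁ (Ioc (s - 1 / (n + 1)) t)).toReal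
      = c * (P₂ (Ioc (s - 1 / (n + 1)) t)).toReal := by
    intro n
    apply hprop
    · have : 0 < 1 / ((n : ℝ) + 1) := by positivity
      linarith
    · exact le_refl t
  have l1 := Icc_lim P₁ s t
  have l2 := (Icc_lim P₂ s t).const_mul c
  have : (P₁ (Icc s t)).toReal = c * (P₂ (Icc s t)).toReal :=
    tendsto_nhds_unique (l1.congr fun n => hrel n) l2
  rw [h0] at this
  simp at this
  exact (ENNReal.toReal_eq_zero_iff _).1 this |>.resolve_right (measure_ne_top _ _)

lemma L_left_Icc (hst : s ≤ t) (hIio : 0 < P₂ (Iio s)) (h0 : P₂ (Icc s t) = 0) :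
    P₁ (Icc s t) = 0 := by
  have key := L_right_Icc (P₁ := nm P₁) (P₂ := nm P₂) (nm_hpos hpos heq) (nm_heq hpos heq)
    (s := -t) (t := -s) (by linarith)
    (by rw [nm_Ioi]; simpa using hIio)
    (by rw [nm_Icc]; simpa using h0)
  rw [nm_Icc] at key
  simpa using key

lemma L_Icc (hst : s ≤ t) (h0 : P₂ (Icc s t) = 0) : P₁ (Icc s t) = 0 := by
  by_cases h1 : P₂ (Ioi t) = 0
  · by_cases h2 : P₂ (Iio s) = 0
    · exfalso
      have hsub : (univ : Set ℝ) ⊆ Iio s ∪ (Icc s t ∪ Ioi t) := by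
        intro x _
        rcases lt_or_ge x s with h | h
        · exact Or.inl h
        rcases le_or_gt x t with h' | h'
        · exact Or.inr (Or.inl ⟨h, h'⟩)
        · exact Or.inr (Or.inr h')
      have hle : P₂ univ ≤ P₂ (Iio s) + (P₂ (Icc s t) + P₂ (Ioi t)) :=
        le_trans (measure_mono hsub) (le_trans (measure_union_le _ _)
          (add_le_add_right (measure_union_le _ _) _))
      rw [measure_univ, h1, h2, h0] at hle
      simp at hle
    · exact L_left_Icc hpos heq hst (pos_iff_ne_zero.2 h2) h0
  · exact L_right_Icc hpos heq hst (pos_iff_ne_zero.2 h1) h0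

lemma L_Ioc (hst : s ≤ t) (h0 : P₂ (Ioc s t) = 0) : P₁ (Ioc s t) = 0 := by
  have hsub : Ioc s t ⊆ ⋃ n : ℕ, Icc (s + 1 / (n + 1)) t := by
    intro x hx
    rcases exists_nat_one_div_lt (sub_pos.2 hx.1) with ⟨n, hn⟩
    exact mem_iUnion.2 ⟨n, by constructor <;> [linarith; exact hx.2]⟩
  refine measure_mono_null hsub (measure_iUnion_null fun n => ?_)
  by_cases hc : s + 1 / ((n : ℝ) + 1) ≤ t
  · apply L_Icc hpos heq hc
    apply measure_mono_null _ h0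
    intro y hy
    have : 0 < 1 / ((n : ℝ) + 1) := by positivity
    exact ⟨by linarith [hy.1], hy.2⟩
  · rw [Icc_eq_empty hc]; simp

lemma P1_Ioi_null (h : P₂ (Ioi t) = 0) : P₁ (Ioi t) = 0 := by
  have hsub : Ioi t ⊆ ⋃ n : ℕ, Ioc t (t + (n + 1)) := by
    intro x hx
    rcases exists_nat_gt (x - t) with ⟨n, hn⟩
    exact mem_iUnion.2 ⟨n, hx, by push_cast; linarith⟩
  refine measure_mono_null hsub (measure_iUnion_null fun n => ?_)
  apply L_Ioc hpos heq (by have := Nat.cast_nonneg (α := ℝ) n; linarith)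
  exact measure_mono_null (fun y hy => hy.1) h

lemma P1_Iio_null (h : P₂ (Iio s) = 0) : P₁ (Iio s) = 0 := by
  have hsub : Iio s ⊆ ⋃ n : ℕ, Ioc (s - (n + 1)) (s - 1 / (n + 1)) := by
    intro x hx
    rcases exists_nat_gt (s - x) with ⟨n₁, hn₁⟩
    rcases exists_nat_one_div_lt (sub_pos.2 (mem_Iio.1 hx)) with ⟨n₂, hn₂⟩
    refine mem_iUnion.2 ⟨max n₁ n₂, ?_, ?_⟩
    · have h1 : (n₁ : ℝ) ≤ ((max n₁ n₂ : ℕ) : ℝ) := Nat.cast_le.2 (le_max_left _ _)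
      linarith
    · have h2 : (1 : ℝ) / (max n₁ n₂ + 1) ≤ 1 / (n₂ + 1) := by
        apply one_div_le_one_div_of_le (by positivity)
        have : (n₂ : ℝ) ≤ ((max n₁ n₂ : ℕ) : ℝ) := Nat.cast_le.2 (le_max_right _ _)
        linarith
      linarith
  refine measure_mono_null hsub (measure_iUnion_null fun n => ?_)
  apply L_Ioc hpos heq
  · have h1 : 0 < 1 / ((n : ℝ) + 1) := by positivity
    have h2 : (1 : ℝ) / (n + 1) ≤ 1 := by
      apply div_le_one_of_le₀
      · linarith [Nat.cast_nonneg (α := ℝ) n]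
      · positivity
    linarith [Nat.cast_nonneg (α := ℝ) n]
  · apply measure_mono_null _ h
    intro y hy
    have h1 : 0 < 1 / ((n : ℝ) + 1) := by positivity
    exact lt_of_le_of_lt hy.2 (by linarith)

lemma prop_left (hbB : B < t) (hP : 0 < P₂ (Ico B t)) :
    ∃ c : ℝ, 0 ≤ c ∧ ∀ a b : ℝ, t ≤ a → a ≤ b →
      (P₁ (Ico a b)).toReal = c * (P₂ (Ico a b)).toReal := by
  obtain ⟨c, hc, hprop⟩ := prop_right (P₁ := nm P₁) (P₂ := nm P₂)
    (nm_hpos hpos heq) (nm_heq hpos heq) (t := -t) (B := -B) (by linarith)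
    (by rw [nm_Ioc]; simpa using hP)
  refine ⟨c, hc, ?_⟩
  intro a b ha hab
  have := hprop (-b) (-a) (by linarith) (by linarith)
  rw [nm_Ioc, nm_Ioc] at this
  simpa using this

lemma caseR (hR : ∀ b : ℝ, 0 < P₂ (Ioi b)) : P₁ = P₂ := by
  obtain ⟨n₀, hn₀⟩ := exists_base P₂
  set l : ℝ := -(n₀ + 1) with hl
  set r : ℝ := (n₀ : ℝ) + 1 with hr
  have hlr : l ≤ r := by
    have := Nat.cast_nonneg (α := ℝ) n₀
    rw [hl, hr]; linarith
  have hP2b : (P₂ (Ioc l r)).toReal ≠ 0 :=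
    (ENNReal.toReal_pos hn₀.ne' (measure_ne_top _ _)).ne'
  apply eq_of_prop ((P₁ (Ioc l r)).toReal / (P₂ (Ioc l r)).toReal)
  intro a b hab
  obtain ⟨B, hmB, hPB⟩ := exists_Ioc_pos P₂ (hR (max b r))
  obtain ⟨c₀, hc₀, hprop⟩ := prop_right hpos heq hmB hPB
  have hbb : (P₁ (Ioc l r)).toReal = c₀ * (P₂ (Ioc l r)).toReal :=
    hprop l r hlr (le_max_right _ _)
  have hc : (P₁ (Ioc l r)).toReal / (P₂ (Ioc l r)).toReal = c₀ := by
    rw [hbb]; field_simp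
  rw [hc]
  exact hprop a b hab (le_max_left _ _)

lemma case_bounded (hTex : ∃ b, P₂ (Ioi b) = 0) (hSex : ∃ a, P₂ (Iio a) = 0) :
    P₁ = P₂ := by
  obtain ⟨n₀, hn₀⟩ := exists_base P₂
  set T := sInf {b | P₂ (Ioi b) = 0} with hTdef
  set S := sSup {a | P₂ (Iio a) = 0} with hSdef
  have hTbdd : BddBelow {b | P₂ (Ioi b) = 0} := by
    refine ⟨-(n₀ + 1), fun b hb => ?_⟩
    by_contra hcon
    push_neg at hcon
    have hsub : Ioc (-(n₀ + 1) : ℝ) (n₀ + 1) ⊆ Ioi b :=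
      fun x hx => lt_trans hcon hx.1
    exact absurd (measure_mono_null hsub hb) hn₀.ne'
  have hSbdd : BddAbove {a | P₂ (Iio a) = 0} := by
    refine ⟨(n₀ : ℝ) + 1, fun a ha => ?_⟩
    by_contra hcon
    push_neg at hcon
    have hsub : Ioc (-(n₀ + 1) : ℝ) (n₀ + 1) ⊆ Iio a :=
      fun x hx => lt_of_le_of_lt hx.2 hcon
    exact absurd (measure_mono_null hsub ha) hn₀.ne'
  have hT0 : P₂ (Ioi T) = 0 := by
    have hsub : Ioi T ⊆ ⋃ n : ℕ, Ioi (T + 1 / (n + 1)) := by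
      intro x hx
      rcases exists_nat_one_div_lt (sub_pos.2 (mem_Ioi.1 hx)) with ⟨n, hn⟩
      exact mem_iUnion.2 ⟨n, by simp only [mem_Ioi]; linarith⟩
    refine measure_mono_null hsub (measure_iUnion_null fun n => ?_)
    have h1 : 0 < 1 / ((n : ℝ) + 1) := by positivity
    obtain ⟨b', hb', hlt⟩ := exists_lt_of_csInf_lt hTex (show T < T + 1 / (n + 1) by linarith)
    exact measure_mono_null (Ioi_subset_Ioi hlt.le) hb'
  have hS0 : P₂ (Iio S) = 0 := by
    have hsub : Iio S ⊆ ⋃ n : ℕ, Iio (S - 1 / (n + 1)) := by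
      intro x hx
      rcases exists_nat_one_div_lt (sub_pos.2 (mem_Iio.1 hx)) with ⟨n, hn⟩
      exact mem_iUnion.2 ⟨n, by simp only [mem_Iio]; linarith⟩
    refine measure_mono_null hsub (measure_iUnion_null fun n => ?_)
    have h1 : 0 < 1 / ((n : ℝ) + 1) := by positivity
    obtain ⟨a', ha', hlt⟩ := exists_lt_of_lt_csSup hSex (show S - 1 / (n + 1) < S by linarith)
    exact measure_mono_null (Iio_subset_Iio hlt.le) ha'
  have hTpos : ∀ x, x < T → 0 < P₂ (Ioi x) := by
    intro x hx
    refine pos_iff_ne_zero.2 fun h0 => absurd (csInf_le hTbdd h0) (not_le.2 hx)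
  have hSpos : ∀ x, S < x → 0 < P₂ (Iio x) := by
    intro x hx
    refine pos_iff_ne_zero.2 fun h0 => absurd (le_csSup hSbdd h0) (not_le.2 hx)
  have hST : S ≤ T := by
    by_contra hcon
    push_neg at hcon
    have hsub : (univ : Set ℝ) ⊆ Ioi T ∪ Iio S := by
      intro x _
      rcases lt_or_ge T x with h | h
      · exact Or.inl h
      · exact Or.inr (lt_of_le_of_lt h hcon)
    have : P₂ univ ≤ P₂ (Ioi T) + P₂ (Iio S) :=
      le_trans (measure_mono hsub) (measure_union_le _ _)
    rw [measure_univ, hT0, hS0] at this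
    simp at this
  have hIoi1 : P₁ (Ioi T) = 0 := P1_Ioi_null hpos heq hT0
  have hIio1 : P₁ (Iio S) = 0 := P1_Iio_null hpos heq hS0
  rcases eq_or_lt_of_le hST with hEq | hSlt
  · -- single atom case S = T
    refine Measure.ext_of_Ioc P₁ P₂ fun a b hab => ?_
    have key : ∀ (Q : Measure ℝ) [IsProbabilityMeasure Q], Q (Iio S) = 0 → Q (Ioi S) = 0 →
        Q (Ioc a b) = (if S ∈ Ioc a b then 1 else 0) := by
      intro Q _ h1 h2
      split_ifs with hS
      · refine le_antisymm prob_le_one ?_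
        have hsub : (univ : Set ℝ) ⊆ Ioc a b ∪ (Iio S ∪ Ioi S) := by
          intro x _
          rcases lt_trichotomy x S with h | h | h
          · exact Or.inr (Or.inl h)
          · exact Or.inl (h ▸ hS)
          · exact Or.inr (Or.inr h)
        calc (1 : ℝ≥0∞) = Q univ := measure_univ.symm
          _ ≤ Q (Ioc a b) + Q (Iio S ∪ Ioi S) :=
              le_trans (measure_mono hsub) (measure_union_le _ _)
          _ ≤ Q (Ioc a b) + (Q (Iio S) + Q (Ioi S)) :=
              add_le_add_right (measure_union_le _ _) _
          _ = Q (Ioc a b) := by rw [h1, h2]; simp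
      · refine measure_mono_null ?_ (measure_union_null h1 h2)
        intro x hx
        rcases lt_trichotomy x S with h | h | h
        · exact Or.inl h
        · exact absurd (h ▸ hx) hS
        · exact Or.inr h
    rw [key P₁ hIio1 (hEq.symm ▸ hIoi1), key P₂ hS0 (hEq.symm ▸ hT0)]
  · by_cases hmid : P₂ (Ioo S T) = 0
    · -- two atoms
      have hmid1 : P₁ (Ioo S T) = 0 := by
        have hsub : Ioo S T ⊆ ⋃ n : ℕ, Icc (S + 1 / (n + 1)) (T - 1 / (n + 1)) := by
          intro x hx
          rcases exists_nat_one_div_lt (sub_pos.2 hx.1) with ⟨n₁, h₁⟩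
          rcases exists_nat_one_div_lt (sub_pos.2 hx.2) with ⟨n₂, h₂⟩
          refine mem_iUnion.2 ⟨max n₁ n₂, ?_, ?_⟩
          · have hle : (1 : ℝ) / ((max n₁ n₂ : ℕ) + 1) ≤ 1 / (n₁ + 1) := by
              apply one_div_le_one_div_of_le (by positivity)
              have : (n₁ : ℝ) ≤ ((max n₁ n₂ : ℕ) : ℝ) := Nat.cast_le.2 (le_max_left _ _)
              linarith
            linarith
          · have hle : (1 : ℝ) / ((max n₁ n₂ : ℕ) + 1) ≤ 1 / (n₂ + 1) := by
              apply one_div_le_one_div_of_le (by positivity)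
              have : (n₂ : ℝ) ≤ ((max n₁ n₂ : ℕ) : ℝ) := Nat.cast_le.2 (le_max_right _ _)
              linarith
            linarith
        refine measure_mono_null hsub (measure_iUnion_null fun n => ?_)
        by_cases hc : S + 1 / ((n : ℝ) + 1) ≤ T - 1 / (n + 1)
        · apply L_Icc hpos heq hc
          apply measure_mono_null _ hmid
          intro y hy
          have h1 : 0 < 1 / ((n : ℝ) + 1) := by positivity
          exact ⟨by linarith [hy.1], by linarith [hy.2]⟩
        · rw [Icc_eq_empty hc]; simp
      have hN : ∀ (Q : Measure ℝ), Q (Iio S) = 0 → Q (Ioo S T) = 0 → Q (Ioi T) = 0 →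
          Q (Iio S ∪ (Ioo S T ∪ Ioi T)) = 0 := fun Q h1 h2 h3 =>
        measure_union_null h1 (measure_union_null h2 h3)
      have hN2 := hN P₂ hS0 hmid hT0
      have hN1 := hN P₁ hIio1 hmid1 hIoi1
      have hfull : ∀ (Q : Measure ℝ) [IsProbabilityMeasure Q],
          Q (Iio S ∪ (Ioo S T ∪ Ioi T)) = 0 → Q (Icc S T) = 1 := by
        intro Q _ hQN
        refine le_antisymm prob_le_one ?_
        have hsub : (univ : Set ℝ) ⊆ Icc S T ∪ (Iio S ∪ (Ioo S T ∪ Ioi T)) := by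
          intro x _
          rcases lt_or_ge x S with h | h
          · exact Or.inr (Or.inl h)
          rcases le_or_gt x T with h' | h'
          · exact Or.inl ⟨h, h'⟩
          · exact Or.inr (Or.inr (Or.inr h'))
        calc (1 : ℝ≥0∞) = Q univ := measure_univ.symm
          _ ≤ Q (Icc S T) + Q (Iio S ∪ (Ioo S T ∪ Ioi T)) :=
              le_trans (measure_mono hsub) (measure_union_le _ _)
          _ = Q (Icc S T) := by rw [hQN, add_zero]
      have hfull2 := hfull P₂ hN2
      have hfull1 := hfull P₁ hN1
      have hdisjST : Disjoint ({S} : Set ℝ) {T} := by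
        simp [disjoint_singleton, hSlt.ne]
      have hpair : ∀ (Q : Measure ℝ) [IsProbabilityMeasure Q],
          Q (Iio S ∪ (Ioo S T ∪ Ioi T)) = 0 →
          ∫ x in Icc S T, x ∂Q = S * (Q {S}).toReal + T * (Q {T}).toReal := by
        intro Q _ hQN
        have hae : Icc S T =ᵐ[Q] ({S} ∪ {T} : Set ℝ) := by
          rw [ae_eq_set]
          constructor
          · apply measure_mono_null _ hQN
            intro x hx
            simp only [mem_diff, mem_Icc, mem_union, mem_singleton_iff] at hx
            push_neg at hx
            exact Or.inr (Or.inl ⟨lt_of_le_of_ne hx.1.1 (Ne.symm hx.2.1),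
              lt_of_le_of_ne hx.1.2 hx.2.2⟩)
          · have hemp : (({S} ∪ {T} : Set ℝ)) \ Icc S T = ∅ := by
              apply diff_eq_empty.2
              intro x hx
              rcases hx with h | h
              · rw [mem_singleton_iff.1 h]; exact ⟨le_refl _, hST⟩
              · rw [mem_singleton_iff.1 h]; exact ⟨hST, le_refl _⟩
            rw [hemp]; simp
        rw [setIntegral_congr_set hae,
          setIntegral_union hdisjST (measurableSet_singleton _)
            integrableOn_singleton
            integrableOn_singleton,
          integral_singleton, integral_singleton]
        simp [smul_eq_mul, measureReal_def]; ring
      have hint2 := hpair P₂ hN2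
      have hint1 := hpair P₁ hN1
      have hIccpos : 0 < P₂ (Icc S T) := by rw [hfull2]; exact zero_lt_one
      have hmean := heq S T hSlt hIccpos
      rw [hint1, hint2, hfull1, hfull2] at hmean
      simp only [ENNReal.toReal_one, div_one] at hmean
      have hsum : ∀ (Q : Measure ℝ) [IsProbabilityMeasure Q],
          Q (Iio S ∪ (Ioo S T ∪ Ioi T)) = 0 →
          (Q {S}).toReal + (Q {T}).toReal = 1 := by
        intro Q _ hQN
        have hp : Q ({S} ∪ {T} : Set ℝ) = 1 := by
          refine le_antisymm prob_le_one ?_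
          have hsub : (univ : Set ℝ) ⊆ ({S} ∪ {T}) ∪ (Iio S ∪ (Ioo S T ∪ Ioi T)) := by
            intro x _
            rcases lt_trichotomy x S with h | h | h
            · exact Or.inr (Or.inl h)
            · exact Or.inl (Or.inl (mem_singleton_iff.2 h))
            rcases lt_trichotomy x T with h' | h' | h'
            · exact Or.inr (Or.inr (Or.inl ⟨h, h'⟩))
            · exact Or.inl (Or.inr (mem_singleton_iff.2 h'))
            · exact Or.inr (Or.inr (Or.inr h'))
          calc (1 : ℝ≥0∞) = Q univ := measure_univ.symm
            _ ≤ Q ({S} ∪ {T} : Set ℝ) + Q (Iio S ∪ (Ioo S T ∪ Ioi T)) :=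
                le_trans (measure_mono hsub) (measure_union_le _ _)
            _ = Q ({S} ∪ {T} : Set ℝ) := by rw [hQN, add_zero]
        have hu := measure_union (μ := Q) hdisjST (measurableSet_singleton _)
        rw [hp] at hu
        have := congrArg ENNReal.toReal hu
        rw [ENNReal.toReal_add (measure_ne_top _ _) (measure_ne_top _ _)] at this
        simpa using this.symm
      have hsum2 := hsum P₂ hN2
      have hsum1 := hsum P₁ hN1
      have hTeq : (P₁ {T}).toReal = (P₂ {T}).toReal := by
        have h3 : (T - S) * ((P₂ {T}).toReal - (P₁ {T}).toReal) = 0 := by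
          linear_combination hmean - S * hsum2 + S * hsum1
        rcases mul_eq_zero.1 h3 with h | h
        · exact absurd h (by linarith)
        · linarith
      have hSeq : (P₁ {S}).toReal = (P₂ {S}).toReal := by linarith
      have hTeq' : P₁ {T} = P₂ {T} :=
        (ENNReal.toReal_eq_toReal_iff' (measure_ne_top _ _) (measure_ne_top _ _)).1 hTeq
      have hSeq' : P₁ {S} = P₂ {S} :=
        (ENNReal.toReal_eq_toReal_iff' (measure_ne_top _ _) (measure_ne_top _ _)).1 hSeq
      refine Measure.ext_of_Ioc P₁ P₂ fun a b hab => ?_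
      have key : ∀ (Q : Measure ℝ) [IsProbabilityMeasure Q],
          Q (Iio S ∪ (Ioo S T ∪ Ioi T)) = 0 →
          Q (Ioc a b) = Q (Ioc a b ∩ {S}) + Q (Ioc a b ∩ {T}) := by
        intro Q _ hQN
        have hdiff : Q (Ioc a b \ ({S} ∪ {T})) = 0 := by
          apply measure_mono_null _ hQN
          intro x hx
          simp only [mem_diff, mem_union, mem_singleton_iff, mem_Ioc] at hx
          push_neg at hx
          rcases lt_trichotomy x S with h | h | h
          · exact Or.inl h
          · exact absurd h hx.2.1
          rcases lt_trichotomy x T with h' | h' | h'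
          · exact Or.inr (Or.inl ⟨h, h'⟩)
          · exact absurd h' hx.2.2
          · exact Or.inr (Or.inr h')
        have hm := measure_inter_add_diff (μ := Q) (Ioc a b)
          ((measurableSet_singleton S).union (measurableSet_singleton T))
        rw [hdiff, add_zero] at hm
        rw [← hm, inter_union_distrib_left,
          measure_union (hdisjST.mono inter_subset_right inter_subset_right)
            (measurableSet_Ioc.inter (measurableSet_singleton _))]
      rw [key P₁ hN1, key P₂ hN2]
      have hpiece : ∀ x : ℝ, P₁ {x} = P₂ {x} →
          P₁ (Ioc a b ∩ {x}) = P₂ (Ioc a b ∩ {x}) := by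
        intro x hx
        by_cases hmem : x ∈ Ioc a b
        · rw [(inter_eq_right.2 (singleton_subset_iff.2 hmem) :
            Ioc a b ∩ {x} = {x}), hx]
        · have hemp : Ioc a b ∩ {x} = ∅ := by
            ext y
            simp only [mem_inter_iff, mem_singleton_iff, mem_empty_iff_false, iff_false,
              not_and]
            rintro hy rfl
            exact hmem hy
          rw [hemp]
          simp
      rw [hpiece S hSeq', hpiece T hTeq']

    · -- middle positive
      have hbase2 : ∃ p q : ℝ, S < p ∧ p ≤ q ∧ q < T ∧ 0 < P₂ (Ioc p q) := by
        have hsub : Ioo S T ⊆ ⋃ n : ℕ,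
            Ioc (S + (T - S) / (n + 3)) (T - (T - S) / (n + 3)) := by
          intro x hx
          set δ := min (x - S) (T - x) with hδ
          have hδpos : 0 < δ := lt_min (sub_pos.2 hx.1) (sub_pos.2 hx.2)
          rcases exists_nat_gt ((T - S) / δ) with ⟨n, hn⟩
          have hd : (T - S) / ((n : ℝ) + 3) < δ := by
            rw [div_lt_iff₀ (by positivity)]
            have h2 := (div_lt_iff₀ hδpos).1 hn
            nlinarith [hδpos]
          have hd1 : δ ≤ x - S := min_le_left _ _
          have hd2 : δ ≤ T - x := min_le_right _ _
          exact mem_iUnion.2 ⟨n, by constructor <;> [skip; skip] <;> linarith⟩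
        by_contra hcon
        push_neg at hcon
        apply hmid
        refine measure_mono_null hsub (measure_iUnion_null fun n => ?_)
        have hd : 0 < (T - S) / ((n : ℝ) + 3) := div_pos (by linarith) (by positivity)
        by_cases hc : S + (T - S) / ((n : ℝ) + 3) ≤ T - (T - S) / (n + 3)
        · exact le_antisymm (hcon _ _ (by linarith) hc (by linarith)) zero_le
        · rw [Ioc_eq_empty (by intro h; exact hc h.le)]
          simp
      obtain ⟨p, q, hSp, hpq, hqT, hpqpos⟩ := hbase2
      have hP2pq : (P₂ (Ioc p q)).toReal ≠ 0 :=
        (ENNReal.toReal_pos hpqpos.ne' (measure_ne_top _ _)).ne'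
      set c := (P₁ (Ioc p q)).toReal / (P₂ (Ioc p q)).toReal with hcdef
      have hright : ∀ a b : ℝ, a ≤ b → b < T →
          (P₁ (Ioc a b)).toReal = c * (P₂ (Ioc a b)).toReal := by
        intro a b hab hbT
        obtain ⟨B, hmB, hPB⟩ := exists_Ioc_pos P₂ (hTpos (max b q) (max_lt hbT hqT))
        obtain ⟨c₀, _, hprop⟩ := prop_right hpos heq hmB hPB
        have h1 := hprop p q hpq (le_max_right _ _)
        have hc : c = c₀ := by rw [hcdef, h1]; field_simp
        rw [hc]
        exact hprop a b hab (le_max_left _ _)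
      have hleft : ∀ a b : ℝ, S < a → a ≤ b →
          (P₁ (Ioc a b)).toReal = c * (P₂ (Ioc a b)).toReal := by
        intro a b hSa hab
        set β := min a p with hβdef
        have hSβ : S < β := lt_min hSa hSp
        have hIco : ∃ n : ℕ, 0 < P₂ (Ico (β - (n + 1)) β) := by
          by_contra hcon
          push_neg at hcon
          have hnull : ∀ n : ℕ, P₂ (Ico (β - (n + 1)) β) = 0 := fun n =>
            le_antisymm (hcon n) zero_le
          have hsub : Iio β ⊆ ⋃ n : ℕ, Ico (β - (n + 1)) β := by
            intro x hx
            rcases exists_nat_gt (β - x) with ⟨n, hn⟩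
            exact mem_iUnion.2 ⟨n, ⟨by linarith, hx⟩⟩
          exact absurd (measure_mono_null hsub (measure_iUnion_null hnull))
            (hSpos β hSβ).ne'
        obtain ⟨n₁, hn₁⟩ := hIco
        obtain ⟨c₁, _, hpropL⟩ := prop_left hpos heq
          (show β - ((n₁ : ℝ) + 1) < β by
            have := Nat.cast_nonneg (α := ℝ) n₁; linarith) hn₁
        have hIcc : ∀ x y : ℝ, β ≤ x → x ≤ y →
            (P₁ (Icc x y)).toReal = c₁ * (P₂ (Icc x y)).toReal := by
          intro x y hx hxy
          refine tendsto_nhds_unique ((Ico_lim P₁ x y).congr ?_)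
            ((Ico_lim P₂ x y).const_mul c₁)
          intro n
          have h1 : 0 < 1 / ((n : ℝ) + 1) := by positivity
          exact hpropL x (y + 1 / (n + 1)) hx (by linarith)
        have hIocv : ∀ x y : ℝ, β ≤ x → x ≤ y →
            (P₁ (Ioc x y)).toReal = c₁ * (P₂ (Ioc x y)).toReal := by
          intro x y hx hxy
          refine tendsto_nhds_unique ((Ioc_lim P₁ x y).congr ?_)
            ((Ioc_lim P₂ x y).const_mul c₁)
          intro n
          have h1 : 0 < 1 / ((n : ℝ) + 1) := by positivity
          by_cases hc2 : x + 1 / ((n : ℝ) + 1) ≤ y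
          · exact hIcc _ _ (by linarith) hc2
          · rw [Icc_eq_empty hc2]; simp
        have hc1 : c₁ = c := by
          have h1 := hIocv p q (min_le_right _ _) hpq
          rw [hcdef, h1]
          field_simp
        rw [← hc1]
        exact hIocv a b (min_le_left _ _) hab
      have htail : ∀ a b : ℝ, T ≤ a →
          (P₁ (Ioc a b)).toReal = c * (P₂ (Ioc a b)).toReal := by
        intro a b hTa
        have h1 : P₁ (Ioc a b) = 0 :=
          measure_mono_null (fun x hx => lt_of_le_of_lt hTa hx.1) hIoi1
        have h2 : P₂ (Ioc a b) = 0 :=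
          measure_mono_null (fun x hx => lt_of_le_of_lt hTa hx.1) hT0
        rw [h1, h2]; simp
      apply eq_of_prop c
      intro a b hab
      rcases le_or_gt T a with hTa | haT
      · exact htail a b hTa
      · set m' := max a (min b ((S + T) / 2)) with hm'def
        have ham' : a ≤ m' := le_max_left _ _
        have hm'b : m' ≤ b := max_le hab (min_le_left _ _)
        have hm'T : m' < T := max_lt haT (lt_of_le_of_lt (min_le_right _ _) (by linarith))
        have hsplit : ∀ (Q : Measure ℝ) [IsProbabilityMeasure Q],
            (Q (Ioc a b)).toReal = (Q (Ioc a m')).toReal + (Q (Ioc m' b)).toReal := by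
          intro Q _
          rw [← Ioc_union_Ioc_eq_Ioc ham' hm'b,
            measure_union (Ioc_disjoint_Ioc_of_le le_rfl) measurableSet_Ioc,
            ENNReal.toReal_add (measure_ne_top _ _) (measure_ne_top _ _)]
        rw [hsplit P₁, hsplit P₂]
        have h1 := hright a m' ham' hm'T
        have h2 : (P₁ (Ioc m' b)).toReal = c * (P₂ (Ioc m' b)).toReal := by
          rcases eq_or_lt_of_le hm'b with hEq2 | hlt2
          · rw [hEq2, Ioc_self]; simp
          · have hbS : S < b := by
              by_contra hcon
              push_neg at hcon
              have hmm : m' = b := by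
                rw [hm'def, min_eq_left (by linarith : b ≤ (S + T) / 2),
                  max_eq_right hab]
              exact absurd hmm (ne_of_lt hlt2)
            have hSm' : S < m' :=
              lt_of_lt_of_le (lt_min hbS (by linarith : S < (S + T) / 2))
                (le_max_right _ _)
            exact hleft m' b hSm' hlt2.le
        rw [h1, h2]; ring

lemma main_eq : P₁ = P₂ := by
  by_cases hR : ∀ b : ℝ, 0 < P₂ (Ioi b)
  · exact caseR hpos heq hR
  · by_cases hL : ∀ a : ℝ, 0 < P₂ (Iio a)
    · have h := caseR (P₁ := nm P₁) (P₂ := nm P₂) (nm_hpos hpos heq) (nm_heq hpos heq)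
        (fun b => by rw [nm_Ioi]; exact hL _)
      have h2 := congrArg nm h
      rwa [nm_nm, nm_nm] at h2
    · push_neg at hR hL
      obtain ⟨b₀, hb₀⟩ := hR
      obtain ⟨a₀, ha₀⟩ := hL
      exact case_bounded hpos heq ⟨b₀, le_antisymm hb₀ zero_le⟩
        ⟨a₀, le_antisymm ha₀ zero_le⟩

end Pair

end Stmt2Aux

theorem stmt_2 (P₁ P₂ : Measure ℝ) [IsProbabilityMeasure P₁] [IsProbabilityMeasure P₂]
    (hpos : ∀ a b : ℝ, a < b → 0 < P₂ (Icc a b) → 0 < P₁ (Icc a b))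
    (heq : ∀ a b : ℝ, a < b → 0 < P₂ (Icc a b) →
      (∫ x in Icc a b, x ∂P₂) / (P₂ (Icc a b)).toReal
        = (∫ x in Icc a b, x ∂P₁) / (P₁ (Icc a b)).toReal) :
    (∀ a b : ℝ, a < b → (0 < P₁ (Icc a b) ↔ 0 < P₂ (Icc a b))) ∧ P₁ = P₂ := by
  have hmain : P₁ = P₂ := Stmt2Aux.main_eq hpos heq
  exact ⟨fun a b hab => by rw [hmain], hmain⟩
end

section
/- Let P₁ and P₂ be Borel probability measures on ℝ with finite first moments (∫_ℝ |x| dPᵢ(x) < ∞ for i = 1,2). Suppose that every half-line [t,∞) with P₂([t,∞)) > 0 also satisfies P₁([t,∞)) > 0, and that for every such t, (∫_{[t,∞)} x dP₂(x))/P₂([t,∞)) = (∫_{[t,∞)} x dP₁(x))/P₁([t,∞)). Then P₁([t,∞)) > 0 if and only if P₂([t,∞)) > 0 for every t ∈ ℝ, and P₁ = P₂ as Borel measures. -/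
open MeasureTheory Set Filter Topology

noncomputable def ftl (P : Measure ℝ) (s : ℝ) : ℝ := (P (Ioi s)).toReal
noncomputable def htl (P : Measure ℝ) (t : ℝ) : ℝ := ∫ s in Ioi t, ftl P s

section basic
variable (P : Measure ℝ) [IsProbabilityMeasure P]

lemma ftl_nonneg (s : ℝ) : 0 ≤ ftl P s := ENNReal.toReal_nonneg

lemma ftl_le_one (s : ℝ) : ftl P s ≤ 1 := by
  have : P (Ioi s) ≤ 1 := prob_le_one
  simpa [ftl] using ENNReal.toReal_le_of_le_ofReal zero_le_one (by simpa using this)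

lemma ftl_anti : Antitone (ftl P) := fun a b hab =>
  ENNReal.toReal_le_toReal (measure_ne_top _ _) (measure_ne_top _ _) |>.mpr
    (measure_mono (Ioi_subset_Ioi hab))

lemma ftl_meas : Measurable (ftl P) :=
  Measurable.ennreal_toReal <| Antitone.measurable fun a b hab =>
    measure_mono (Ioi_subset_Ioi hab)

lemma lint_tail (hint : Integrable (fun x : ℝ => |x|) P) (t : ℝ) :
    (∫⁻ s in Ioi t, P (Ioi s)) < ⊤ := by
  have hnn : 0 ≤ᵐ[P.restrict (Ici t)] fun x => x - t := by
    filter_upwards [ae_restrict_mem measurableSet_Ici] with x hx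
    simpa using hx
  have hmeas : AEMeasurable (fun x : ℝ => x - t) (P.restrict (Ici t)) :=
    (measurable_id.sub_const t).aemeasurable
  have key := lintegral_eq_lintegral_meas_lt (P.restrict (Ici t)) hnn hmeas
  have hRHS : ∀ u ∈ Ioi (0:ℝ), (P.restrict (Ici t)) {a : ℝ | u < a - t} = P (Ioi (t + u)) := by
    intro u hu
    have h1 : {a : ℝ | u < a - t} = Ioi (t + u) := by
      ext a; simp [mem_Ioi, lt_sub_iff_add_lt, add_comm]
    rw [h1, Measure.restrict_apply measurableSet_Ioi]
    congr 1
    rw [inter_eq_left]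
    exact fun a ha => le_of_lt (lt_of_le_of_lt (by linarith [hu.out] : t ≤ t + u) ha)
  have hchange : ∫⁻ s in Ioi t, P (Ioi s) = ∫⁻ u in Ioi (0:ℝ), P (Ioi (t + u)) := by
    have hmp : MeasurePreserving (· + t) (volume : Measure ℝ) volume :=
      measurePreserving_add_right volume t
    have hfm : Measurable fun s : ℝ => P (Ioi s) :=
      Antitone.measurable fun a b hab => measure_mono (Ioi_subset_Ioi hab)
    calc ∫⁻ s in Ioi t, P (Ioi s) ∂volume
        = ∫⁻ s in Ioi t, P (Ioi s) ∂(Measure.map (· + t) volume) := by rw [hmp.map_eq]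
      _ = ∫⁻ u in (· + t) ⁻¹' (Ioi t), P (Ioi (u + t)) ∂volume :=
          setLIntegral_map measurableSet_Ioi hfm (measurable_id.add_const t)
      _ = ∫⁻ u in Ioi (0:ℝ), P (Ioi (t + u)) ∂volume := by
          congr 1
          · ext u; simp
          · funext u; rw [add_comm]
  rw [hchange, ← setLIntegral_congr_fun measurableSet_Ioi hRHS,
    ← key]
  calc ∫⁻ ω, ENNReal.ofReal (ω - t) ∂(P.restrict (Ici t))
      ≤ ∫⁻ ω, ENNReal.ofReal (|ω| + |t|) ∂(P.restrict (Ici t)) := by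
        apply lintegral_mono; intro ω
        exact ENNReal.ofReal_le_ofReal (by cases abs_cases ω <;> cases abs_cases t <;> linarith)
    _ ≤ ∫⁻ ω, ENNReal.ofReal (|ω| + |t|) ∂P := lintegral_mono' Measure.restrict_le_self le_rfl
    _ = ∫⁻ ω, (ENNReal.ofReal |ω| + ENNReal.ofReal |t|) ∂P := by
        congr 1; funext ω; rw [ENNReal.ofReal_add (abs_nonneg _) (abs_nonneg _)]
    _ = (∫⁻ ω, ENNReal.ofReal |ω| ∂P) + ENNReal.ofReal |t| := by
        rw [lintegral_add_right _ measurable_const, lintegral_const, measure_univ, mul_one]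
    _ < ⊤ := ENNReal.add_lt_top.mpr ⟨hint.lintegral_lt_top, ENNReal.ofReal_lt_top⟩

lemma integrableOn_ftl (hint : Integrable (fun x : ℝ => |x|) P) (t : ℝ) :
    IntegrableOn (ftl P) (Ioi t) := by
  refine ⟨(ftl_meas P).aestronglyMeasurable.restrict, ?_⟩
  rw [hasFiniteIntegral_iff_ofReal (Filter.Eventually.of_forall fun s => ftl_nonneg P s)]
  have : ∀ s : ℝ, ENNReal.ofReal (ftl P s) = P (Ioi s) := fun s =>
    ENNReal.ofReal_toReal (measure_ne_top _ _)
  simp_rw [this]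
  exact lint_tail P hint t


variable (hint : Integrable (fun x : ℝ => |x|) P)
include hint

lemma htl_split {y z : ℝ} (hyz : y ≤ z) :
    htl P y = (∫ s in Ioc y z, ftl P s) + htl P z := by
  have hdisj : Disjoint (Ioc y z) (Ioi z) := by
    rw [disjoint_left]; intro a ha ha'; exact absurd ha.2 (not_le.mpr ha')
  have hun : Ioc y z ∪ Ioi z = Ioi y := Ioc_union_Ioi_eq_Ioi hyz
  rw [htl, ← hun, setIntegral_union hdisj measurableSet_Ioi
    ((integrableOn_ftl P hint y).mono_set Ioc_subset_Ioi_self) (integrableOn_ftl P hint z)]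
  rfl

omit hint in
lemma htl_nonneg (t : ℝ) : 0 ≤ htl P t :=
  setIntegral_nonneg measurableSet_Ioi fun s _ => ftl_nonneg P s

lemma htl_anti : Antitone (htl P) := by
  intro y z hyz
  rw [htl_split P hint hyz]
  have : 0 ≤ ∫ s in Ioc y z, ftl P s :=
    setIntegral_nonneg measurableSet_Ioc fun s _ => ftl_nonneg P s
  linarith

lemma htl_diff_le {y z : ℝ} (hyz : y ≤ z) : htl P y - htl P z ≤ z - y := by
  rw [htl_split P hint hyz]
  have h1 : (∫ s in Ioc y z, ftl P s) ≤ ∫ s in Ioc y z, (1:ℝ) := by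
    apply setIntegral_mono_on ((integrableOn_ftl P hint y).mono_set Ioc_subset_Ioi_self)
      (integrableOn_const measure_Ioc_lt_top.ne) measurableSet_Ioc
    exact fun s _ => ftl_le_one P s
  have h2 : (∫ s in Ioc y z, (1:ℝ)) = z - y := by
    simp [Real.volume_Ioc, ENNReal.toReal_ofReal (by linarith : (0:ℝ) ≤ z - y)]
    exact hyz
  linarith

lemma htl_abs_le {y z : ℝ} (h : y ≤ z) : |htl P y - htl P z| ≤ |y - z| := by
  have h1 := htl_anti P hint h
  have h2 := htl_diff_le P hint h
  rw [abs_of_nonneg (by linarith), abs_of_nonpos (by linarith : y - z ≤ 0)]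
  linarith

lemma htl_lipschitz : LipschitzWith 1 (htl P) := by
  apply LipschitzWith.of_dist_le_mul
  intro y z
  rw [Real.dist_eq, Real.dist_eq, NNReal.coe_one, one_mul]
  rcases le_total y z with h | h
  · exact htl_abs_le P hint h
  · rw [abs_sub_comm (htl P y), abs_sub_comm y]
    exact htl_abs_le P hint h

lemma htl_cont : Continuous (htl P) := (htl_lipschitz P hint).continuous

omit hint in
lemma ftl_rightCont (y : ℝ) : ContinuousWithinAt (ftl P) (Ici y) y := by
  have hmono : Monotone fun n : ℕ => Ioi (y + 1 / (n + 1)) := by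
    intro m n hmn
    apply Ioi_subset_Ioi
    have h1 : (0:ℝ) < m + 1 := by positivity
    have h2 : (m:ℝ) + 1 ≤ (n:ℝ) + 1 := by exact_mod_cast by omega
    have := one_div_le_one_div_of_le h1 h2
    linarith
  have hU : (⋃ n : ℕ, Ioi (y + 1 / ((n:ℝ) + 1))) = Ioi y := by
    ext x
    simp only [mem_iUnion, mem_Ioi]
    constructor
    · rintro ⟨n, hn⟩
      have : (0:ℝ) < 1 / ((n:ℝ)+1) := by positivity
      linarith
    · intro hx
      obtain ⟨n, hn⟩ := exists_nat_one_div_lt (by linarith : (0:ℝ) < x - y)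
      exact ⟨n, by linarith⟩
  have hmeasT : Tendsto (fun n : ℕ => P (Ioi (y + 1 / (n + 1)))) atTop (𝓝 (P (Ioi y))) := by
    have := tendsto_measure_iUnion_atTop (μ := P) hmono
    rwa [hU] at this
  have hT : Tendsto (fun n : ℕ => ftl P (y + 1 / (n + 1))) atTop (𝓝 (ftl P y)) :=
    (ENNReal.tendsto_toReal (measure_ne_top P _)).comp hmeasT
  rw [ContinuousWithinAt]
  apply tendsto_order.2
  constructor
  · intro b hb
    have : ∃ n : ℕ, b < ftl P (y + 1 / (n + 1)) := by
      by_contra hcon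
      push_neg at hcon
      have := le_of_tendsto hT (Eventually.of_forall hcon)
      linarith
    obtain ⟨n, hn⟩ := this
    have hδ : (0:ℝ) < 1 / ((n:ℝ) + 1) := by positivity
    have hnhds : Iio (y + 1 / ((n:ℝ) + 1)) ∈ 𝓝[Ici y] y :=
      nhdsWithin_le_nhds (Iio_mem_nhds (by linarith))
    filter_upwards [hnhds] with s hs
    exact lt_of_lt_of_le hn (ftl_anti P (le_of_lt hs))
  · intro b hb
    filter_upwards [self_mem_nhdsWithin] with s hs
    exact lt_of_le_of_lt (ftl_anti P hs.out) hb

lemma htl_hasDerivWithinAt (y : ℝ) :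
    HasDerivWithinAt (htl P) (-(ftl P y)) (Ici y) y := by
  have hII : IntervalIntegrable (ftl P) volume (y - 1) y := by
    rw [intervalIntegrable_iff, uIoc_of_le (by linarith : y - 1 ≤ y)]
    exact (integrableOn_ftl P hint (y - 1)).mono_set Ioc_subset_Ioi_self
  have hmeas : StronglyMeasurableAtFilter (ftl P) (𝓝[Ioi y] y) :=
    (ftl_meas P).stronglyMeasurable.stronglyMeasurableAtFilter
  have hFTC : HasDerivWithinAt (fun u => ∫ s in (y - 1)..u, ftl P s) (ftl P y) (Ici y) y :=
    intervalIntegral.integral_hasDerivWithinAt_right hII hmeas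
      ((ftl_rightCont P y).mono Ioi_subset_Ici_self)
  have hg : HasDerivWithinAt (fun u => htl P (y - 1) - ∫ s in (y - 1)..u, ftl P s)
      (-(ftl P y)) (Ici y) y := by
    have h := (hasDerivWithinAt_const y (Ici y) (htl P (y - 1))).sub hFTC
    simp only [zero_sub] at h
    exact h
  apply hg.congr
  · intro x hx
    have hx' : y - 1 ≤ x := by have := hx.out; linarith
    rw [intervalIntegral.integral_of_le hx', htl_split P hint hx']
    ring
  · rw [intervalIntegral.integral_of_le (by linarith : y - 1 ≤ y),
      htl_split P hint (by linarith : y - 1 ≤ y)]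
    ring

end basic

section tail
variable (P : Measure ℝ) [IsProbabilityMeasure P]

lemma exists_pos_gt {c : ℝ} (h : 0 < P (Ioi c)) : ∃ u, c < u ∧ 0 < P (Ioi u) := by
  by_contra hcon
  push_neg at hcon
  have hz : ∀ u, c < u → P (Ioi u) = 0 := fun u hu => le_antisymm (hcon u hu) zero_le
  have hU : Ioi c = ⋃ n : ℕ, Ioi (c + 1 / ((n:ℝ) + 1)) := by
    ext x
    simp only [mem_iUnion, mem_Ioi]
    constructor
    · intro hx
      obtain ⟨n, hn⟩ := exists_nat_one_div_lt (by linarith : (0:ℝ) < x - c)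
      exact ⟨n, by linarith⟩
    · rintro ⟨n, hn⟩
      have : (0:ℝ) < 1 / ((n:ℝ)+1) := by positivity
      linarith
  have : P (Ioi c) = 0 := by
    rw [hU]
    refine measure_iUnion_null fun n => hz _ ?_
    have : (0:ℝ) < 1 / ((n:ℝ)+1) := by positivity
    linarith
  exact absurd this (ne_of_gt h)

variable (hint : Integrable (fun x : ℝ => |x|) P)
include hint

lemma htl_lower {u a : ℝ} (hau : a ≤ u) : (u - a) * ftl P u ≤ htl P a := by
  have hsplit := htl_split P hint hau
  have h1 : (∫ s in Ioc a u, (ftl P u : ℝ)) ≤ ∫ s in Ioc a u, ftl P s := by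
    apply setIntegral_mono_on (integrableOn_const measure_Ioc_lt_top.ne)
      ((integrableOn_ftl P hint a).mono_set Ioc_subset_Ioi_self) measurableSet_Ioc
    exact fun s hs => ftl_anti P hs.2
  have h2 : (∫ s in Ioc a u, (ftl P u : ℝ)) = (u - a) * ftl P u := by
    rw [setIntegral_const, measureReal_def, Real.volume_Ioc, smul_eq_mul,
      ENNReal.toReal_ofReal (by linarith : (0:ℝ) ≤ u - a)]
  have h3 := htl_nonneg P u
  linarith

lemma htl_pos {c : ℝ} (h : 0 < P (Ioi c)) : 0 < htl P c := by
  obtain ⟨u, hcu, hu⟩ := exists_pos_gt P h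
  have hftl : 0 < ftl P u := ENNReal.toReal_pos (ne_of_gt hu) (measure_ne_top _ _)
  have := htl_lower P hint (le_of_lt hcu)
  nlinarith

lemma tail_identity (t : ℝ) :
    ∫ x in Ici t, x ∂P = t * (P (Ici t)).toReal + htl P t := by
  have hx_int : Integrable (fun x : ℝ => x) P := by
    refine hint.mono' measurable_id.aestronglyMeasurable ?_
    filter_upwards with x
    simp [Real.norm_eq_abs]
  have hnn : 0 ≤ᵐ[P.restrict (Ici t)] fun x => x - t := by
    filter_upwards [ae_restrict_mem measurableSet_Ici] with x hx
    simpa using hx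
  have hsub_int : Integrable (fun x : ℝ => x - t) (P.restrict (Ici t)) :=
    (hx_int.restrict.sub (integrable_const t))
  have key := hsub_int.integral_eq_integral_meas_lt hnn
  have hRHS : ∀ u ∈ Ioi (0:ℝ), ((P.restrict (Ici t)) {a : ℝ | u < a - t}).toReal
      = ftl P (t + u) := by
    intro u hu
    have h1 : {a : ℝ | u < a - t} = Ioi (t + u) := by
      ext a; simp [mem_Ioi, lt_sub_iff_add_lt, add_comm]
    rw [h1, Measure.restrict_apply measurableSet_Ioi]
    congr 2
    rw [inter_eq_left]
    exact fun a ha => le_of_lt (lt_of_le_of_lt (by linarith [hu.out] : t ≤ t + u) ha)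
  have hchange : htl P t = ∫ u in Ioi (0:ℝ), ftl P (t + u) := by
    have hmp : MeasurePreserving (· + t) (volume : Measure ℝ) volume :=
      measurePreserving_add_right volume t
    calc htl P t = ∫ s in Ioi t, ftl P s ∂(Measure.map (· + t) volume) := by
          rw [hmp.map_eq]; rfl
      _ = ∫ u in (· + t) ⁻¹' (Ioi t), ftl P (u + t) ∂volume := by
          rw [setIntegral_map measurableSet_Ioi
            ((ftl_meas P).aestronglyMeasurable) (measurable_add_const t).aemeasurable]
      _ = ∫ u in Ioi (0:ℝ), ftl P (t + u) ∂volume := by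
          have : (· + t) ⁻¹' (Ioi t) = Ioi (0:ℝ) := by ext u; simp
          rw [this]
          congr 1; funext u; rw [add_comm]
  have hsub : ∫ x in Ici t, (x - t) ∂P
      = (∫ x in Ici t, x ∂P) - t * (P (Ici t)).toReal := by
    rw [integral_sub hx_int.restrict (integrable_const t), setIntegral_const, measureReal_def, smul_eq_mul,
      mul_comm]
  have hfinal : ∫ x in Ici t, (x - t) ∂P = htl P t := by
    rw [key, hchange]
    exact setIntegral_congr_fun measurableSet_Ioi hRHS
  linarith

end tail

section aux4
variable (P : Measure ℝ) [IsProbabilityMeasure P]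

lemma ftl_eq_one_sub (s : ℝ) : ftl P s = 1 - (P (Iic s)).toReal := by
  have hc := measure_compl (measurableSet_Iic (a := s)) (measure_ne_top P _)
  rw [compl_Iic, measure_univ] at hc
  rw [ftl, hc, ENNReal.toReal_sub_of_le prob_le_one ENNReal.one_ne_top, ENNReal.toReal_one]

lemma iic_meas : Measurable (fun s : ℝ => (P (Iic s)).toReal) :=
  Measurable.ennreal_toReal <| Monotone.measurable fun a b hab =>
    measure_mono (Iic_subset_Iic.mpr hab)

lemma integrableOn_iic_tail (hint : Integrable (fun x : ℝ => |x|) P) :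
    IntegrableOn (fun s : ℝ => (P (Iic s)).toReal) (Iic 0) := by
  have hrestr : (volume : Measure ℝ).restrict (Iic 0) = volume.restrict (Iio 0) :=
    (Measure.restrict_congr_set Iio_ae_eq_Iic).symm
  rw [IntegrableOn, hrestr]
  refine ⟨(iic_meas P).aestronglyMeasurable.restrict, ?_⟩
  rw [hasFiniteIntegral_iff_ofReal (Eventually.of_forall fun s => ENNReal.toReal_nonneg)]
  have hOf : ∀ s : ℝ, ENNReal.ofReal ((P (Iic s)).toReal) = P (Iic s) := fun s =>
    ENNReal.ofReal_toReal (measure_ne_top _ _)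
  simp_rw [hOf]
  -- change of variables x ↦ -x
  have hmp : MeasurePreserving (fun x : ℝ => -x) volume volume :=
    Measure.measurePreserving_neg volume
  have hfm : Measurable fun s : ℝ => P (Iic s) :=
    Monotone.measurable fun a b hab => measure_mono (Iic_subset_Iic.mpr hab)
  have hchange : ∫⁻ s in Iio (0:ℝ), P (Iic s) = ∫⁻ u in Ioi (0:ℝ), P (Iic (-u)) := by
    calc ∫⁻ s in Iio (0:ℝ), P (Iic s) ∂volume
        = ∫⁻ s in Iio (0:ℝ), P (Iic s) ∂(Measure.map (fun x : ℝ => -x) volume) := by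
          rw [hmp.map_eq]
      _ = ∫⁻ u in (fun x : ℝ => -x) ⁻¹' (Iio 0), P (Iic (-u)) ∂volume :=
          setLIntegral_map measurableSet_Iio hfm measurable_neg
      _ = ∫⁻ u in Ioi (0:ℝ), P (Iic (-u)) ∂volume := by
          congr 1
          ext u; simp
  rw [hchange]
  -- layer cake for x ↦ max (-x) 0
  have hnn : 0 ≤ᵐ[P] fun x : ℝ => max (-x) 0 := Eventually.of_forall fun x => le_max_right _ _
  have hmeas : AEMeasurable (fun x : ℝ => max (-x) 0) P :=
    (measurable_neg.max measurable_const).aemeasurable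
  have key := lintegral_eq_lintegral_meas_le P hnn hmeas
  have hset : ∀ u ∈ Ioi (0:ℝ), P {a : ℝ | u ≤ max (-a) 0} = P (Iic (-u)) := by
    intro u hu
    congr 1
    ext a
    simp only [mem_setOf_eq, mem_Iic]
    constructor
    · intro h
      rcases le_or_gt u (-a) with h' | h'
      · linarith
      · exfalso
        have : max (-a) 0 < u := by
          rw [max_lt_iff]; exact ⟨h', hu.out⟩
        linarith
    · intro h
      exact le_trans (by linarith) (le_max_left _ _)
  have heqI : ∫⁻ u in Ioi (0:ℝ), P (Iic (-u)) = ∫⁻ u in Ioi (0:ℝ), P {a : ℝ | u ≤ max (-a) 0} :=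
    (setLIntegral_congr_fun measurableSet_Ioi hset).symm
  rw [heqI, ← key]
  calc ∫⁻ x, ENNReal.ofReal (max (-x) 0) ∂P
      ≤ ∫⁻ x, ENNReal.ofReal |x| ∂P := by
        apply lintegral_mono; intro x
        apply ENNReal.ofReal_le_ofReal
        simp only [max_le_iff]
        exact ⟨neg_le_abs x, abs_nonneg x⟩
    _ < ⊤ := hint.lintegral_lt_top

end aux4

section two
variable (P₁ P₂ : Measure ℝ) [IsProbabilityMeasure P₁] [IsProbabilityMeasure P₂]
variable (hint₁ : Integrable (fun x : ℝ => |x|) P₁) (hint₂ : Integrable (fun x : ℝ => |x|) P₂)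
include hint₁ hint₂

lemma diff_bound : ∃ D : ℝ, ∀ a : ℝ, a ≤ 0 → |htl P₁ a - htl P₂ a| ≤ D := by
  set g : ℝ → ℝ := fun s => (P₁ (Iic s)).toReal + (P₂ (Iic s)).toReal with hg
  have hgint : IntegrableOn g (Iic 0) :=
    (integrableOn_iic_tail P₁ hint₁).add (integrableOn_iic_tail P₂ hint₂)
  refine ⟨|htl P₁ 0 - htl P₂ 0| + ∫ s in Iic (0:ℝ), g s, ?_⟩
  intro a ha
  have h₁ := htl_split P₁ hint₁ ha
  have h₂ := htl_split P₂ hint₂ ha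
  have hI₁ : IntegrableOn (ftl P₁) (Ioc a 0) :=
    (integrableOn_ftl P₁ hint₁ a).mono_set Ioc_subset_Ioi_self
  have hI₂ : IntegrableOn (ftl P₂) (Ioc a 0) :=
    (integrableOn_ftl P₂ hint₂ a).mono_set Ioc_subset_Ioi_self
  have hdiff : htl P₁ a - htl P₂ a
      = (∫ s in Ioc a 0, (ftl P₁ s - ftl P₂ s)) + (htl P₁ 0 - htl P₂ 0) := by
    rw [integral_sub hI₁ hI₂]; rw [h₁, h₂]; ring
  have habs : |∫ s in Ioc a 0, (ftl P₁ s - ftl P₂ s)| ≤ ∫ s in Ioc a 0, g s := by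
    calc |∫ s in Ioc a 0, (ftl P₁ s - ftl P₂ s)| ≤ ∫ s in Ioc a 0, |ftl P₁ s - ftl P₂ s| := by
          simpa [Real.norm_eq_abs] using
            norm_integral_le_integral_norm (μ := volume.restrict (Ioc a 0))
              (fun s => ftl P₁ s - ftl P₂ s)
      _ ≤ ∫ s in Ioc a 0, g s := by
          apply setIntegral_mono_on (hI₁.sub hI₂).abs (hgint.mono_set ?_) measurableSet_Ioc
          · intro s _
            show |ftl P₁ s - ftl P₂ s| ≤ g s
            rw [ftl_eq_one_sub P₁, ftl_eq_one_sub P₂]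
            have n1 : (0:ℝ) ≤ (P₁ (Iic s)).toReal := ENNReal.toReal_nonneg
            have n2 : (0:ℝ) ≤ (P₂ (Iic s)).toReal := ENNReal.toReal_nonneg
            rw [hg]
            simp only []
            rw [abs_le]
            constructor <;> [skip; skip] <;>
              cases abs_cases ((1 - (P₁ (Iic s)).toReal) - (1 - (P₂ (Iic s)).toReal)) <;> linarith
          · exact Ioc_subset_Iic_self
  have hmono : (∫ s in Ioc a 0, g s) ≤ ∫ s in Iic (0:ℝ), g s := by
    apply setIntegral_mono_set hgint
    · filter_upwards with s
      exact add_nonneg ENNReal.toReal_nonneg ENNReal.toReal_nonneg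
    · exact HasSubset.Subset.eventuallyLE Ioc_subset_Iic_self
  calc |htl P₁ a - htl P₂ a|
      ≤ |∫ s in Ioc a 0, (ftl P₁ s - ftl P₂ s)| + |htl P₁ 0 - htl P₂ 0| := by
        rw [hdiff]; exact abs_add_le _ _
    _ ≤ |htl P₁ 0 - htl P₂ 0| + ∫ s in Iic (0:ℝ), g s := by linarith
end two

section main
variable (P₁ P₂ : Measure ℝ) [IsProbabilityMeasure P₁] [IsProbabilityMeasure P₂]
variable (hint₁ : Integrable (fun x : ℝ => |x|) P₁) (hint₂ : Integrable (fun x : ℝ => |x|) P₂)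
variable (hpos : ∀ t : ℝ, 0 < P₂ (Ici t) → 0 < P₁ (Ici t))
variable (heq : ∀ t : ℝ, 0 < P₂ (Ici t) →
      (∫ x in Ici t, x ∂P₂) / (P₂ (Ici t)).toReal
        = (∫ x in Ici t, x ∂P₁) / (P₁ (Ici t)).toReal)
include hint₁ hint₂ hpos heq

lemma step1 : ∀ t : ℝ, 0 < P₂ (Ici t) →
    htl P₂ t * (P₁ (Ici t)).toReal = htl P₁ t * (P₂ (Ici t)).toReal := by
  intro t ht
  have hF₂ : 0 < (P₂ (Ici t)).toReal := ENNReal.toReal_pos (ne_of_gt ht) (measure_ne_top _ _)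
  have hF₁ : 0 < (P₁ (Ici t)).toReal :=
    ENNReal.toReal_pos (ne_of_gt (hpos t ht)) (measure_ne_top _ _)
  have h := heq t ht
  rw [tail_identity P₂ hint₂ t, tail_identity P₁ hint₁ t] at h
  have h' := (div_eq_div_iff (ne_of_gt hF₂) (ne_of_gt hF₁)).mp h
  linear_combination h'

lemma claimB : ∀ y : ℝ, 0 < P₂ (Ioi y) →
    ftl P₁ y * htl P₂ y = ftl P₂ y * htl P₁ y := by
  intro y hy
  obtain ⟨u, hyu, hu⟩ := exists_pos_gt P₂ hy
  set s : ℕ → ℝ := fun n => y + (u - y) / (n + 1) with hs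
  have hsy : ∀ n : ℕ, y < s n := by
    intro n
    have : (0:ℝ) < (u - y) / ((n:ℝ) + 1) := by
      apply div_pos (by linarith) (by positivity)
    simp only [hs]; linarith
  have hsu : ∀ n : ℕ, s n ≤ u := by
    intro n
    have h0 : (0:ℝ) ≤ (n:ℝ) := Nat.cast_nonneg n
    have : (u - y) / ((n:ℝ) + 1) ≤ (u - y) / 1 := by
      gcongr
      · linarith
    simp only [hs]; linarith
  have hspos : ∀ n : ℕ, 0 < P₂ (Ici (s n)) := by
    intro n
    refine lt_of_lt_of_le hu (measure_mono fun x hx => ?_)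
    exact le_of_lt (lt_of_le_of_lt (hsu n) hx)
  have hslim : Tendsto s atTop (𝓝 y) := by
    rw [hs]
    have : Tendsto (fun n : ℕ => (u - y) / ((n:ℝ) + 1)) atTop (𝓝 0) := by
      simpa [div_eq_mul_inv] using tendsto_const_nhds.mul (tendsto_one_div_add_atTop_nhds_zero_nat (𝕜 := ℝ))
    simpa using tendsto_const_nhds.add this
  -- measure limits
  have hmlim : ∀ (P : Measure ℝ) [IsProbabilityMeasure P],
      Tendsto (fun n => (P (Ici (s n))).toReal) atTop (𝓝 (ftl P y)) := by
    intro P _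
    have hmono : Monotone fun n : ℕ => Ici (s n) := by
      intro m n hmn
      apply Ici_subset_Ici.mpr
      have h1 : (0:ℝ) < (m:ℝ) + 1 := by positivity
      have h2 : (m:ℝ) + 1 ≤ (n:ℝ) + 1 := by exact_mod_cast by omega
      have hdiv : (u - y) / ((n:ℝ) + 1) ≤ (u - y) / ((m:ℝ) + 1) := by
        gcongr <;> linarith
      simp only [hs]
      linarith
    have hU : (⋃ n : ℕ, Ici (s n)) = Ioi y := by
      ext x
      simp only [mem_iUnion, mem_Ici, mem_Ioi]
      constructor
      · rintro ⟨n, hn⟩; exact lt_of_lt_of_le (hsy n) hn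
      · intro hx
        obtain ⟨n, hn⟩ := exists_nat_one_div_lt
          (div_pos (by linarith : (0:ℝ) < x - y) (by linarith : (0:ℝ) < u - y))
        refine ⟨n, ?_⟩
        have h3 : (u - y) / ((n:ℝ) + 1) ≤ x - y := by
          rw [div_le_iff₀ (by positivity)]
          rw [div_lt_div_iff₀ (by positivity) (by linarith)] at hn
          nlinarith
        simp only [hs]; linarith
    have := tendsto_measure_iUnion_atTop (μ := P) hmono
    rw [hU] at this
    exact (ENNReal.tendsto_toReal (measure_ne_top P _)).comp this
  have hhlim : ∀ (P : Measure ℝ) [IsProbabilityMeasure P],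
      Integrable (fun x : ℝ => |x|) P →
      Tendsto (fun n => htl P (s n)) atTop (𝓝 (htl P y)) := by
    intro P _ hint
    exact ((htl_cont P hint).tendsto y).comp hslim
  have hid : ∀ n : ℕ, htl P₂ (s n) * (P₁ (Ici (s n))).toReal
      = htl P₁ (s n) * (P₂ (Ici (s n))).toReal :=
    fun n => step1 P₁ P₂ hint₁ hint₂ hpos heq (s n) (hspos n)
  have hlhs : Tendsto (fun n => htl P₂ (s n) * (P₁ (Ici (s n))).toReal) atTop
      (𝓝 (htl P₂ y * ftl P₁ y)) :=
    (hhlim P₂ hint₂).mul (hmlim P₁)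
  have hrhs : Tendsto (fun n => htl P₁ (s n) * (P₂ (Ici (s n))).toReal) atTop
      (𝓝 (htl P₁ y * ftl P₂ y)) :=
    (hhlim P₁ hint₁).mul (hmlim P₂)
  have : htl P₂ y * ftl P₁ y = htl P₁ y * ftl P₂ y := by
    apply tendsto_nhds_unique _ hrhs
    convert hlhs using 2
    exact (hid _).symm
  linarith [this]

lemma ratio_const {c : ℝ} (hc : 0 < P₂ (Ioi c)) :
    ∀ a, a ≤ c → htl P₁ c * htl P₂ a = htl P₂ c * htl P₁ a := by
  intro a ha
  have hH₂pos : ∀ y, y ≤ c → 0 < htl P₂ y := fun y hy =>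
    lt_of_lt_of_le (htl_pos P₂ hint₂ hc) (htl_anti P₂ hint₂ hy)
  set φ : ℝ → ℝ := fun y => htl P₁ y / htl P₂ y with hφ
  have hcont : ContinuousOn φ (Icc a c) :=
    ((htl_cont P₁ hint₁).continuousOn).div ((htl_cont P₂ hint₂).continuousOn)
      (fun y hy => ne_of_gt (hH₂pos y hy.2))
  have hderiv : ∀ x ∈ Ico a c, HasDerivWithinAt φ 0 (Ici x) x := by
    intro x hx
    have hx2 : htl P₂ x ≠ 0 := ne_of_gt (hH₂pos x (le_of_lt hx.2))
    have hpx : 0 < P₂ (Ioi x) :=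
      lt_of_lt_of_le hc (measure_mono (Ioi_subset_Ioi (le_of_lt hx.2)))
    have hB := claimB P₁ P₂ hint₁ hint₂ hpos heq x hpx
    have hd := (htl_hasDerivWithinAt P₁ hint₁ x).div (htl_hasDerivWithinAt P₂ hint₂ x) hx2
    have h0 : (-ftl P₁ x * htl P₂ x - htl P₁ x * -ftl P₂ x) / htl P₂ x ^ 2 = 0 := by
      rw [div_eq_zero_iff]
      left
      linear_combination -hB
    rw [h0] at hd
    exact hd
  have hconst := constant_of_has_deriv_right_zero hcont hderiv c ⟨ha, le_rfl⟩
  have h1 : htl P₁ c / htl P₂ c = htl P₁ a / htl P₂ a := hconst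
  have h2 := (div_eq_div_iff (ne_of_gt (hH₂pos c le_rfl)) (ne_of_gt (hH₂pos a ha))).mp h1
  linarith [h2]

lemma htl_eq {c : ℝ} (hc : 0 < P₂ (Ioi c)) : htl P₁ c = htl P₂ c := by
  obtain ⟨D', hD'⟩ := diff_bound P₁ P₂ hint₁ hint₂
  set D : ℝ := max D' 0 with hDdef
  have hD : ∀ a : ℝ, a ≤ 0 → |htl P₁ a - htl P₂ a| ≤ D :=
    fun a ha => le_trans (hD' a ha) (le_max_left _ _)
  have hD0 : 0 ≤ D := le_max_right _ _
  have hc2 : 0 < htl P₂ c := htl_pos P₂ hint₂ hc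
  set r : ℝ := htl P₁ c / htl P₂ c with hr
  have hra : ∀ a, a ≤ c → htl P₁ a = r * htl P₂ a := by
    intro a ha
    have := ratio_const P₁ P₂ hint₁ hint₂ hpos heq hc a ha
    rw [hr]
    field_simp
    linarith [this]
  by_cases hr1 : r = 1
  · have := hra c le_rfl
    rw [hr1, one_mul] at this
    exact this
  · exfalso
    set k : ℝ := |r - 1| with hk
    have hk0 : 0 < k := abs_pos.mpr (sub_ne_zero.mpr hr1)
    obtain ⟨u, hcu, hu⟩ := exists_pos_gt P₂ hc
    have hε : 0 < ftl P₂ u := ENNReal.toReal_pos (ne_of_gt hu) (measure_ne_top _ _)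
    set a : ℝ := min (min c 0) (u - (D / k + 1) / ftl P₂ u) with haa
    have hac : a ≤ c := le_trans (min_le_left _ _) (min_le_left _ _)
    have ha0 : a ≤ 0 := le_trans (min_le_left _ _) (min_le_right _ _)
    have hau : a ≤ u - (D / k + 1) / ftl P₂ u := min_le_right _ _
    have hq0 : 0 ≤ (D / k + 1) / ftl P₂ u := by positivity
    have hlow : D / k + 1 ≤ htl P₂ a := by
      have h1 : (u - a) * ftl P₂ u ≤ htl P₂ a :=
        htl_lower P₂ hint₂ (by linarith)
      have h2 : D / k + 1 ≤ (u - a) * ftl P₂ u := by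
        have h3 : (D / k + 1) / ftl P₂ u ≤ u - a := by linarith
        have h4 := mul_le_mul_of_nonneg_right h3 (le_of_lt hε)
        rwa [div_mul_cancel₀ _ (ne_of_gt hε)] at h4
      linarith
    have hbound := hD a ha0
    rw [hra a hac] at hbound
    have : |r * htl P₂ a - htl P₂ a| = k * htl P₂ a := by
      rw [hk, ← sub_one_mul, abs_mul, abs_of_nonneg (htl_nonneg P₂ a)]
    rw [this] at hbound
    have hcontra : D + k ≤ k * htl P₂ a := by
      have := mul_le_mul_of_nonneg_left hlow (le_of_lt hk0)
      calc D + k = k * (D / k + 1) := by field_simp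
        _ ≤ k * htl P₂ a := this
    linarith

end main

section main2
variable (P₁ P₂ : Measure ℝ) [IsProbabilityMeasure P₁] [IsProbabilityMeasure P₂]
variable (hint₁ : Integrable (fun x : ℝ => |x|) P₁) (hint₂ : Integrable (fun x : ℝ => |x|) P₂)
variable (hpos : ∀ t : ℝ, 0 < P₂ (Ici t) → 0 < P₁ (Ici t))
variable (heq : ∀ t : ℝ, 0 < P₂ (Ici t) →
      (∫ x in Ici t, x ∂P₂) / (P₂ (Ici t)).toReal
        = (∫ x in Ici t, x ∂P₁) / (P₁ (Ici t)).toReal)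
include hint₁ hint₂ hpos heq

lemma ioi_eq : ∀ y : ℝ, P₁ (Ioi y) = P₂ (Ioi y) := by
  intro y
  rcases (show 0 ≤ P₂ (Ioi y) from zero_le).eq_or_lt with h | h
  · -- P₂ (Ioi y) = 0
    rw [← h]
    have hT : ∃ c, 0 < P₂ (Ioi c) := by
      by_contra hcon
      push_neg at hcon
      have hz : ∀ c, P₂ (Ioi c) = 0 := fun c => le_antisymm (hcon c) zero_le
      have hU : (univ : Set ℝ) = ⋃ n : ℕ, Ioi (-(n:ℝ) - 1) := by
        ext x
        simp only [mem_univ, mem_iUnion, mem_Ioi, true_iff]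
        obtain ⟨n, hn⟩ := exists_nat_ge (-x)
        exact ⟨n, by linarith⟩
      have : P₂ univ = 0 := by
        rw [hU]; exact measure_iUnion_null fun n => hz _
      rw [measure_univ] at this
      exact one_ne_zero this
    set T := {c : ℝ | 0 < P₂ (Ioi c)} with hTdef
    have hTne : T.Nonempty := hT
    have hTy : ∀ c ∈ T, c < y := by
      intro c hc
      by_contra hcy
      push_neg at hcy
      have h2 : P₂ (Ioi c) ≤ P₂ (Ioi y) := measure_mono (Ioi_subset_Ioi hcy)
      rw [← h] at h2
      exact absurd (le_antisymm h2 zero_le) (ne_of_gt hc)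
    have hbdd : BddAbove T := ⟨y, fun c hc => le_of_lt (hTy c hc)⟩
    set m := sSup T with hm
    have hmy : m ≤ y := csSup_le hTne fun c hc => le_of_lt (hTy c hc)
    have hseq : ∀ n : ℕ, 0 < P₂ (Ioi (m - 1/((n:ℝ)+1))) := by
      intro n
      have hlt : m - 1/((n:ℝ)+1) < m := by
        have : (0:ℝ) < 1/((n:ℝ)+1) := by positivity
        linarith
      obtain ⟨t, htT, hlt'⟩ := exists_lt_of_lt_csSup hTne hlt
      exact lt_of_lt_of_le htT (measure_mono (Ioi_subset_Ioi (le_of_lt hlt')))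
    have hhn : ∀ n : ℕ, htl P₁ (m - 1/((n:ℝ)+1)) = htl P₂ (m - 1/((n:ℝ)+1)) :=
      fun n => htl_eq P₁ P₂ hint₁ hint₂ hpos heq (hseq n)
    have hslim : Tendsto (fun n : ℕ => m - 1/((n:ℝ)+1)) atTop (𝓝 m) := by
      have : Tendsto (fun n : ℕ => 1/((n:ℝ)+1)) atTop (𝓝 0) := by
        simpa using tendsto_one_div_add_atTop_nhds_zero_nat (𝕜 := ℝ)
      simpa using tendsto_const_nhds.sub this
    have ht1 : Tendsto (fun n : ℕ => htl P₁ (m - 1/((n:ℝ)+1))) atTop (𝓝 (htl P₁ m)) :=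
      ((htl_cont P₁ hint₁).tendsto m).comp hslim
    have ht2 : Tendsto (fun n : ℕ => htl P₂ (m - 1/((n:ℝ)+1))) atTop (𝓝 (htl P₂ m)) :=
      ((htl_cont P₂ hint₂).tendsto m).comp hslim
    have hmeq : htl P₁ m = htl P₂ m := by
      apply tendsto_nhds_unique _ ht2
      convert ht1 using 2
      exact (hhn _).symm
    have hH2m : htl P₂ m = 0 := by
      have hzero : EqOn (ftl P₂) 0 (Ioi m) := by
        intro s hs
        have hsT : s ∉ T := fun hsT => absurd (le_csSup hbdd hsT) (not_le.mpr hs)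
        have : P₂ (Ioi s) = 0 := by
          by_contra hne
          exact hsT (lt_of_le_of_ne zero_le (Ne.symm hne))
        simp [ftl, this]
      rw [htl, setIntegral_congr_fun measurableSet_Ioi hzero]
      simp
    have hH1y : htl P₁ y = 0 :=
      le_antisymm (by rw [← hH2m, ← hmeq]; exact htl_anti P₁ hint₁ hmy) (htl_nonneg P₁ y)
    by_contra hne
    have hp1 : 0 < P₁ (Ioi y) := lt_of_le_of_ne zero_le (Ne.symm hne)
    exact absurd hH1y (ne_of_gt (htl_pos P₁ hint₁ hp1))
  · -- 0 < P₂ (Ioi y)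
    have h1 := htl_eq P₁ P₂ hint₁ hint₂ hpos heq h
    have h2 := claimB P₁ P₂ hint₁ hint₂ hpos heq y h
    have h3 : 0 < htl P₂ y := htl_pos P₂ hint₂ h
    have h4 : ftl P₁ y = ftl P₂ y := by
      apply mul_right_cancel₀ (ne_of_gt h3)
      rw [h2, h1]
    exact (ENNReal.toReal_eq_toReal_iff' (measure_ne_top _ _) (measure_ne_top _ _)).mp h4

end main2

theorem stmt_3 (P₁ P₂ : Measure ℝ) [IsProbabilityMeasure P₁] [IsProbabilityMeasure P₂]
    (hint₁ : Integrable (fun x : ℝ => |x|) P₁) (hint₂ : Integrable (fun x : ℝ => |x|) P₂)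
    (hpos : ∀ t : ℝ, 0 < P₂ (Ici t) → 0 < P₁ (Ici t))
    (heq : ∀ t : ℝ, 0 < P₂ (Ici t) →
      (∫ x in Ici t, x ∂P₂) / (P₂ (Ici t)).toReal
        = (∫ x in Ici t, x ∂P₁) / (P₁ (Ici t)).toReal) :
    (∀ t : ℝ, (0 < P₁ (Ici t) ↔ 0 < P₂ (Ici t))) ∧ P₁ = P₂ := by
  have hIoi := ioi_eq P₁ P₂ hint₁ hint₂ hpos heq
  have hIic : ∀ a : ℝ, P₁ (Iic a) = P₂ (Iic a) := by
    intro a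
    have h1 := measure_compl (measurableSet_Ioi (a := a)) (measure_ne_top P₁ _)
    have h2 := measure_compl (measurableSet_Ioi (a := a)) (measure_ne_top P₂ _)
    rw [compl_Ioi] at h1 h2
    rw [h1, h2, measure_univ, measure_univ, hIoi a]
  have hP : P₁ = P₂ := Measure.ext_of_Iic P₁ P₂ hIic
  exact ⟨fun t => by rw [hP], hP⟩
end

section
/- Let X and Y be real-valued random variables. Then X and Y are stochastically independent if and only if for every pair of bounded closed intervals A = [a,b] and B = [c,d] (a < b, c < d) with ℙ(X ∈ A, Y ∈ B) > 0, setting U = {X ∈ A, Y ∈ B}, one has E[XY | U] = E[X | U] · E[Y | U]. -/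
set_option linter.unusedSectionVars false
set_option linter.unusedVariables false
set_option maxHeartbeats 1000000

open MeasureTheory Set Filter Topology
open scoped ENNReal

namespace Stmt5

lemma abs_core (m f g h : ℝ → ℝ → ℝ)
    (madd : ∀ a b c : ℝ, a ≤ b → b ≤ c → m a c = m a b + m b c)
    (fadd : ∀ a b c : ℝ, a ≤ b → b ≤ c → f a c = f a b + f b c)
    (gadd : ∀ a b c : ℝ, a ≤ b → b ≤ c → g a c = g a b + g b c)
    (hadd : ∀ a b c : ℝ, a ≤ b → b ≤ c → h a c = h a b + h b c)
    (hdet : ∀ a b : ℝ, a ≤ b → m a b * h a b = f a b * g a b)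
    (hmnn : ∀ a b : ℝ, a ≤ b → 0 ≤ m a b)
    (hfub : ∀ a b : ℝ, a ≤ b → f a b ≤ b * m a b)
    (hflt : ∀ a b : ℝ, a ≤ b → 0 < m a b → a * m a b < f a b)
    (hg0 : ∀ a b : ℝ, a ≤ b → m a b = 0 → g a b = 0) :
    ∀ a b c d : ℝ, a ≤ b → c ≤ d → g a b * m c d = m a b * g c d := by
  -- Step A : disjoint ordered intervals
  have stepA : ∀ a b c d : ℝ, a ≤ b → b ≤ c → c ≤ d →
      g a b * m c d = m a b * g c d := by
    intro a b c d hab hbc hcd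
    by_cases hm1 : m a b = 0
    · rw [hg0 a b hab hm1, hm1]; ring
    by_cases hm2 : m c d = 0
    · rw [hg0 c d hcd hm2, hm2]; ring
    have hm1' : 0 < m a b := (hmnn a b hab).lt_of_ne (Ne.symm hm1)
    have hm2' : 0 < m c d := (hmnn c d hcd).lt_of_ne (Ne.symm hm2)
    have hac : a ≤ c := hab.trans hbc
    have hbd : b ≤ d := hbc.trans hcd
    have had : a ≤ d := hab.trans hbd
    have EAC : (m a b + m b c) * (h a b + h b c) = (f a b + f b c) * (g a b + g b c) := by
      rw [← madd a b c hab hbc, ← fadd a b c hab hbc, ← gadd a b c hab hbc,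
        ← hadd a b c hab hbc]
      exact hdet a c hac
    have EBD : (m b c + m c d) * (h b c + h c d) = (f b c + f c d) * (g b c + g c d) := by
      rw [← madd b c d hbc hcd, ← fadd b c d hbc hcd, ← gadd b c d hbc hcd,
        ← hadd b c d hbc hcd]
      exact hdet b d hbd
    have EAD : (m a b + (m b c + m c d)) * (h a b + (h b c + h c d))
        = (f a b + (f b c + f c d)) * (g a b + (g b c + g c d)) := by
      rw [← madd b c d hbc hcd, ← fadd b c d hbc hcd, ← gadd b c d hbc hcd,
        ← hadd b c d hbc hcd, ← madd a b d hab hbd, ← fadd a b d hab hbd,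
        ← gadd a b d hab hbd, ← hadd a b d hab hbd]
      exact hdet a d had
    have P : m a b * h c d + m c d * h a b = f a b * g c d + f c d * g a b := by
      linear_combination EAD - EAC - EBD + hdet b c hbc
    have key : (m a b * f c d - m c d * f a b) * (m a b * g c d - m c d * g a b) = 0 := by
      linear_combination (-(m a b)^2) * hdet c d hcd - (m c d)^2 * hdet a b hab
        + (m a b * m c d) * P
    have hfpos : 0 < m a b * f c d - m c d * f a b := by
      have h1 : f a b ≤ b * m a b := hfub a b hab
      have h2 : c * m c d < f c d := hflt c d hcd hm2'
      nlinarith [mul_lt_mul_of_pos_left h2 hm1', mul_le_mul_of_nonneg_right h1 hm2'.le,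
        mul_le_mul_of_nonneg_left (mul_le_mul_of_nonneg_right hbc hm2'.le) hm1'.le]
    have key2 : m a b * g c d - m c d * g a b = 0 :=
      (mul_eq_zero.mp key).resolve_left (ne_of_gt hfpos)
    linear_combination -key2
  -- Step B : nested intervals
  have stepB : ∀ a' a b b' : ℝ, a' ≤ a → a ≤ b → b ≤ b' →
      g a b * m a' b' = m a b * g a' b' := by
    intro a' a b b' h1 h2 h3
    have d1 := stepA a' a a b h1 le_rfl h2
    have d2 := stepA a b b b' h2 le_rfl h3
    have em : m a' b' = m a' a + m a b + m b b' := by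
      rw [madd a' a b' h1 (h2.trans h3), madd a b b' h2 h3]; ring
    have eg : g a' b' = g a' a + g a b + g b b' := by
      rw [gadd a' a b' h1 (h2.trans h3), gadd a b b' h2 h3]; ring
    rw [em, eg]
    linear_combination d2 - d1
  -- final
  intro a b c d hab hcd
  set lo := min a c with hlo
  set hi := max b d with hhi
  have h1 : lo ≤ a := min_le_left a c
  have h2 : b ≤ hi := le_max_left b d
  have h3 : lo ≤ c := min_le_right a c
  have h4 : d ≤ hi := le_max_right b d
  by_cases hC : m lo hi = 0
  · have e1 : m lo hi = m lo a + m a b + m b hi := by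
      rw [madd lo a hi h1 (hab.trans h2), madd a b hi hab h2]; ring
    have e2 : m lo hi = m lo c + m c d + m d hi := by
      rw [madd lo c hi h3 (hcd.trans h4), madd c d hi hcd h4]; ring
    have hm1 : m a b = 0 := by
      have := hmnn lo a h1; have := hmnn b hi h2; have := hmnn a b hab; linarith
    have hm2 : m c d = 0 := by
      have := hmnn lo c h3; have := hmnn d hi h4; have := hmnn c d hcd; linarith
    rw [hg0 a b hab hm1, hm1, hm2]; ring
  · have e1 := stepB lo a b hi h1 hab h2
    have e2 := stepB lo c d hi h3 hcd h4
    have : (g a b * m c d) * m lo hi = (m a b * g c d) * m lo hi := by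
      linear_combination m c d * e1 - m a b * e2
    exact mul_right_cancel₀ hC this

variable {Ω : Type*} [MeasurableSpace Ω] (P : Measure Ω) [IsProbabilityMeasure P]

/-- the half-open rectangle event -/
def U (X Y : Ω → ℝ) (a b c d : ℝ) : Set Ω := X ⁻¹' Ioc a b ∩ Y ⁻¹' Ioc c d

/-- the closed rectangle event -/
def W (X Y : Ω → ℝ) (a b c d : ℝ) : Set Ω := X ⁻¹' Icc a b ∩ Y ⁻¹' Icc c d

variable {X Y : Ω → ℝ}

lemma Uswap (a b c d : ℝ) : U Y X c d a b = U X Y a b c d := inter_comm _ _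

lemma Umeas (hX : Measurable X) (hY : Measurable Y) {a b c d : ℝ} :
    MeasurableSet (U X Y a b c d) :=
  (hX measurableSet_Ioc).inter (hY measurableSet_Ioc)

lemma Wmeas (hX : Measurable X) (hY : Measurable Y) {a b c d : ℝ} :
    MeasurableSet (W X Y a b c d) :=
  (hX measurableSet_Icc).inter (hY measurableSet_Icc)

lemma W_eq (a b c d : ℝ) :
    {ω | X ω ∈ Icc a b ∧ Y ω ∈ Icc c d} = W X Y a b c d := rfl

lemma intOn_bdd {S : Set Ω} (hS : MeasurableSet S) {Z : Ω → ℝ} (hZ : Measurable Z)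
    (M : ℝ) (hM : ∀ ω ∈ S, |Z ω| ≤ M) : IntegrableOn Z S P :=
  Measure.integrableOn_of_bounded (measure_ne_top P S) hZ.aestronglyMeasurable
    ((ae_restrict_iff' hS).2 (Filter.Eventually.of_forall fun ω hω => by
      simpa [Real.norm_eq_abs] using hM ω hω))

lemma intX (hX : Measurable X) (hY : Measurable Y) (a b c d : ℝ) :
    IntegrableOn X (U X Y a b c d) P := by
  refine intOn_bdd P (Umeas hX hY) hX (|a| + |b|) fun ω hω => ?_
  have h1 : a < X ω := hω.1.1
  have h2 : X ω ≤ b := hω.1.2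
  rw [abs_le]
  constructor <;>
    · have := neg_abs_le a; have := le_abs_self b; have := abs_nonneg a
      have := abs_nonneg b; linarith

lemma intY (hX : Measurable X) (hY : Measurable Y) (a b c d : ℝ) :
    IntegrableOn Y (U X Y a b c d) P := by
  rw [← Uswap]; exact intX P hY hX c d a b

lemma intXY (hX : Measurable X) (hY : Measurable Y) (a b c d : ℝ) :
    IntegrableOn (fun ω => X ω * Y ω) (U X Y a b c d) P := by
  refine intOn_bdd P (Umeas hX hY) (hX.mul hY) ((|a| + |b|) * (|c| + |d|)) fun ω hω => ?_
  have h1 : a < X ω := hω.1.1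
  have h2 : X ω ≤ b := hω.1.2
  have h3 : c < Y ω := hω.2.1
  have h4 : Y ω ≤ d := hω.2.2
  rw [abs_mul]
  have hxb : |X ω| ≤ |a| + |b| := by
    rw [abs_le]; constructor <;>
      · have := neg_abs_le a; have := le_abs_self b; have := abs_nonneg a
        have := abs_nonneg b; linarith
  have hyb : |Y ω| ≤ |c| + |d| := by
    rw [abs_le]; constructor <;>
      · have := neg_abs_le c; have := le_abs_self d; have := abs_nonneg c
        have := abs_nonneg d; linarith
  exact mul_le_mul hxb hyb (abs_nonneg _) (by positivity)

lemma intYX (hX : Measurable X) (hY : Measurable Y) (a b c d : ℝ) :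
    IntegrableOn (fun ω => Y ω * X ω) (U X Y a b c d) P := by
  rw [← Uswap]; exact intXY P hY hX c d a b

lemma Usplit {a b c e f : ℝ} (hab : a ≤ b) (hbc : b ≤ c) :
    U X Y a c e f = U X Y a b e f ∪ U X Y b c e f := by
  unfold U
  rw [← Ioc_union_Ioc_eq_Ioc hab hbc, preimage_union, union_inter_distrib_right]

lemma Udisj {a b c e f : ℝ} :
    Disjoint (U X Y a b e f) (U X Y b c e f) :=
  Set.disjoint_left.2 fun ω h1 h2 => absurd h2.1.1 (not_lt.2 h1.1.2)

lemma mm_add (hX : Measurable X) (hY : Measurable Y) {a b c : ℝ} (e f : ℝ)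
    (hab : a ≤ b) (hbc : b ≤ c) :
    (P (U X Y a c e f)).toReal
      = (P (U X Y a b e f)).toReal + (P (U X Y b c e f)).toReal := by
  rw [Usplit hab hbc, measure_union Udisj (Umeas hX hY),
    ENNReal.toReal_add (measure_ne_top _ _) (measure_ne_top _ _)]

lemma int_add {Z : Ω → ℝ} (hZ : ∀ a b c d : ℝ, IntegrableOn Z (U X Y a b c d) P)
    (hX : Measurable X) (hY : Measurable Y) {a b c : ℝ} (e f : ℝ)
    (hab : a ≤ b) (hbc : b ≤ c) :
    (∫ ω in U X Y a c e f, Z ω ∂P)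
      = (∫ ω in U X Y a b e f, Z ω ∂P) + ∫ ω in U X Y b c e f, Z ω ∂P := by
  rw [Usplit hab hbc, setIntegral_union Udisj (Umeas hX hY) (hZ a b e f) (hZ b c e f)]

lemma f_ub (hX : Measurable X) (hY : Measurable Y) {a b : ℝ} (c d : ℝ) (hab : a ≤ b) :
    (∫ ω in U X Y a b c d, X ω ∂P) ≤ b * (P (U X Y a b c d)).toReal := by
  have h := setIntegral_mono_on (intX P hX hY a b c d)
    (integrableOn_const (measure_ne_top P _)) (Umeas hX hY)
    (fun ω hω => hω.1.2)
  rw [setIntegral_const] at h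
  simpa [mul_comm, Measure.real] using h

lemma f_lt (hX : Measurable X) (hY : Measurable Y) {a b : ℝ} (c d : ℝ) (hab : a ≤ b)
    (hpos : 0 < (P (U X Y a b c d)).toReal) :
    a * (P (U X Y a b c d)).toReal < ∫ ω in U X Y a b c d, X ω ∂P := by
  have hne : P (U X Y a b c d) ≠ 0 := by
    intro h0; rw [h0] at hpos; simp at hpos
  have hsub : IntegrableOn (fun ω => X ω - a) (U X Y a b c d) P :=
    (intX P hX hY a b c d).sub (integrableOn_const (measure_ne_top P _))
  have hpos2 : 0 < ∫ ω in U X Y a b c d, (X ω - a) ∂P := by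
    rw [setIntegral_pos_iff_support_of_nonneg_ae _ hsub]
    · refine lt_of_lt_of_le (pos_iff_ne_zero.2 hne) (measure_mono ?_)
      intro ω hω
      exact ⟨fun hz => absurd (by linarith [(sub_eq_zero.1 hz)] : X ω ≤ a)
        (not_le.2 hω.1.1), hω⟩
    · refine (ae_restrict_iff' (Umeas hX hY)).2 (Filter.Eventually.of_forall ?_)
      intro ω hω
      have := hω.1.1
      simp only [Pi.zero_apply]
      linarith
  rw [integral_sub (intX P hX hY a b c d)
    (integrableOn_const (measure_ne_top P _)), setIntegral_const] at hpos2
  simp only [smul_eq_mul, Measure.real] at hpos2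
  linarith

lemma g_zero {Z : Ω → ℝ} {a b c d : ℝ} (h0 : P (U X Y a b c d) = 0) :
    (∫ ω in U X Y a b c d, Z ω ∂P) = 0 := by
  rw [Measure.restrict_eq_zero.2 h0, integral_zero_measure]

lemma HV (H : ∀ a b c d : ℝ, a < b → c < d →
      0 < P {ω | X ω ∈ Icc a b ∧ Y ω ∈ Icc c d} →
      cexp P {ω | X ω ∈ Icc a b ∧ Y ω ∈ Icc c d} (fun ω => X ω * Y ω)
        = cexp P {ω | X ω ∈ Icc a b ∧ Y ω ∈ Icc c d} X
          * cexp P {ω | X ω ∈ Icc a b ∧ Y ω ∈ Icc c d} Y)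
    {a b c d : ℝ} (hab : a < b) (hcd : c < d) :
    (P (W X Y a b c d)).toReal * (∫ ω in W X Y a b c d, X ω * Y ω ∂P)
      = (∫ ω in W X Y a b c d, X ω ∂P) * ∫ ω in W X Y a b c d, Y ω ∂P := by
  by_cases hp : P (W X Y a b c d) = 0
  · rw [Measure.restrict_eq_zero.2 hp]
    simp [hp]
  · have hpos : 0 < P {ω | X ω ∈ Icc a b ∧ Y ω ∈ Icc c d} := by
      rw [W_eq]; exact pos_iff_ne_zero.2 hp
    have h := H a b c d hab hcd hpos
    rw [W_eq] at h
    unfold cexp at h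
    set t := (P (W X Y a b c d)).toReal with hts
    have ht : 0 < t := ENNReal.toReal_pos hp (measure_ne_top _ _)
    rw [div_mul_div_comm, div_eq_div_iff ht.ne' (by positivity)] at h
    have h2 : (∫ ω in W X Y a b c d, X ω * Y ω ∂P) * (t * t)
        = ((∫ ω in W X Y a b c d, X ω ∂P) * ∫ ω in W X Y a b c d, Y ω ∂P) * t := h
    refine mul_right_cancel₀ ht.ne' ?_
    linear_combination h2

lemma dagger (hX : Measurable X) (hY : Measurable Y)
    (H : ∀ a b c d : ℝ, a < b → c < d →
      0 < P {ω | X ω ∈ Icc a b ∧ Y ω ∈ Icc c d} →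
      cexp P {ω | X ω ∈ Icc a b ∧ Y ω ∈ Icc c d} (fun ω => X ω * Y ω)
        = cexp P {ω | X ω ∈ Icc a b ∧ Y ω ∈ Icc c d} X
          * cexp P {ω | X ω ∈ Icc a b ∧ Y ω ∈ Icc c d} Y)
    (a b c d : ℝ) :
    (P (U X Y a b c d)).toReal * (∫ ω in U X Y a b c d, X ω * Y ω ∂P)
      = (∫ ω in U X Y a b c d, X ω ∂P) * ∫ ω in U X Y a b c d, Y ω ∂P := by
  by_cases hab : a < b
  · by_cases hcd : c < d
    · -- the limiting argument
      set E := min (b - a) (d - c) with hE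
      have hE0 : 0 < E := lt_min (by linarith) (by linarith)
      set e : ℕ → ℝ := fun n => E / (n + 2) with he
      have he0 : ∀ n, 0 < e n := fun n => div_pos hE0 (by positivity)
      have heanti : ∀ n m, n ≤ m → e m ≤ e n := by
        intro n m hnm
        apply div_le_div_of_nonneg_left hE0.le (by positivity)
        have : (n : ℝ) ≤ m := Nat.cast_le.2 hnm
        linarith
      have heb : ∀ n, e n < b - a := by
        intro n
        have h1 : e n ≤ E / 2 := by
          apply div_le_div_of_nonneg_left hE0.le (by norm_num)
          have : (0:ℝ) ≤ n := Nat.cast_nonneg n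
          linarith
        have h2 : E ≤ b - a := min_le_left _ _
        linarith
      have hed : ∀ n, e n < d - c := by
        intro n
        have h1 : e n ≤ E / 2 := by
          apply div_le_div_of_nonneg_left hE0.le (by norm_num)
          have : (0:ℝ) ≤ n := Nat.cast_nonneg n
          linarith
        have h2 : E ≤ d - c := min_le_right _ _
        linarith
      set s : ℕ → Set Ω := fun n => W X Y (a + e n) b (c + e n) d with hs
      have hsm : ∀ n, MeasurableSet (s n) := fun n => Wmeas hX hY
      have hmono : Monotone s := by
        intro n m hnm ω hω
        have h := heanti n m hnm
        exact ⟨⟨by linarith [hω.1.1], hω.1.2⟩, ⟨by linarith [hω.2.1], hω.2.2⟩⟩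
      have hunion : (⋃ n, s n) = U X Y a b c d := by
        ext ω
        simp only [mem_iUnion, hs, W, U, mem_inter_iff, mem_preimage, mem_Icc, mem_Ioc]
        constructor
        · rintro ⟨n, ⟨hx1, hx2⟩, hy1, hy2⟩
          exact ⟨⟨by linarith [he0 n], hx2⟩, ⟨by linarith [he0 n], hy2⟩⟩
        · rintro ⟨⟨hx1, hx2⟩, hy1, hy2⟩
          set δ := min (X ω - a) (Y ω - c) with hδdef
          have hδ : 0 < δ := lt_min (by linarith) (by linarith)
          obtain ⟨n, hn⟩ := exists_nat_gt (E / δ)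
          have hen : e n ≤ δ := by
            rw [div_le_iff₀ (by positivity)]
            have h1 : E < n * δ := by
              have := (div_lt_iff₀ hδ).1 hn
              linarith
            nlinarith [hδ.le, Nat.cast_nonneg (α := ℝ) n]
          refine ⟨n, ⟨?_, hx2⟩, ?_, hy2⟩
          · have : δ ≤ X ω - a := min_le_left _ _
            linarith
          · have : δ ≤ Y ω - c := min_le_right _ _
            linarith
      -- tendsto statements
      have hm_t : Tendsto (fun n => (P (s n)).toReal) atTop
          (𝓝 (P (U X Y a b c d)).toReal) := by
        have h1 := tendsto_measure_iUnion_atTop (μ := P) hmono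
        rw [hunion] at h1
        exact (ENNReal.tendsto_toReal (measure_ne_top _ _)).comp h1
      have hXY_t : Tendsto (fun n => ∫ ω in s n, X ω * Y ω ∂P) atTop
          (𝓝 (∫ ω in U X Y a b c d, X ω * Y ω ∂P)) := by
        have := tendsto_setIntegral_of_monotone hsm hmono
          (by rw [hunion]; exact intXY P hX hY a b c d)
        rwa [hunion] at this
      have hX_t : Tendsto (fun n => ∫ ω in s n, X ω ∂P) atTop
          (𝓝 (∫ ω in U X Y a b c d, X ω ∂P)) := by
        have := tendsto_setIntegral_of_monotone hsm hmono
          (by rw [hunion]; exact intX P hX hY a b c d)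
        rwa [hunion] at this
      have hY_t : Tendsto (fun n => ∫ ω in s n, Y ω ∂P) atTop
          (𝓝 (∫ ω in U X Y a b c d, Y ω ∂P)) := by
        have := tendsto_setIntegral_of_monotone hsm hmono
          (by rw [hunion]; exact intY P hX hY a b c d)
        rwa [hunion] at this
      have heq : ∀ n, (P (s n)).toReal * ∫ ω in s n, X ω * Y ω ∂P
          = (∫ ω in s n, X ω ∂P) * ∫ ω in s n, Y ω ∂P := fun n =>
        HV P H (by linarith [heb n, he0 n]) (by linarith [hed n, he0 n])
      exact tendsto_nhds_unique ((hm_t.mul hXY_t).congr heq) (hX_t.mul hY_t)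
    · have hU : U X Y a b c d = ∅ := by
        unfold U; rw [Ioc_eq_empty hcd]; simp
      rw [hU]; simp
  · have hU : U X Y a b c d = ∅ := by
      unfold U; rw [Ioc_eq_empty hab]; simp
    rw [hU]; simp

lemma key_prod (hX : Measurable X) (hY : Measurable Y)
    (H : ∀ a b c d : ℝ, a < b → c < d →
      0 < P {ω | X ω ∈ Icc a b ∧ Y ω ∈ Icc c d} →
      cexp P {ω | X ω ∈ Icc a b ∧ Y ω ∈ Icc c d} (fun ω => X ω * Y ω)
        = cexp P {ω | X ω ∈ Icc a b ∧ Y ω ∈ Icc c d} X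
          * cexp P {ω | X ω ∈ Icc a b ∧ Y ω ∈ Icc c d} Y) :
    ∀ a b c d : ℝ,
      P (U X Y a b c d) = P (X ⁻¹' Ioc a b) * P (Y ⁻¹' Ioc c d) := by
  -- Application 1 of the core lemma: conditional mean of Y does not depend on the X-window
  have factB : ∀ c d p q p' q' : ℝ, p ≤ q → p' ≤ q' →
      (∫ ω in U X Y p q c d, Y ω ∂P) * (P (U X Y p' q' c d)).toReal
        = (P (U X Y p q c d)).toReal * ∫ ω in U X Y p' q' c d, Y ω ∂P := by
    intro c d
    refine abs_core (fun p q => (P (U X Y p q c d)).toReal)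
      (fun p q => ∫ ω in U X Y p q c d, X ω ∂P)
      (fun p q => ∫ ω in U X Y p q c d, Y ω ∂P)
      (fun p q => ∫ ω in U X Y p q c d, X ω * Y ω ∂P)
      (fun p q r h1 h2 => mm_add P hX hY c d h1 h2)
      (fun p q r h1 h2 => int_add P (fun p' q' c' d' => intX P hX hY p' q' c' d') hX hY c d h1 h2)
      (fun p q r h1 h2 => int_add P (fun p' q' c' d' => intY P hX hY p' q' c' d') hX hY c d h1 h2)
      (fun p q r h1 h2 => int_add P (fun p' q' c' d' => intXY P hX hY p' q' c' d') hX hY c d h1 h2)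
      (fun p q h1 => dagger P hX hY H p q c d)
      (fun p q h1 => ENNReal.toReal_nonneg)
      (fun p q h1 => f_ub P hX hY c d h1)
      (fun p q h1 h2 => f_lt P hX hY c d h1 h2)
      (fun p q h1 h0 => g_zero P (by
        have := (ENNReal.toReal_eq_zero_iff _).1 h0
        exact this.resolve_right (measure_ne_top _ _)))
  -- Application 2: the measure of the window factorizes
  have app2 : ∀ a b a' b' : ℝ, a' ≤ a → a ≤ b → b ≤ b' →
      ∀ r s r' s' : ℝ, r ≤ s → r' ≤ s' →
      (P (U X Y a b r s)).toReal * (P (U X Y a' b' r' s')).toReal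
        = (P (U X Y a' b' r s)).toReal * (P (U X Y a b r' s')).toReal := by
    intro a b a' b' h1 h2 h3
    have ha'b' : a' ≤ b' := h1.trans (h2.trans h3)
    have conc := abs_core
      (fun r s => (P (U Y X r s a' b')).toReal)
      (fun r s => ∫ ω in U Y X r s a' b', Y ω ∂P)
      (fun r s => (P (U Y X r s a b)).toReal)
      (fun r s => ∫ ω in U Y X r s a b, Y ω ∂P)
      (fun p q r hpq hqr => mm_add P hY hX a' b' hpq hqr)
      (fun p q r hpq hqr => int_add P (fun p' q' c' d' => intX P hY hX p' q' c' d') hY hX a' b' hpq hqr)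
      (fun p q r hpq hqr => mm_add P hY hX a b hpq hqr)
      (fun p q r hpq hqr => int_add P (fun p' q' c' d' => intX P hY hX p' q' c' d') hY hX a b hpq hqr)
      (fun r s hrs => by
        simp only [Uswap]
        exact (factB r s a' b' a b ha'b' h2).symm)
      (fun r s hrs => ENNReal.toReal_nonneg)
      (fun r s hrs => f_ub P hY hX a' b' hrs)
      (fun r s hrs hpos => f_lt P hY hX a' b' hrs hpos)
      (fun r s hrs h0 => by
        have hsub : U Y X r s a b ⊆ U Y X r s a' b' :=
          inter_subset_inter_right _ (preimage_mono (Ioc_subset_Ioc h1 h3))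
        have h00 : P (U Y X r s a' b') = 0 :=
          ((ENNReal.toReal_eq_zero_iff _).1 h0).resolve_right (measure_ne_top _ _)
        have hz : P (U Y X r s a b) = 0 :=
          le_antisymm ((measure_mono hsub).trans h00.le) (by simp)
        show (P (U Y X r s a b)).toReal = 0
        rw [hz]; simp)
    intro r s r' s' hrs hr's'
    have := conc r s r' s' hrs hr's'
    simpa only [Uswap] using this
  -- limits
  intro a b c d
  by_cases hab : a < b
  · by_cases hcd : c < d
    · set an : ℕ → ℝ := fun n => min a (-(n:ℝ)) with han
      set bn : ℕ → ℝ := fun n => max b n with hbn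
      have hanle : ∀ n, an n ≤ a := fun n => min_le_left _ _
      have hbnle : ∀ n, b ≤ bn n := fun n => le_max_left _ _
      have hmain : ∀ n : ℕ,
          (P (U X Y a b c d)).toReal * (P (U X Y (an n) (bn n) (an n) (bn n))).toReal
            = (P (U X Y (an n) (bn n) c d)).toReal
              * (P (U X Y a b (an n) (bn n))).toReal := by
        intro n
        exact app2 a b (an n) (bn n) (hanle n) hab.le (hbnle n) c d (an n) (bn n) hcd.le
          ((hanle n).trans (hab.le.trans (hbnle n)))
      -- three monotone unions
      have hcast : ∀ n m : ℕ, n ≤ m → an m ≤ an n ∧ bn n ≤ bn m := by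
        intro n m hnm
        have : (n:ℝ) ≤ m := Nat.cast_le.2 hnm
        constructor
        · exact min_le_min le_rfl (by linarith)
        · exact max_le_max le_rfl this
      have hsubIoc : ∀ n m : ℕ, n ≤ m → Ioc (an n) (bn n) ⊆ Ioc (an m) (bn m) :=
        fun n m hnm => Ioc_subset_Ioc (hcast n m hnm).1 (hcast n m hnm).2
      have hmemIoc : ∀ x : ℝ, ∃ N : ℕ, ∀ n, N ≤ n → x ∈ Ioc (an n) (bn n) := by
        intro x
        obtain ⟨N, hN⟩ := exists_nat_gt (|x|)
        refine ⟨N, fun n hn => ?_⟩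
        have hNn : (N:ℝ) ≤ n := Nat.cast_le.2 hn
        have h1 : |x| < n := lt_of_lt_of_le hN hNn
        have h2 := abs_lt.1 h1
        constructor
        · exact lt_of_le_of_lt (min_le_right _ _) (by linarith)
        · exact le_trans (by linarith) (le_max_right b n)
      -- limit 1 : full window tends to univ
      have t1 : Tendsto (fun n => (P (U X Y (an n) (bn n) (an n) (bn n))).toReal) atTop
          (𝓝 1) := by
        have hmono : Monotone fun n => U X Y (an n) (bn n) (an n) (bn n) := by
          intro n m hnm ω hω
          exact ⟨hsubIoc n m hnm hω.1, hsubIoc n m hnm hω.2⟩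
        have huni : (⋃ n, U X Y (an n) (bn n) (an n) (bn n)) = univ := by
          rw [eq_univ_iff_forall]
          intro ω
          obtain ⟨N1, h1⟩ := hmemIoc (X ω)
          obtain ⟨N2, h2⟩ := hmemIoc (Y ω)
          exact mem_iUnion.2 ⟨max N1 N2, h1 _ (le_max_left _ _), h2 _ (le_max_right _ _)⟩
        have h := tendsto_measure_iUnion_atTop (μ := P) hmono
        rw [huni, measure_univ] at h
        have := (ENNReal.tendsto_toReal (by norm_num : (1:ℝ≥0∞) ≠ ⊤)).comp h
        simpa [Function.comp_def] using this
      -- limit 2 : X-window opens up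
      have t2 : Tendsto (fun n => (P (U X Y (an n) (bn n) c d)).toReal) atTop
          (𝓝 (P (Y ⁻¹' Ioc c d)).toReal) := by
        have hmono : Monotone fun n => U X Y (an n) (bn n) c d := by
          intro n m hnm ω hω
          exact ⟨hsubIoc n m hnm hω.1, hω.2⟩
        have huni : (⋃ n, U X Y (an n) (bn n) c d) = Y ⁻¹' Ioc c d := by
          ext ω
          simp only [mem_iUnion, U, mem_inter_iff, mem_preimage]
          constructor
          · rintro ⟨n, h1, h2⟩; exact h2
          · intro h
            obtain ⟨N1, h1⟩ := hmemIoc (X ω)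
            exact ⟨N1, h1 _ le_rfl, h⟩
        have h := tendsto_measure_iUnion_atTop (μ := P) hmono
        rw [huni] at h
        exact (ENNReal.tendsto_toReal (measure_ne_top _ _)).comp h
      -- limit 3 : Y-window opens up
      have t3 : Tendsto (fun n => (P (U X Y a b (an n) (bn n))).toReal) atTop
          (𝓝 (P (X ⁻¹' Ioc a b)).toReal) := by
        have hmono : Monotone fun n => U X Y a b (an n) (bn n) := by
          intro n m hnm ω hω
          exact ⟨hω.1, hsubIoc n m hnm hω.2⟩
        have huni : (⋃ n, U X Y a b (an n) (bn n)) = X ⁻¹' Ioc a b := by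
          ext ω
          simp only [mem_iUnion, U, mem_inter_iff, mem_preimage]
          constructor
          · rintro ⟨n, h1, h2⟩; exact h1
          · intro h
            obtain ⟨N1, h1⟩ := hmemIoc (Y ω)
            exact ⟨N1, h, h1 _ le_rfl⟩
        have h := tendsto_measure_iUnion_atTop (μ := P) hmono
        rw [huni] at h
        exact (ENNReal.tendsto_toReal (measure_ne_top _ _)).comp h
      have tl : Tendsto (fun n => (P (U X Y a b c d)).toReal
          * (P (U X Y (an n) (bn n) (an n) (bn n))).toReal) atTop
          (𝓝 ((P (U X Y a b c d)).toReal * 1)) := tendsto_const_nhds.mul t1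
      have tr : Tendsto (fun n => (P (U X Y a b c d)).toReal
          * (P (U X Y (an n) (bn n) (an n) (bn n))).toReal) atTop
          (𝓝 ((P (Y ⁻¹' Ioc c d)).toReal * (P (X ⁻¹' Ioc a b)).toReal)) := by
        refine Tendsto.congr (fun n => (hmain n).symm) (t2.mul t3)
      have hfin := tendsto_nhds_unique tl tr
      rw [mul_one] at hfin
      rw [← ENNReal.toReal_eq_toReal_iff' (measure_ne_top _ _)
        (ENNReal.mul_ne_top (measure_ne_top _ _) (measure_ne_top _ _)),
        ENNReal.toReal_mul]
      linarith
    · have h1 : Ioc c d = (∅ : Set ℝ) := Ioc_eq_empty hcd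
      have h2 : U X Y a b c d = ∅ := by unfold U; rw [h1]; simp
      rw [h2, h1]
      simp
  · have h1 : Ioc a b = (∅ : Set ℝ) := Ioc_eq_empty hab
    have h2 : U X Y a b c d = ∅ := by unfold U; rw [h1]; simp
    rw [h2, h1]
    simp

lemma reverse (hX : Measurable X) (hY : Measurable Y)
    (H : ∀ a b c d : ℝ, a < b → c < d →
      0 < P {ω | X ω ∈ Icc a b ∧ Y ω ∈ Icc c d} →
      cexp P {ω | X ω ∈ Icc a b ∧ Y ω ∈ Icc c d} (fun ω => X ω * Y ω)
        = cexp P {ω | X ω ∈ Icc a b ∧ Y ω ∈ Icc c d} X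
          * cexp P {ω | X ω ∈ Icc a b ∧ Y ω ∈ Icc c d} Y) :
    Measure.map (fun ω => (X ω, Y ω)) P = (Measure.map X P).prod (Measure.map Y P) := by
  haveI h1 : IsProbabilityMeasure (Measure.map X P) := Measure.isProbabilityMeasure_map hX.aemeasurable
  haveI h2 : IsProbabilityMeasure (Measure.map Y P) := Measure.isProbabilityMeasure_map hY.aemeasurable
  have hpair : Measurable fun ω => (X ω, Y ω) := hX.prodMk hY
  haveI h3 : IsProbabilityMeasure (Measure.map (fun ω => (X ω, Y ω)) P) :=
    Measure.isProbabilityMeasure_map hpair.aemeasurable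
  have hC : (inferInstance : MeasurableSpace ℝ)
      = MeasurableSpace.generateFrom { S : Set ℝ | ∃ l u, l < u ∧ Ioc l u = S } := by
    rw [BorelSpace.measurable_eq (α := ℝ)]
    exact borel_eq_generateFrom_Ioc ℝ
  have hCspan : IsCountablySpanning { S : Set ℝ | ∃ l u, l < u ∧ Ioc l u = S } := by
    refine ⟨fun n => Ioc (-(n:ℝ)-1) (n+1), fun n => ⟨-(n:ℝ)-1, n+1, by
      have : (0:ℝ) ≤ n := Nat.cast_nonneg n
      linarith, rfl⟩, ?_⟩
    ext x
    simp only [mem_iUnion, mem_Ioc, mem_univ, iff_true]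
    obtain ⟨n, hn⟩ := exists_nat_gt |x|
    have hx := abs_lt.1 hn
    exact ⟨n, by linarith [hx.1], by linarith [hx.2]⟩
  have hPgen : (inferInstance : MeasurableSpace (ℝ × ℝ))
      = MeasurableSpace.generateFrom
          (image2 (· ×ˢ ·) { S : Set ℝ | ∃ l u, l < u ∧ Ioc l u = S }
            { S : Set ℝ | ∃ l u, l < u ∧ Ioc l u = S }) := by
    rw [← generateFrom_prod_eq hCspan hCspan, ← hC]
  refine MeasureTheory.ext_of_generate_finite _ hPgen
    ((isPiSystem_Ioc (id : ℝ → ℝ) (id : ℝ → ℝ)).prod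
      (isPiSystem_Ioc (id : ℝ → ℝ) (id : ℝ → ℝ))) ?_ ?_
  · rintro S ⟨s, ⟨l, u, hlu, rfl⟩, t, ⟨l', u', hl'u', rfl⟩, rfl⟩
    rw [Measure.map_apply hpair (measurableSet_Ioc.prod measurableSet_Ioc),
      Measure.prod_prod, Measure.map_apply hX measurableSet_Ioc,
      Measure.map_apply hY measurableSet_Ioc, mk_preimage_prod]
    exact key_prod P hX hY H l u l' u'
  · simp [measure_univ]

lemma forward (hX : Measurable X) (hY : Measurable Y)
    (hmap : Measure.map (fun ω => (X ω, Y ω)) P = (Measure.map X P).prod (Measure.map Y P))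
    {a b c d : ℝ} (hab : a < b) (hcd : c < d)
    (hpos : 0 < P {ω | X ω ∈ Icc a b ∧ Y ω ∈ Icc c d}) :
    cexp P {ω | X ω ∈ Icc a b ∧ Y ω ∈ Icc c d} (fun ω => X ω * Y ω)
      = cexp P {ω | X ω ∈ Icc a b ∧ Y ω ∈ Icc c d} X
        * cexp P {ω | X ω ∈ Icc a b ∧ Y ω ∈ Icc c d} Y := by
  haveI h1 : IsProbabilityMeasure (Measure.map X P) := Measure.isProbabilityMeasure_map hX.aemeasurable
  haveI h2 : IsProbabilityMeasure (Measure.map Y P) := Measure.isProbabilityMeasure_map hY.aemeasurable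
  have hpair : Measurable fun ω => (X ω, Y ω) := hX.prodMk hY
  have hrect : MeasurableSet (Icc a b ×ˢ Icc c d : Set (ℝ × ℝ)) :=
    measurableSet_Icc.prod measurableSet_Icc
  have hWpre : {ω | X ω ∈ Icc a b ∧ Y ω ∈ Icc c d}
      = (fun ω => (X ω, Y ω)) ⁻¹' (Icc a b ×ˢ Icc c d) := by
    rw [mk_preimage_prod]; rfl
  have hPU : P {ω | X ω ∈ Icc a b ∧ Y ω ∈ Icc c d}
      = (Measure.map X P) (Icc a b) * (Measure.map Y P) (Icc c d) := by
    rw [hWpre, ← Measure.map_apply hpair hrect, hmap, Measure.prod_prod]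
  set p := ((Measure.map X P) (Icc a b)).toReal with hp
  set q := ((Measure.map Y P) (Icc c d)).toReal with hq
  set A := ∫ x in Icc a b, x ∂(Measure.map X P) with hA
  set B := ∫ y in Icc c d, y ∂(Measure.map Y P) with hB
  have hIXY : ∫ ω in {ω | X ω ∈ Icc a b ∧ Y ω ∈ Icc c d}, X ω * Y ω ∂P = A * B := by
    have hh : ∫ z in Icc a b ×ˢ Icc c d, z.1 * z.2 ∂(Measure.map (fun ω => (X ω, Y ω)) P)
        = ∫ ω in (fun ω => (X ω, Y ω)) ⁻¹' (Icc a b ×ˢ Icc c d), X ω * Y ω ∂P :=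
      setIntegral_map hrect (measurable_fst.mul measurable_snd).aestronglyMeasurable
        hpair.aemeasurable
    rw [hWpre, ← hh, hmap]
    exact setIntegral_prod_mul (fun x => x) (fun y => y) _ _
  have hIX : ∫ ω in {ω | X ω ∈ Icc a b ∧ Y ω ∈ Icc c d}, X ω ∂P = A * q := by
    have hh : ∫ z in Icc a b ×ˢ Icc c d, z.1 ∂(Measure.map (fun ω => (X ω, Y ω)) P)
        = ∫ ω in (fun ω => (X ω, Y ω)) ⁻¹' (Icc a b ×ˢ Icc c d), X ω ∂P :=
      setIntegral_map hrect measurable_fst.aestronglyMeasurable hpair.aemeasurable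
    rw [hWpre, ← hh, hmap]
    have hh2 : ∫ z in Icc a b ×ˢ Icc c d, z.1 ∂((Measure.map X P).prod (Measure.map Y P))
        = ∫ z in Icc a b ×ˢ Icc c d, (fun x => x) z.1 * (fun _ => (1:ℝ)) z.2
            ∂((Measure.map X P).prod (Measure.map Y P)) := by simp
    refine hh2.trans ((setIntegral_prod_mul (fun x : ℝ => x) (fun _ : ℝ => (1:ℝ))
      (Icc a b) (Icc c d)).trans ?_)
    simp [hq, hA, setIntegral_const, smul_eq_mul, Measure.real]
  have hIY : ∫ ω in {ω | X ω ∈ Icc a b ∧ Y ω ∈ Icc c d}, Y ω ∂P = p * B := by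
    have hh : ∫ z in Icc a b ×ˢ Icc c d, z.2 ∂(Measure.map (fun ω => (X ω, Y ω)) P)
        = ∫ ω in (fun ω => (X ω, Y ω)) ⁻¹' (Icc a b ×ˢ Icc c d), Y ω ∂P :=
      setIntegral_map hrect measurable_snd.aestronglyMeasurable hpair.aemeasurable
    rw [hWpre, ← hh, hmap]
    have hh2 : ∫ z in Icc a b ×ˢ Icc c d, z.2 ∂((Measure.map X P).prod (Measure.map Y P))
        = ∫ z in Icc a b ×ˢ Icc c d, (fun _ => (1:ℝ)) z.1 * (fun y => y) z.2
            ∂((Measure.map X P).prod (Measure.map Y P)) := by simp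
    refine hh2.trans ((setIntegral_prod_mul (fun _ : ℝ => (1:ℝ)) (fun y : ℝ => y)
      (Icc a b) (Icc c d)).trans ?_)
    simp [hp, hB, setIntegral_const, smul_eq_mul, Measure.real]
  have hPU' : (P {ω | X ω ∈ Icc a b ∧ Y ω ∈ Icc c d}).toReal = p * q := by
    rw [hPU, ENNReal.toReal_mul]
  have hppos : 0 < p * q := by
    rw [← hPU']
    exact ENNReal.toReal_pos (pos_iff_ne_zero.1 hpos) (measure_ne_top _ _)
  have hpnn : 0 ≤ p := by rw [hp]; exact ENNReal.toReal_nonneg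
  have hqnn : 0 ≤ q := by rw [hq]; exact ENNReal.toReal_nonneg
  have hp0 : 0 < p := by
    rcases hpnn.lt_or_eq with h | h
    · exact h
    · exfalso; rw [← h, zero_mul] at hppos; exact absurd hppos (lt_irrefl 0)
  have hq0 : 0 < q := by
    rcases hqnn.lt_or_eq with h | h
    · exact h
    · exfalso; rw [← h, mul_zero] at hppos; exact absurd hppos (lt_irrefl 0)
  unfold cexp
  rw [hIXY, hIX, hIY, hPU']
  field_simp

end Stmt5

theorem stmt_5 {Ω : Type*} [MeasurableSpace Ω] (P : Measure Ω) [IsProbabilityMeasure P]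
    (X Y : Ω → ℝ) (hX : Measurable X) (hY : Measurable Y) :
    Measure.map (fun ω => (X ω, Y ω)) P = (Measure.map X P).prod (Measure.map Y P) ↔
    ∀ a b c d : ℝ, a < b → c < d →
      0 < P {ω | X ω ∈ Icc a b ∧ Y ω ∈ Icc c d} →
      cexp P {ω | X ω ∈ Icc a b ∧ Y ω ∈ Icc c d} (fun ω => X ω * Y ω)
        = cexp P {ω | X ω ∈ Icc a b ∧ Y ω ∈ Icc c d} X
          * cexp P {ω | X ω ∈ Icc a b ∧ Y ω ∈ Icc c d} Y := by
  constructor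
  · intro hmap a b c d hab hcd hpos
    exact Stmt5.forward P hX hY hmap hab hcd hpos
  · intro H
    exact Stmt5.reverse P hX hY H
end
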